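/- arXiv:2311.17860 — 5 statements merged into one kernel-verified Lean document; each statement's English description precedes it below -/
import Mathlib

section
/- (Transitivity of inside.) For all points u, v, w, x, y: if inside(u,v,w,x) (x lies in the triangle Δuvw) and inside(u,v,x,y) (y lies in the triangle Δuvx), then inside(u,v,w,y) (y lies in the triangle Δuvw). -/
/-- Points are elements of ℝ². -/
abbrev Pt := ℝ × ℝ

/-- det((a,b),(c,d)) = a·d − b·c. -/
def pdet (p q : Pt) : ℝ := p.1 * q.2 - p.2 * q.1

/-- `left u v w`: w lies strictly to the left of the oriented line through u and v,
or on the open ray from u through v. -/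
def left (u v w : Pt) : Prop :=
  0 < pdet (v - u) (w - u) ∨ ∃ t : ℝ, 0 < t ∧ w - u = t • (v - u)

/-- `inter u v w x`: the closed segments uv and wx share a point that is not an
endpoint of both. -/
def inter (u v w x : Pt) : Prop :=
  ¬(u = w ∧ v = x) ∧ ¬(u = x ∧ v = w) ∧
  ((left u v w ∧ left v u x) ∨ (left u v x ∧ left v u w)) ∧
  ((left w x u ∧ left x w v) ∨ (left w x v ∧ left x w u))

/-- `inside u v w x`: x lies in the closed triangle Δuvw but is distinct from u, v, w. -/
def inside (u v w x : Pt) : Prop := left u v x ∧ left v w x ∧ left w u x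

/-- `deleting E F u v w x`: the edge wx prohibits that uv is in F. -/
def deleting (E F : Pt → Pt → Prop) (u v w x : Pt) : Prop :=
  E u v ∧ E w x ∧ inter u v w x ∧ E u w ∧ E v w ∧
    ((¬ E u x ∧ ¬ E v x) ∨ F w x)

/-- A finite path a = p₀, p₁, …, pₙ = b with R(pᵢ, pᵢ₊₁) for all i < n. -/
def FPath (R : Pt → Pt → Prop) (a b : Pt) : Prop :=
  ∃ (n : ℕ) (p : ℕ → Pt), p 0 = a ∧ p n = b ∧ ∀ i < n, R (p i) (p (i + 1))

/-- `R` connects `V`: any two vertices are joined by a finite `R`-path. -/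
def Connects (R : Pt → Pt → Prop) (V : Pt → Prop) : Prop :=
  ∀ a b, V a → V b → FPath R a b

lemma left_self (a c : Pt) (h : left a a c) : c = a := by
  rcases h with h | ⟨t, ht, h⟩
  · simp [pdet] at h
  · simp at h; exact sub_eq_zero.mp h

lemma not_left_refl (a b : Pt) (h : a ≠ b) : ¬ left a b a := by
  rintro (hd | ⟨t, ht, he⟩)
  · simp [pdet] at hd
  · rw [sub_self] at he
    have := (smul_eq_zero.mp he.symm).resolve_left (ne_of_gt ht)
    exact h (sub_eq_zero.mp this).symm

lemma left_iff (u v w : Pt) : left u v w ↔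
    (0 < (v.1-u.1)*(w.2-u.2) - (v.2-u.2)*(w.1-u.1) ∨
      ∃ t : ℝ, 0 < t ∧ w.1 - u.1 = t*(v.1-u.1) ∧ w.2 - u.2 = t*(v.2-u.2)) := by
  unfold left pdet
  simp [Prod.ext_iff, smul_eq_mul]

lemma left_iff' (u1 u2 v1 v2 w1 w2 : ℝ) : left (u1,u2) (v1,v2) (w1,w2) ↔
    (0 < (v1-u1)*(w2-u2) - (v2-u2)*(w1-u1) ∨
      ∃ t : ℝ, 0 < t ∧ w1 - u1 = t*(v1-u1) ∧ w2 - u2 = t*(v2-u2)) := by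
  unfold left pdet
  simp [Prod.ext_iff, smul_eq_mul]

lemma aux_nonneg {a1 a2 b1 b2 : ℝ}
    (h : 0 < a1*b2 - a2*b1 ∨ ∃ t : ℝ, 0 < t ∧ b1 = t*a1 ∧ b2 = t*a2) :
    0 ≤ a1*b2 - a2*b1 := by
  rcases h with h | ⟨t, ht, h1, h2⟩
  · linarith
  · have : a1*b2 - a2*b1 = 0 := by rw [h1, h2]; ring
    linarith

set_option maxHeartbeats 1000000 in
theorem inside_transitive
    (u v w x y : Pt)
    (hx : inside u v w x) (hy : inside u v x y) :
    inside u v w y := by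
  obtain ⟨hx1, hx2, hx3⟩ := hx
  obtain ⟨hy1, hy2, hy3⟩ := hy
  by_cases huv : u = v
  · subst huv
    have hxu : u = x := (left_self u x hx1).symm
    subst hxu
    have hyu : u = y := (left_self u y hy1).symm
    subst hyu
    exact ⟨hy1, hx2, hx3⟩
  by_cases huw : u = w
  · subst huw
    have hxu : u = x := (left_self u x hx3).symm
    subst hxu
    exact absurd hx1 (not_left_refl u v huv)
  by_cases hvw : v = w
  · subst hvw
    have hxv : v = x := (left_self v x hx2).symm
    subst hxv
    exact absurd hx3 (not_left_refl v u (Ne.symm huv))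
  -- distinctness
  have hxu : x ≠ u := fun h => not_left_refl u v huv (h ▸ hx1)
  have hxv : x ≠ v := fun h => not_left_refl v w hvw (h ▸ hx2)
  have hyu : y ≠ u := fun h => not_left_refl u v huv (h ▸ hy1)
  have hyx : y ≠ x := fun h => not_left_refl x u hxu (h ▸ hy3)
  show left u v y ∧ left v w y ∧ left w u y
  obtain ⟨u1, u2⟩ := u
  obtain ⟨v1, v2⟩ := v
  obtain ⟨w1, w2⟩ := w
  obtain ⟨x1, x2⟩ := x
  obtain ⟨y1, y2⟩ := y
  simp only [ne_eq, Prod.mk.injEq, not_and_or] at huv hxv hyu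
  rw [left_iff'] at hx1 hx2 hx3 hy1 hy2 hy3
  have hd2n : 0 ≤ (w1-v1)*(x2-v2) - (w2-v2)*(x1-v1) := aux_nonneg hx2
  have hd3n : 0 ≤ (u1-w1)*(x2-w2) - (u2-w2)*(x1-w1) := aux_nonneg hx3
  have he1n : 0 ≤ (v1-u1)*(y2-u2) - (v2-u2)*(y1-u1) := aux_nonneg hy1
  have main : (0 < (w1-v1)*(y2-v2) - (w2-v2)*(y1-v1) ∨
        ∃ t : ℝ, 0 < t ∧ y1-v1 = t*(w1-v1) ∧ y2-v2 = t*(w2-v2)) ∧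
      (0 < (u1-w1)*(y2-w2) - (u2-w2)*(y1-w1) ∨
        ∃ t : ℝ, 0 < t ∧ y1-w1 = t*(u1-w1) ∧ y2-w2 = t*(u2-w2)) := by
    rcases hx1 with hd1p | ⟨s, hs, hs1, hs2⟩
    · -- x strictly left of uv
      constructor
      · rcases hy2 with he2p | ⟨r, hr, hr1, hr2⟩
        · left
          have key : ((v1-u1)*(x2-u2) - (v2-u2)*(x1-u1)) *
              ((w1-v1)*(y2-v2) - (w2-v2)*(y1-v1)) =
              ((x1-v1)*(y2-v2) - (x2-v2)*(y1-v1)) *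
                (((v1-u1)*(x2-u2) - (v2-u2)*(x1-u1)) +
                 ((w1-v1)*(x2-v2) - (w2-v2)*(x1-v1)) +
                 ((u1-w1)*(x2-w2) - (u2-w2)*(x1-w1))) +
              ((v1-u1)*(y2-u2) - (v2-u2)*(y1-u1)) *
                ((w1-v1)*(x2-v2) - (w2-v2)*(x1-v1)) := by ring
          nlinarith [key, mul_pos he2p hd1p, mul_nonneg he2p.le hd2n,
            mul_nonneg he2p.le hd3n, mul_nonneg he1n hd2n, hd1p]
        · have hG1 : (w1-v1)*(y2-v2) - (w2-v2)*(y1-v1)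
              = r*((w1-v1)*(x2-v2) - (w2-v2)*(x1-v1)) := by
            linear_combination (w1-v1)*hr2 - (w2-v2)*hr1
          rcases hx2 with hd2p | ⟨q, hq, hq1, hq2⟩
          · left; rw [hG1]; exact mul_pos hr hd2p
          · right
            exact ⟨r*q, mul_pos hr hq, by linear_combination hr1 + r*hq1,
              by linear_combination hr2 + r*hq2⟩
      · rcases hy3 with he3p | ⟨r, hr, hr1, hr2⟩
        · left
          have key : ((v1-u1)*(x2-u2) - (v2-u2)*(x1-u1)) *
              ((u1-w1)*(y2-w2) - (u2-w2)*(y1-w1)) =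
              ((u1-x1)*(y2-x2) - (u2-x2)*(y1-x1)) *
                (((v1-u1)*(x2-u2) - (v2-u2)*(x1-u1)) +
                 ((w1-v1)*(x2-v2) - (w2-v2)*(x1-v1)) +
                 ((u1-w1)*(x2-w2) - (u2-w2)*(x1-w1))) +
              ((v1-u1)*(y2-u2) - (v2-u2)*(y1-u1)) *
                ((u1-w1)*(x2-w2) - (u2-w2)*(x1-w1)) := by ring
          nlinarith [key, mul_pos he3p hd1p, mul_nonneg he3p.le hd2n,
            mul_nonneg he3p.le hd3n, mul_nonneg he1n hd3n, hd1p]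
        · -- hr1 : y1-x1 = r*(u1-x1)
          have hE : (v1-u1)*(y2-u2) - (v2-u2)*(y1-u1)
              = (1-r)*((v1-u1)*(x2-u2) - (v2-u2)*(x1-u1)) := by
            linear_combination (v1-u1)*hr2 - (v2-u2)*hr1
          have hrle : r ≤ 1 := by nlinarith [he1n, hE, hd1p]
          have hrne : r ≠ 1 := by
            rintro rfl
            rcases hyu with h | h
            · exact h (by linarith [hr1])
            · exact h (by linarith [hr2])
          have hrlt : r < 1 := lt_of_le_of_ne hrle hrne
          have hG2 : (u1-w1)*(y2-w2) - (u2-w2)*(y1-w1)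
              = (1-r)*((u1-w1)*(x2-w2) - (u2-w2)*(x1-w1)) := by
            linear_combination (u1-w1)*hr2 - (u2-w2)*hr1
          rcases hx3 with hd3p | ⟨p, hp, hp1, hp2⟩
          · left; rw [hG2]; exact mul_pos (by linarith) hd3p
          · right
            refine ⟨r + (1-r)*p, ?_, by linear_combination hr1 + (1-r)*hp1,
              by linear_combination hr2 + (1-r)*hp2⟩
            nlinarith [mul_pos (show (0:ℝ) < 1-r by linarith) hp]
    · -- x on the ray from u through v ; hs1 : x1-u1 = s*(v1-u1)
      have hd2C : (w1-v1)*(x2-v2) - (w2-v2)*(x1-v1)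
          = (1-s)*((v1-u1)*(w2-u2) - (v2-u2)*(w1-u1)) := by
        linear_combination (w1-v1)*hs2 - (w2-v2)*hs1
      have hd3C : (u1-w1)*(x2-w2) - (u2-w2)*(x1-w1)
          = s*((v1-u1)*(w2-u2) - (v2-u2)*(w1-u1)) := by
        linear_combination (u1-w1)*hs2 - (u2-w2)*hs1
      have hC : 0 ≤ (v1-u1)*(w2-u2) - (v2-u2)*(w1-u1) := by
        have h' : 0 ≤ s*((v1-u1)*(w2-u2) - (v2-u2)*(w1-u1)) := hd3C ▸ hd3n
        exact nonneg_of_mul_nonneg_right h' hs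
      have he3n : 0 ≤ (u1-x1)*(y2-x2) - (u2-x2)*(y1-x1) := aux_nonneg hy3
      have he3E : (u1-x1)*(y2-x2) - (u2-x2)*(y1-x1)
          = -(s*((v1-u1)*(y2-u2) - (v2-u2)*(y1-u1))) := by
        linear_combination (y1-u1)*hs2 - (y2-u2)*hs1
      have hE0 : (v1-u1)*(y2-u2) - (v2-u2)*(y1-u1) = 0 := by
        have : (v1-u1)*(y2-u2) - (v2-u2)*(y1-u1) ≤ 0 := by nlinarith [he3n, he3E, hs]
        linarith
      rcases hy1 with h | ⟨m, hm, hm1, hm2⟩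
      · rw [hE0] at h; exact absurd h (lt_irrefl 0)
      rcases hy3 with h | ⟨t3, ht3, ht31, ht32⟩
      · rw [he3E, hE0] at h; norm_num at h
      rcases hy2 with h | ⟨r, hr, hr1, hr2⟩
      · have he2E : (x1-v1)*(y2-v2) - (x2-v2)*(y1-v1)
            = (s-1)*((v1-u1)*(y2-u2) - (v2-u2)*(y1-u1)) := by
          linear_combination (y2-v2)*hs1 - (y1-v1)*hs2
        rw [he2E, hE0] at h; norm_num at h
      -- hm1 : y1-u1 = m*(v1-u1), ht31 : y1-x1 = t3*(u1-x1), hr1 : y1-v1 = r*(x1-v1)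
      have h01 : (m - s + t3*s)*(v1-u1) = 0 := by
        linear_combination -hm1 + (1-t3)*hs1 + ht31
      have h02 : (m - s + t3*s)*(v2-u2) = 0 := by
        linear_combination -hm2 + (1-t3)*hs2 + ht32
      have hms0 : m - s + t3*s = 0 := by
        rcases huv with h | h
        · exact (mul_eq_zero.mp h01).resolve_right (sub_ne_zero.mpr (Ne.symm h))
        · exact (mul_eq_zero.mp h02).resolve_right (sub_ne_zero.mpr (Ne.symm h))
      have hms : m < s := by nlinarith [ht3, hs]
      rcases hC.lt_or_eq with hCpos | hC0
      · have hsne : s ≠ 1 := by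
          rintro rfl
          rcases hxv with h | h
          · exact h (by linarith [hs1])
          · exact h (by linarith [hs2])
        have hslt : s < 1 :=
          lt_of_le_of_ne (by nlinarith [hd2n, hd2C, hCpos]) hsne
        constructor
        · left
          have hG1 : (w1-v1)*(y2-v2) - (w2-v2)*(y1-v1)
              = (1-m)*((v1-u1)*(w2-u2) - (v2-u2)*(w1-u1)) := by
            linear_combination (w1-v1)*hm2 - (w2-v2)*hm1
          rw [hG1]; exact mul_pos (by linarith) hCpos
        · left
          have hG2 : (u1-w1)*(y2-w2) - (u2-w2)*(y1-w1)
              = m*((v1-u1)*(w2-u2) - (v2-u2)*(w1-u1)) := by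
            linear_combination (u1-w1)*hm2 - (u2-w2)*hm1
          rw [hG2]; exact mul_pos hm hCpos
      · rcases hx2 with h | ⟨q, hq, hq1, hq2⟩
        · rw [hd2C, ← hC0] at h; norm_num at h
        rcases hx3 with h | ⟨p, hp, hp1, hp2⟩
        · rw [hd3C, ← hC0] at h; norm_num at h
        constructor
        · right
          exact ⟨r*q, mul_pos hr hq, by linear_combination hr1 + r*hq1,
            by linear_combination hr2 + r*hq2⟩
        · right
          have hsv1 : s*(v1-u1) = (p-1)*(u1-w1) := by linear_combination hp1 - hs1
          have hsv2 : s*(v2-u2) = (p-1)*(u2-w2) := by linear_combination hp2 - hs2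
          have hnum : 0 < m*(p-1) + s := by
            rcases le_or_gt 1 p with h | h
            · nlinarith [mul_nonneg hm.le (sub_nonneg.mpr h)]
            · nlinarith [mul_nonneg (sub_pos.mpr hms).le (sub_pos.mpr h).le,
                mul_pos hs hp]
          refine ⟨(m*(p-1)+s)/s, div_pos hnum hs, ?_, ?_⟩
          · rw [div_mul_eq_mul_div, eq_div_iff (ne_of_gt hs)]
            linear_combination s*hm1 + m*hsv1
          · rw [div_mul_eq_mul_div, eq_div_iff (ne_of_gt hs)]
            linear_combination s*hm2 + m*hsv2
  exact ⟨(left_iff' _ _ _ _ _ _).mpr hy1, (left_iff' _ _ _ _ _ _).mpr main.1,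
    (left_iff' _ _ _ _ _ _).mpr main.2⟩
end

section
/- (Subtriangle property, axiom T24.) For all points u, v, w, x, y: if inside(u,v,w,x) and inside(u,v,w,y) (both x and y lie in the triangle Δuvw) and x ≠ y, then y lies in at least one of the triangles Δuvx, Δvwx, Δwux, i.e. inside(u,v,x,y) ∨ inside(v,w,x,y) ∨ inside(w,u,x,y). -/
namespace SubTri

def Dt (a b c : Pt) : ℝ := pdet (b - a) (c - a)

lemma Dt_def (a b c : Pt) :
    Dt a b c = (b.1-a.1)*(c.2-a.2) - (b.2-a.2)*(c.1-a.1) := by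
  simp [Dt, pdet]

lemma left_of_pos {a b c : Pt} (h : 0 < Dt a b c) : left a b c := Or.inl h

lemma left_of_ray {a b c : Pt} (t : ℝ) (ht : 0 < t) (h : c - a = t • (b - a)) : left a b c :=
  Or.inr ⟨t, ht, h⟩

lemma comp1 {p q : Pt} {t : ℝ} (h : p = t • q) : p.1 = t * q.1 := by
  rw [h]; simp

lemma comp2 {p q : Pt} {t : ℝ} (h : p = t • q) : p.2 = t * q.2 := by
  rw [h]; simp

lemma left_nonneg {a b c : Pt} (h : left a b c) : 0 ≤ Dt a b c := by
  rcases h with h | ⟨t, ht, he⟩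
  · exact le_of_lt h
  · have h1 := comp1 he
    have h2 := comp2 he
    simp only [Prod.fst_sub, Prod.snd_sub] at h1 h2
    have e : Dt a b c = 0 := by
      rw [Dt_def]; linear_combination (b.1-a.1)*h2 - (b.2-a.2)*h1
    exact e.ge

lemma exists_smul {p q : Pt} (hp : p ≠ 0) (h : pdet p q = 0) : ∃ s : ℝ, q = s • p := by
  have h' : p.1 * q.2 - p.2 * q.1 = 0 := h
  by_cases h1 : p.1 = 0
  · have h2 : p.2 ≠ 0 := by
      intro h2; exact hp (Prod.ext h1 h2)
    refine ⟨q.2 / p.2, Prod.ext ?_ ?_⟩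
    · simp only [Prod.smul_fst, smul_eq_mul]
      rw [h1]
      have hq1 : p.2 * q.1 = 0 := by rw [h1] at h'; linarith
      have : q.1 = 0 := by
        rcases mul_eq_zero.mp hq1 with h'' | h''
        · exact absurd h'' h2
        · exact h''
      simp [this]
    · simp only [Prod.smul_snd, smul_eq_mul]
      field_simp
  · refine ⟨q.1 / p.1, Prod.ext ?_ ?_⟩
    · simp only [Prod.smul_fst, smul_eq_mul]; field_simp
    · simp only [Prod.smul_snd, smul_eq_mul]
      field_simp
      nlinarith [h']

lemma smul_cancel {d : Pt} (hd : d ≠ 0) {a b : ℝ} (h : a • d = b • d) : a = b := by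
  have h1 : a * d.1 = b * d.1 := by
    have := congrArg Prod.fst h; simpa using this
  have h2 : a * d.2 = b * d.2 := by
    have := congrArg Prod.snd h; simpa using this
  by_cases hc : d.1 = 0
  · have : d.2 ≠ 0 := fun hc2 => hd (Prod.ext hc hc2)
    exact mul_right_cancel₀ this h2
  · exact mul_right_cancel₀ hc h1

lemma sum_Dt (u v w x : Pt) : Dt u v x + Dt v w x + Dt w u x = Dt u v w := by
  simp only [Dt_def]; ring

lemma Q_id (u v w x y : Pt) :
    Dt v w x * Dt x u y + Dt w u x * Dt x v y + Dt u v x * Dt x w y = 0 := by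
  simp only [Dt_def]; ring

lemma I_v (u v w x y : Pt) :
    Dt u v w * Dt x v y = Dt v w x * Dt u v y - Dt v w y * Dt u v x := by
  simp only [Dt_def]; ring

lemma bary1 (u v w x : Pt) :
    Dt v w x * u.1 + Dt w u x * v.1 + Dt u v x * w.1 = Dt u v w * x.1 := by
  simp only [Dt_def]; ring

lemma bary2 (u v w x : Pt) :
    Dt v w x * u.2 + Dt w u x * v.2 + Dt u v x * w.2 = Dt u v w * x.2 := by
  simp only [Dt_def]; ring

lemma Dt_cyc (a b c : Pt) : Dt a b c = Dt b c a := by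
  simp only [Dt_def]; ring

lemma Dt_swap (a b c : Pt) : Dt a b c = -Dt b a c := by
  simp only [Dt_def]; ring

lemma left_self {a b : Pt} (h : left a b a) : b = a := by
  rcases h with h | ⟨t, ht, he⟩
  · exfalso
    have : pdet (b - a) (a - a) = 0 := by simp [pdet]
    linarith [h, this.le]
  · have h0 : (0 : Pt) = t • (b - a) := by simpa using he
    have : b - a = 0 := by
      rcases smul_eq_zero.mp h0.symm with h' | h'
      · exact absurd h' (ne_of_gt ht)
      · exact h'
    exact sub_eq_zero.mp this

lemma left_ray_of_Dt_zero {a b c : Pt} (h : left a b c) (h0 : Dt a b c = 0) :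
    ∃ t : ℝ, 0 < t ∧ c - a = t • (b - a) := by
  rcases h with h | h
  · exact absurd h0 (ne_of_gt h)
  · exact h


lemma ray_at (u v w x y : Pt) (hD : 0 < Dt u v w)
    (hx1 : 0 ≤ Dt v w x) (hx2 : 0 ≤ Dt u v x) (hx3 : 0 ≤ Dt w u x)
    (hy1 : 0 ≤ Dt v w y) (hy2 : 0 ≤ Dt u v y)
    (hxv : x ≠ v) (hyv : y ≠ v)
    (hcol : Dt x v y = 0) :
    ∃ t : ℝ, 0 < t ∧ y - v = t • (x - v) := by
  have hvx : v - x ≠ 0 := sub_ne_zero.mpr (Ne.symm hxv)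
  obtain ⟨s, hs⟩ := exists_smul hvx (hcol : pdet (v - x) (y - x) = 0)
  have hs1 := comp1 hs
  have hs2 := comp2 hs
  simp only [Prod.fst_sub, Prod.snd_sub] at hs1 hs2
  refine ⟨1 - s, ?_, ?_⟩
  swap
  · apply Prod.ext
    · simp only [Prod.fst_sub, Prod.smul_fst, smul_eq_mul]
      linarith [hs1]
    · simp only [Prod.snd_sub, Prod.smul_snd, smul_eq_mul]
      linarith [hs2]
  · -- show 0 < 1 - s
    have c1 : y.1 - v.1 = (1 - s) * (x.1 - v.1) := by linarith [hs1]
    have c2 : y.2 - v.2 = (1 - s) * (x.2 - v.2) := by linarith [hs2]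
    rcases lt_trichotomy (1 - s) 0 with ht | ht | ht
    · exfalso
      have e1 : Dt v w y = (1 - s) * Dt v w x := by
        simp only [Dt_def]
        linear_combination (w.1 - v.1) * c2 - (w.2 - v.2) * c1
      have e2 : Dt u v y = (1 - s) * Dt u v x := by
        simp only [Dt_def]
        linear_combination (v.1 - u.1) * c2 - (v.2 - u.2) * c1
      have z1 : Dt v w x = 0 := by nlinarith
      have z2 : Dt u v x = 0 := by nlinarith
      have z3 : Dt w u x = Dt u v w := by
        have := sum_Dt u v w x; linarith
      have b1 := bary1 u v w x
      have b2 := bary2 u v w x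
      rw [z1, z2, z3] at b1 b2
      have hx1' : v.1 = x.1 := mul_left_cancel₀ (ne_of_gt hD) (by linarith)
      have hx2' : v.2 = x.2 := mul_left_cancel₀ (ne_of_gt hD) (by linarith)
      exact hxv (Prod.ext hx1'.symm hx2'.symm)
    · exfalso
      apply hyv
      have e1 : y.1 = v.1 := by rw [ht, zero_mul] at c1; linarith
      have e2 : y.2 = v.2 := by rw [ht, zero_mul] at c2; linarith
      exact Prod.ext e1 e2
    · exact ht

lemma pdet_swap (p q : Pt) : pdet p q = -pdet q p := by simp [pdet]; ring

lemma smul_vec_cancel {c : ℝ} (hc : c ≠ 0) {p q : Pt} (h : c • p = c • q) : p = q := by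
  have h1 : c * p.1 = c * q.1 := by have := congrArg Prod.fst h; simpa using this
  have h2 : c * p.2 = c * q.2 := by have := congrArg Prod.snd h; simpa using this
  exact Prod.ext (mul_left_cancel₀ hc h1) (mul_left_cancel₀ hc h2)

lemma ray_a {Dd cx cy : ℝ} {base dir x y : Pt} (hD : Dd ≠ 0) (hcx : cx ≠ 0)
    (hx : Dd • (x - base) = cx • dir) (hy : Dd • (y - base) = cy • dir) :
    y - base = (cy / cx) • (x - base) := by
  apply smul_vec_cancel hD
  rw [hy, smul_comm Dd (cy/cx), hx, smul_smul, div_mul_cancel₀ _ hcx]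

lemma ray_b {Dd cx cy : ℝ} {base dir x y : Pt} (hD : Dd ≠ 0) (hcx : cx ≠ 0)
    (hx : Dd • (x - base) = cx • dir) (hy : Dd • (y - base) = cy • dir) :
    y - x = ((cx - cy) / cx) • (base - x) := by
  apply smul_vec_cancel hD
  have h1 : Dd • (y - x) = (cy - cx) • dir := by
    have e : y - x = (y - base) - (x - base) := by abel
    rw [e, smul_sub, hx, hy, ← sub_smul]
  have h2 : Dd • (base - x) = (-cx) • dir := by
    have e : base - x = -(x - base) := by abel
    rw [e, smul_neg, hx, ← neg_smul]
  rw [h1, smul_comm, h2, smul_smul]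
  congr 1
  field_simp
  ring

lemma edge_col {a b x y : Pt} (hxy : x ≠ y) (ha : Dt x a y = 0) (hb : Dt x b y = 0) :
    Dt a b x = 0 ∧ Dt a b y = 0 := by
  have hd : y - x ≠ 0 := sub_ne_zero.mpr (Ne.symm hxy)
  have ha' : pdet (y - x) (a - x) = 0 := by
    have h0 : pdet (a - x) (y - x) = 0 := ha
    rw [pdet_swap] at h0; linarith
  have hb' : pdet (y - x) (b - x) = 0 := by
    have h0 : pdet (b - x) (y - x) = 0 := hb
    rw [pdet_swap] at h0; linarith
  obtain ⟨p, hp⟩ := exists_smul hd ha'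
  obtain ⟨q, hq⟩ := exists_smul hd hb'
  have hp1 := comp1 hp; have hp2 := comp2 hp
  have hq1 := comp1 hq; have hq2 := comp2 hq
  simp only [Prod.fst_sub, Prod.snd_sub] at hp1 hp2 hq1 hq2
  have ea1 : a.1 = x.1 + p * (y.1 - x.1) := by linarith
  have ea2 : a.2 = x.2 + p * (y.2 - x.2) := by linarith
  have eb1 : b.1 = x.1 + q * (y.1 - x.1) := by linarith
  have eb2 : b.2 = x.2 + q * (y.2 - x.2) := by linarith
  constructor
  · rw [Dt_def, ea1, ea2, eb1, eb2]; ring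
  · rw [Dt_def, ea1, ea2, eb1, eb2]; ring

lemma eq_vertex_u {u v w x : Pt} (hD : 0 < Dt u v w)
    (h1 : Dt u v x = 0) (h2 : Dt w u x = 0) : x = u := by
  have s := sum_Dt u v w x
  have b1 := bary1 u v w x
  have b2 := bary2 u v w x
  rw [h1, h2] at b1 b2
  have hα : Dt v w x = Dt u v w := by linarith
  rw [hα] at b1 b2
  have e1 : u.1 = x.1 := mul_left_cancel₀ (ne_of_gt hD) (by linarith)
  have e2 : u.2 = x.2 := mul_left_cancel₀ (ne_of_gt hD) (by linarith)
  exact Prod.ext e1.symm e2.symm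

lemma not_all_pos {u v w x y : Pt} (hD : 0 < Dt u v w)
    (gx1 : 0 ≤ Dt u v x) (gx2 : 0 ≤ Dt v w x) (gx3 : 0 ≤ Dt w u x)
    (h1 : 0 < Dt x u y) (h2 : 0 < Dt x v y) (h3 : 0 < Dt x w y) : False := by
  have q := Q_id u v w x y
  have s := sum_Dt u v w x
  have hc : 0 < Dt v w x ∨ 0 < Dt w u x ∨ 0 < Dt u v x := by
    by_contra hcon; push_neg at hcon; obtain ⟨a1, a2, a3⟩ := hcon; linarith
  rcases hc with hc | hc | hc
  · nlinarith [mul_pos hc h1, mul_nonneg gx3 h2.le, mul_nonneg gx1 h3.le]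
  · nlinarith [mul_nonneg gx2 h1.le, mul_pos hc h2, mul_nonneg gx1 h3.le]
  · nlinarith [mul_nonneg gx2 h1.le, mul_nonneg gx3 h2.le, mul_pos hc h3]

lemma not_all_neg {u v w x y : Pt} (hD : 0 < Dt u v w)
    (gx1 : 0 ≤ Dt u v x) (gx2 : 0 ≤ Dt v w x) (gx3 : 0 ≤ Dt w u x)
    (h1 : Dt x u y < 0) (h2 : Dt x v y < 0) (h3 : Dt x w y < 0) : False := by
  have q := Q_id u v w x y
  have s := sum_Dt u v w x
  have hc : 0 < Dt v w x ∨ 0 < Dt w u x ∨ 0 < Dt u v x := by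
    by_contra hcon; push_neg at hcon; obtain ⟨a1, a2, a3⟩ := hcon; linarith
  rcases hc with hc | hc | hc
  · nlinarith [mul_neg_of_pos_of_neg hc h1,
      mul_nonneg gx3 (neg_nonneg.mpr h2.le), mul_nonneg gx1 (neg_nonneg.mpr h3.le)]
  · nlinarith [mul_nonneg gx2 (neg_nonneg.mpr h1.le), mul_neg_of_pos_of_neg hc h2,
      mul_nonneg gx1 (neg_nonneg.mpr h3.le)]
  · nlinarith [mul_nonneg gx2 (neg_nonneg.mpr h1.le), mul_nonneg gx3 (neg_nonneg.mpr h2.le),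
      mul_neg_of_pos_of_neg hc h3]

lemma core (u v w x y : Pt)
    (hD : 0 < Dt u v w)
    (hx : inside u v w x) (hy : inside u v w y) (hxy : x ≠ y)
    (hsu : 0 ≤ Dt x u y) (hsv : Dt x v y ≤ 0) :
    inside u v x y ∨ inside v w x y ∨ inside w u x y := by
  obtain ⟨hxuv, hxvw, hxwu⟩ := hx
  obtain ⟨hyuv, hyvw, hywu⟩ := hy
  have gx1 : 0 ≤ Dt u v x := left_nonneg hxuv
  have gx2 : 0 ≤ Dt v w x := left_nonneg hxvw
  have gx3 : 0 ≤ Dt w u x := left_nonneg hxwu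
  have gy1 : 0 ≤ Dt u v y := left_nonneg hyuv
  have gy2 : 0 ≤ Dt v w y := left_nonneg hyvw
  have gy3 : 0 ≤ Dt w u y := left_nonneg hywu
  have huv : u ≠ v := by
    intro h; rw [h] at hD
    have h0 : Dt v v w = 0 := by rw [Dt_def]; ring
    linarith
  have hvw : v ≠ w := by
    intro h; rw [h] at hD
    have h0 : Dt u w w = 0 := by rw [Dt_def]; ring
    linarith
  have hwu : w ≠ u := by
    intro h; rw [h] at hD
    have h0 : Dt u v u = 0 := by rw [Dt_def]; ring
    linarith
  have hxu : x ≠ u := fun h => huv (left_self (h ▸ hxuv)).symm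
  have hxv : x ≠ v := fun h => hvw (left_self (h ▸ hxvw)).symm
  have hxw : x ≠ w := fun h => hwu (left_self (h ▸ hxwu)).symm
  have hyu : y ≠ u := fun h => huv (left_self (h ▸ hyuv)).symm
  have hyv : y ≠ v := fun h => hvw (left_self (h ▸ hyvw)).symm
  have hyw : y ≠ w := fun h => hwu (left_self (h ▸ hywu)).symm
  rcases lt_or_eq_of_le hsv with hv | hv
  · rcases lt_or_eq_of_le hsu with hu | hu
    · -- A : strict/strict, disjunct 1
      left
      refine ⟨hyuv, left_of_pos ?_, left_of_pos hu⟩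
      have hsw := Dt_swap v x y
      linarith
    · -- hu : 0 = Dt x u y
      rcases lt_trichotomy (Dt x w y) 0 with hw | hw | hw
      · -- all nonpos : x = u, contradiction
        exfalso
        have q := Q_id u v w x y
        rw [← hu, mul_zero, zero_add] at q
        have h1 : Dt w u x * Dt x v y ≤ 0 := mul_nonpos_iff.mpr (Or.inl ⟨gx3, hv.le⟩)
        have h2 : Dt u v x * Dt x w y ≤ 0 := mul_nonpos_iff.mpr (Or.inl ⟨gx1, hw.le⟩)
        have e1 : Dt w u x * Dt x v y = 0 := by linarith
        have e2 : Dt u v x * Dt x w y = 0 := by linarith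
        have hb : Dt w u x = 0 := by
          rcases mul_eq_zero.mp e1 with h | h
          · exact h
          · exact absurd h (ne_of_lt hv)
        have hg : Dt u v x = 0 := by
          rcases mul_eq_zero.mp e2 with h | h
          · exact h
          · exact absurd h (ne_of_lt hw)
        exact hxu (eq_vertex_u hD hg hb)
      · -- E : s_u = 0, s_w = 0, edge wu
        obtain ⟨ex, ey⟩ := edge_col hxy hu.symm hw
        have bx : Dt w u x = 0 := by rw [Dt_swap w u x, ex, neg_zero]
        have by' : Dt w u y = 0 := by rw [Dt_swap w u y, ey, neg_zero]
        have sx := sum_Dt u v w x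
        have sy := sum_Dt u v w y
        have iv := I_v u v w x y
        have hax : Dt v w x = Dt u v w - Dt u v x := by linarith
        have hay : Dt v w y = Dt u v w - Dt u v y := by linarith
        rw [hax, hay] at iv
        have iv' : Dt u v w * Dt x v y = Dt u v w * (Dt u v y - Dt u v x) := by
          linear_combination iv
        have hDsv : Dt u v w * Dt x v y < 0 := mul_neg_of_pos_of_neg hD hv
        have key : Dt u v y < Dt u v x := by
          by_contra hcon
          push_neg at hcon
          nlinarith [mul_nonneg hD.le (sub_nonneg.mpr hcon)]
        have gxpos : 0 < Dt u v x := by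
          rcases lt_or_eq_of_le gx1 with h | h
          · exact h
          · exact absurd (eq_vertex_u hD h.symm bx) hxu
        have hxvec : Dt u v w • (x - u) = Dt u v x • (w - u) := by
          apply Prod.ext
          · simp only [Prod.smul_fst, Prod.fst_sub, smul_eq_mul]
            linear_combination (-1 : ℝ) * bary1 u v w x + u.1 * sum_Dt u v w x + (v.1 - u.1) * bx
          · simp only [Prod.smul_snd, Prod.snd_sub, smul_eq_mul]
            linear_combination (-1 : ℝ) * bary2 u v w x + u.2 * sum_Dt u v w x + (v.2 - u.2) * bx
        have hyvec : Dt u v w • (y - u) = Dt u v y • (w - u) := by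
          apply Prod.ext
          · simp only [Prod.smul_fst, Prod.fst_sub, smul_eq_mul]
            linear_combination (-1 : ℝ) * bary1 u v w y + u.1 * sum_Dt u v w y + (v.1 - u.1) * by'
          · simp only [Prod.smul_snd, Prod.snd_sub, smul_eq_mul]
            linear_combination (-1 : ℝ) * bary2 u v w y + u.2 * sum_Dt u v w y + (v.2 - u.2) * by'
        left
        refine ⟨hyuv, left_of_pos ?_, left_of_ray ((Dt u v x - Dt u v y) / Dt u v x)
          (div_pos (by linarith) gxpos) ?_⟩
        · have hsw2 := Dt_swap v x y
          linarith
        · exact ray_b (ne_of_gt hD) (ne_of_gt gxpos) hxvec hyvec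
      · -- C : s_w > 0, disjunct 3
        right; right
        have hD' : 0 < Dt w u v := by rw [Dt_cyc w u v]; exact hD
        obtain ⟨t, ht, he⟩ := ray_at w u v x y hD' gx1 gx3 gx2 gy1 gy3 hxu hyu hu.symm
        exact ⟨hywu, left_of_ray t ht he, left_of_pos hw⟩
  · -- hv : Dt x v y = 0
    rcases lt_or_eq_of_le hsu with hu | hu
    · -- B : disjunct 1 with ray at v
      left
      obtain ⟨t, ht, he⟩ := ray_at u v w x y hD gx2 gx1 gx3 gy2 gy1 hxv hyv hv
      exact ⟨hyuv, left_of_ray t ht he, left_of_pos hu⟩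
    · -- F : s_u = 0, s_v = 0, edge uv
      obtain ⟨ex, ey⟩ := edge_col hxy hu.symm hv
      have sx := sum_Dt u v w x
      have sy := sum_Dt u v w y
      rcases lt_trichotomy (Dt w u y) (Dt w u x) with hb | hb | hb
      · -- F1 : disjunct 3
        right; right
        have bxpos : 0 < Dt w u x := by
          rcases lt_or_eq_of_le gx3 with h | h
          · exact h
          · exact absurd (eq_vertex_u hD ex h.symm) hxu
        have bypos : 0 < Dt w u y := by
          rcases lt_or_eq_of_le gy3 with h | h
          · exact h
          · exact absurd (eq_vertex_u hD ey h.symm) hyu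
        have iw := I_v v w u x y
        have cyc1 : Dt v w u = Dt u v w := (Dt_cyc u v w).symm
        rw [cyc1] at iw
        have hax : Dt v w x = Dt u v w - Dt w u x := by linarith
        have hay : Dt v w y = Dt u v w - Dt w u y := by linarith
        rw [hax, hay] at iw
        have iw' : Dt u v w * Dt x w y = Dt u v w * (Dt w u x - Dt w u y) := by
          linear_combination iw
        have hsw : 0 < Dt x w y := by
          nlinarith [mul_pos hD (sub_pos.mpr hb)]
        have hxvec : Dt u v w • (x - u) = Dt w u x • (v - u) := by
          apply Prod.ext
          · simp only [Prod.smul_fst, Prod.fst_sub, smul_eq_mul]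
            linear_combination (-1 : ℝ) * bary1 u v w x + u.1 * sum_Dt u v w x + (w.1 - u.1) * ex
          · simp only [Prod.smul_snd, Prod.snd_sub, smul_eq_mul]
            linear_combination (-1 : ℝ) * bary2 u v w x + u.2 * sum_Dt u v w x + (w.2 - u.2) * ex
        have hyvec : Dt u v w • (y - u) = Dt w u y • (v - u) := by
          apply Prod.ext
          · simp only [Prod.smul_fst, Prod.fst_sub, smul_eq_mul]
            linear_combination (-1 : ℝ) * bary1 u v w y + u.1 * sum_Dt u v w y + (w.1 - u.1) * ey
          · simp only [Prod.smul_snd, Prod.snd_sub, smul_eq_mul]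
            linear_combination (-1 : ℝ) * bary2 u v w y + u.2 * sum_Dt u v w y + (w.2 - u.2) * ey
        refine ⟨hywu, left_of_ray (Dt w u y / Dt w u x) (div_pos bypos bxpos) ?_,
          left_of_pos hsw⟩
        exact ray_a (ne_of_gt hD) (ne_of_gt bxpos) hxvec hyvec
      · -- F3 : x = y, contradiction
        exfalso
        have hα : Dt v w x = Dt v w y := by linarith
        have b1x := bary1 u v w x; have b1y := bary1 u v w y
        have b2x := bary2 u v w x; have b2y := bary2 u v w y
        rw [ex] at b1x b2x
        rw [ey, ← hα, hb] at b1y b2y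
        have e1 : x.1 = y.1 := mul_left_cancel₀ (ne_of_gt hD) (by linarith)
        have e2 : x.2 = y.2 := mul_left_cancel₀ (ne_of_gt hD) (by linarith)
        exact hxy (Prod.ext e1 e2)
      · -- F2 : disjunct 2
        right; left
        have axpos : 0 < Dt v w x := by
          rcases lt_or_eq_of_le gx2 with h | h
          · exact h
          · exfalso
            have hD' : 0 < Dt v w u := by rw [← Dt_cyc u v w]; exact hD
            exact hxv (eq_vertex_u hD' h.symm ex)
        have iw := I_v v w u x y
        have cyc1 : Dt v w u = Dt u v w := (Dt_cyc u v w).symm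
        rw [cyc1] at iw
        have hax : Dt v w x = Dt u v w - Dt w u x := by linarith
        have hay : Dt v w y = Dt u v w - Dt w u y := by linarith
        rw [hax, hay] at iw
        have iw' : Dt u v w * Dt x w y = Dt u v w * (Dt w u x - Dt w u y) := by
          linear_combination iw
        have hsw : Dt x w y < 0 := by
          nlinarith [mul_pos hD (sub_pos.mpr hb)]
        have hrel : 0 < Dt v w x - Dt v w y := by linarith [hax, hay]
        have hxvec : Dt u v w • (x - v) = Dt v w x • (u - v) := by
          apply Prod.ext
          · simp only [Prod.smul_fst, Prod.fst_sub, smul_eq_mul]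
            linear_combination (-1 : ℝ) * bary1 u v w x + v.1 * sum_Dt u v w x + (w.1 - v.1) * ex
          · simp only [Prod.smul_snd, Prod.snd_sub, smul_eq_mul]
            linear_combination (-1 : ℝ) * bary2 u v w x + v.2 * sum_Dt u v w x + (w.2 - v.2) * ex
        have hyvec : Dt u v w • (y - v) = Dt v w y • (u - v) := by
          apply Prod.ext
          · simp only [Prod.smul_fst, Prod.fst_sub, smul_eq_mul]
            linear_combination (-1 : ℝ) * bary1 u v w y + v.1 * sum_Dt u v w y + (w.1 - v.1) * ey
          · simp only [Prod.smul_snd, Prod.snd_sub, smul_eq_mul]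
            linear_combination (-1 : ℝ) * bary2 u v w y + v.2 * sum_Dt u v w y + (w.2 - v.2) * ey
        refine ⟨hyvw, left_of_pos ?_, left_of_ray ((Dt v w x - Dt v w y) / Dt v w x)
          (div_pos hrel axpos) ?_⟩
        · have hsw2 := Dt_swap w x y
          linarith
        · exact ray_b (ne_of_gt hD) (ne_of_gt axpos) hxvec hyvec

lemma collinear_case (u v w x y : Pt) (hD0 : Dt u v w = 0)
    (hx : inside u v w x) (hy : inside u v w y) (hxy : x ≠ y) :
    inside u v x y ∨ inside v w x y ∨ inside w u x y := by
  obtain ⟨hxuv, hxvw, hxwu⟩ := hx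
  obtain ⟨hyuv, hyvw, hywu⟩ := hy
  have s1 := sum_Dt u v w x
  have s2 := sum_Dt u v w y
  have n1 := left_nonneg hxuv; have n2 := left_nonneg hxvw; have n3 := left_nonneg hxwu
  have m1 := left_nonneg hyuv; have m2 := left_nonneg hyvw; have m3 := left_nonneg hywu
  obtain ⟨t1, ht1, hx1⟩ := left_ray_of_Dt_zero hxuv (by linarith)
  obtain ⟨t2, ht2, hx2⟩ := left_ray_of_Dt_zero hxvw (by linarith)
  obtain ⟨t3, ht3, hx3⟩ := left_ray_of_Dt_zero hxwu (by linarith)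
  obtain ⟨r1, hr1, hy1⟩ := left_ray_of_Dt_zero hyuv (by linarith)
  obtain ⟨r2, hr2, hy2⟩ := left_ray_of_Dt_zero hyvw (by linarith)
  obtain ⟨r3, hr3, hy3⟩ := left_ray_of_Dt_zero hywu (by linarith)
  by_cases hd : v - u = 0
  · exfalso
    rw [hd, smul_zero] at hx1 hy1
    exact hxy (by
      have e1 : x = u := by rwa [sub_eq_zero] at hx1
      have e2 : y = u := by rwa [sub_eq_zero] at hy1
      rw [e1, e2])
  · obtain ⟨c, hc⟩ := exists_smul hd (hD0 : pdet (v - u) (w - u) = 0)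
    have hwv : w - v = (c - 1) • (v - u) := by
      have e : w - v = (w - u) - (v - u) := by abel
      rw [e, hc, sub_smul, one_smul]
    have huw : u - w = (-c) • (v - u) := by
      have e : u - w = -(w - u) := by abel
      rw [e, hc, neg_smul]
    have hxv' : x - v = (t1 - 1) • (v - u) := by
      have e : x - v = (x - u) - (v - u) := by abel
      rw [e, hx1, sub_smul, one_smul]
    have hxw' : x - w = (t1 - c) • (v - u) := by
      have e : x - w = (x - u) - (w - u) := by abel
      rw [e, hx1, hc, ← sub_smul]
    have hyv' : y - v = (r1 - 1) • (v - u) := by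
      have e : y - v = (y - u) - (v - u) := by abel
      rw [e, hy1, sub_smul, one_smul]
    have hyw' : y - w = (r1 - c) • (v - u) := by
      have e : y - w = (y - u) - (w - u) := by abel
      rw [e, hy1, hc, ← sub_smul]
    have hyx' : y - x = (r1 - t1) • (v - u) := by
      have e : y - x = (y - u) - (x - u) := by abel
      rw [e, hy1, hx1, ← sub_smul]
    have hux' : u - x = (-t1) • (v - u) := by
      have e : u - x = -(x - u) := by abel
      rw [e, hx1, neg_smul]
    have hvx' : v - x = (1 - t1) • (v - u) := by
      have e : v - x = (v - u) - (x - u) := by abel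
      rw [e, hx1]
      nth_rewrite 1 [show v - u = (1:ℝ) • (v - u) by rw [one_smul]]
      rw [← sub_smul]
    have hwx' : w - x = (c - t1) • (v - u) := by
      have e : w - x = (w - u) - (x - u) := by abel
      rw [e, hc, hx1, ← sub_smul]
    have sc2 : t1 - 1 = t2 * (c - 1) := by
      apply smul_cancel hd
      rw [← hxv', hx2, hwv, smul_smul]
    have sc3 : t1 - c = t3 * (-c) := by
      apply smul_cancel hd
      rw [← hxw', hx3, huw, smul_smul]
    have sr2 : r1 - 1 = r2 * (c - 1) := by
      apply smul_cancel hd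
      rw [← hyv', hy2, hwv, smul_smul]
    have sr3 : r1 - c = r3 * (-c) := by
      apply smul_cancel hd
      rw [← hyw', hy3, huw, smul_smul]
    have hc0 : c ≠ 0 := by
      intro h
      rw [h] at sc3
      simp at sc3
      linarith
    have hXY : t1 ≠ r1 := by
      intro h
      apply hxy
      have e : x - u = y - u := by rw [hx1, hy1, h]
      exact sub_left_inj.mp e
    rcases lt_or_gt_of_ne hXY with hlt | hgt
    · -- t1 < r1 : y further along
      rcases lt_or_gt_of_ne hc0 with hcneg | hcpos
      · -- c < 0 : disjunct 2
        right; left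
        have h1x : 0 < 1 - t1 := by nlinarith
        refine ⟨hyvw, left_of_ray (r3 / t3) (div_pos hr3 ht3) ?_,
          left_of_ray ((r1 - t1) / (1 - t1)) (div_pos (by linarith) h1x) ?_⟩
        · rw [hyw', hxw', smul_smul]
          refine congrArg (fun s => s • (v - u)) ?_
          field_simp
          linear_combination t3 * sr3 - r3 * sc3
        · rw [hyx', hvx', smul_smul]
          refine congrArg (fun s => s • (v - u)) ?_
          field_simp
      · -- c > 0 : disjunct 3
        right; right
        have hcx : 0 < c - t1 := by nlinarith
        refine ⟨hywu, left_of_ray (r1 / t1) (div_pos hr1 ht1) ?_,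
          left_of_ray ((r1 - t1) / (c - t1)) (div_pos (by linarith) hcx) ?_⟩
        · rw [hy1, hx1, smul_smul]
          refine congrArg (fun s => s • (v - u)) ?_
          field_simp
        · rw [hyx', hwx', smul_smul]
          refine congrArg (fun s => s • (v - u)) ?_
          field_simp
    · -- r1 < t1 : disjunct 1
      left
      refine ⟨hyuv, left_of_ray (r2 / t2) (div_pos hr2 ht2) ?_,
        left_of_ray ((t1 - r1) / t1) (div_pos (by linarith) ht1) ?_⟩
      · rw [hyv', hxv', smul_smul]
        refine congrArg (fun s => s • (v - u)) ?_
        field_simp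
        linear_combination t2 * sr2 - r2 * sc2
      · rw [hyx', hux', smul_smul]
        refine congrArg (fun s => s • (v - u)) ?_
        field_simp
        ring

end SubTri

theorem inside_subtriangle
    (u v w x y : Pt)
    (hx : inside u v w x) (hy : inside u v w y) (hxy : x ≠ y) :
    inside u v x y ∨ inside v w x y ∨ inside w u x y := by
  have gx1 : 0 ≤ SubTri.Dt u v x := SubTri.left_nonneg hx.1
  have gx2 : 0 ≤ SubTri.Dt v w x := SubTri.left_nonneg hx.2.1
  have gx3 : 0 ≤ SubTri.Dt w u x := SubTri.left_nonneg hx.2.2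
  rcases lt_trichotomy (SubTri.Dt u v w) 0 with hD | hD | hD
  · exfalso
    have hs := SubTri.sum_Dt u v w x
    linarith
  · exact SubTri.collinear_case u v w x y hD hx hy hxy
  · have hD1 : 0 < SubTri.Dt v w u := by rw [← SubTri.Dt_cyc u v w]; exact hD
    have hD2 : 0 < SubTri.Dt w u v := by rw [SubTri.Dt_cyc w u v]; exact hD
    have rot0 := SubTri.core u v w x y hD hx hy hxy
    have rot1 := SubTri.core v w u x y hD1 ⟨hx.2.1, hx.2.2, hx.1⟩ ⟨hy.2.1, hy.2.2, hy.1⟩ hxy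
    have rot2 := SubTri.core w u v x y hD2 ⟨hx.2.2, hx.1, hx.2.1⟩ ⟨hy.2.2, hy.1, hy.2.1⟩ hxy
    have perm1 : ∀ {A B C : Prop}, (B ∨ C ∨ A) → (A ∨ B ∨ C) := fun h =>
      h.elim (fun b => Or.inr (Or.inl b))
        (fun h' => h'.elim (fun c => Or.inr (Or.inr c)) Or.inl)
    have perm2 : ∀ {A B C : Prop}, (C ∨ A ∨ B) → (A ∨ B ∨ C) := fun h =>
      h.elim (fun c => Or.inr (Or.inr c))
        (fun h' => h'.elim Or.inl (fun b => Or.inr (Or.inl b)))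
    rcases le_or_gt (SubTri.Dt x v y) 0 with h1 | h1
    · rcases le_or_gt 0 (SubTri.Dt x u y) with h2 | h2
      · exact rot0 h2 h1
      · rcases le_or_gt 0 (SubTri.Dt x w y) with h3 | h3
        · exact perm2 (rot2 h3 h2.le)
        · rcases lt_or_eq_of_le h1 with h4 | h4
          · exact (SubTri.not_all_neg hD gx1 gx2 gx3 h2 h4 h3).elim
          · exact perm1 (rot1 h4.ge h3.le)
    · rcases le_or_gt (SubTri.Dt x w y) 0 with h3 | h3
      · exact perm1 (rot1 h1.le h3)
      · rcases le_or_gt (SubTri.Dt x u y) 0 with h2 | h2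
        · exact perm2 (rot2 h3.le h2)
        · exact (SubTri.not_all_pos hD gx1 gx2 gx3 h2 h1 h3).elim
end

section
/- (Clique property inside a triangle.) Let V, E be a geometric graph satisfying E1–E3 and the coexistence property C1. For all points u, v, w, x, y: if E(u,v), E(v,w), E(w,u) (so u, v, w form a triangle of edges), V(x), V(y), x ≠ y, inside(u,v,w,x) and inside(u,v,w,y), then E(x,y); i.e. the vertices located in the interior of a triangle of edges form a clique. -/
lemma left_nonneg {a b c : Pt} (h : left a b c) : 0 ≤ pdet (b - a) (c - a) := by
  rcases h with h | ⟨t, ht, h⟩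
  · linarith
  · rw [h]
    simp [pdet, Prod.smul_fst, Prod.smul_snd, smul_eq_mul]
    ring_nf
    simp

lemma ray_of_zero {a b c : Pt} (h : left a b c) (h0 : pdet (b - a) (c - a) = 0) :
    ∃ t : ℝ, 0 < t ∧ c - a = t • (b - a) := by
  rcases h with h | h
  · exact absurd h0 (by linarith)
  · exact h

lemma not_left_self {a b : Pt} (hab : a ≠ b) : ¬ left a b a := by
  rintro (h | ⟨t, ht, h⟩)
  · simp [pdet] at h
  · rw [sub_self] at h
    rcases (smul_eq_zero.mp h.symm) with h' | h'
    · exact absurd h' (by linarith)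
    · exact hab (sub_eq_zero.mp h').symm

lemma parallel {p q : Pt} (hp : p ≠ 0) (h : pdet p q = 0) : ∃ t : ℝ, q = t • p := by
  unfold pdet at h
  by_cases h1 : p.1 = 0
  · have h2 : p.2 ≠ 0 := by
      intro h2; exact hp (Prod.ext_iff.mpr ⟨h1, h2⟩)
    refine ⟨q.2 / p.2, ?_⟩
    rw [Prod.ext_iff]
    constructor
    · simp only [Prod.smul_fst, smul_eq_mul]
      rw [h1]
      have : q.1 = 0 := by
        have : p.2 * q.1 = 0 := by rw [h1] at h; linarith
        rcases mul_eq_zero.mp this with h'|h'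
        · exact absurd h' h2
        · exact h'
      rw [this]; ring
    · simp only [Prod.smul_snd, smul_eq_mul]
      field_simp
  · refine ⟨q.1 / p.1, ?_⟩
    rw [Prod.ext_iff]
    constructor
    · simp only [Prod.smul_fst, smul_eq_mul]; field_simp
    · simp only [Prod.smul_snd, smul_eq_mul]
      field_simp
      nlinarith [h]

lemma smulCancel {e : Pt} (he : e ≠ 0) {s t : ℝ} (h : s • e = t • e) : s = t := by
  have : (s - t) • e = 0 := by rw [sub_smul, h, sub_self]
  rcases smul_eq_zero.mp this with h' | h'
  · linarith [sub_eq_zero.mp (by exact h' : s - t = 0)]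
  · exact absurd h' he

lemma zero_aux {a b x y : Pt} (hab : a ≠ b) (hxa : x ≠ a) (hyx : y ≠ x)
    (h1 : left a b x) (h2 : left a b y) (hd : pdet (a - x) (y - x) = 0) :
    ∃ t : ℝ, t ≠ 0 ∧ t < 1 ∧ y - x = t • (a - x) := by
  have hax : a - x ≠ 0 := sub_ne_zero.mpr (Ne.symm hxa)
  obtain ⟨t, ht⟩ := parallel hax hd
  refine ⟨t, ?_, ?_, ht⟩
  · rintro rfl
    rw [zero_smul] at ht
    exact hyx (sub_eq_zero.mp ht)
  · by_contra hle
    push_neg at hle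
    rcases eq_or_lt_of_le hle with h1t | h1t
    · have hya : y = a := by
        have := ht
        rw [← h1t, one_smul] at this
        exact sub_left_inj.mp this
      exact not_left_self hab (hya ▸ h2)
    · have hya : y - a = (1 - t) • (x - a) := by
        have e1 : y - a = (y - x) - (a - x) := by abel
        rw [e1, ht]
        module
      have k1 : 0 ≤ pdet (b - a) (x - a) := left_nonneg h1
      have k2 : 0 ≤ pdet (b - a) (y - a) := left_nonneg h2
      have key : pdet (b - a) (y - a) = (1 - t) * pdet (b - a) (x - a) := by
        rw [hya]
        simp only [pdet, Prod.smul_fst, Prod.smul_snd, smul_eq_mul, Prod.fst_sub, Prod.snd_sub]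
        ring
      have hx0 : pdet (b - a) (x - a) = 0 := by nlinarith
      have hy0 : pdet (b - a) (y - a) = 0 := by rw [key, hx0]; ring
      obtain ⟨p, hp, hpe⟩ := ray_of_zero h1 hx0
      obtain ⟨s, hs, hse⟩ := ray_of_zero h2 hy0
      have hba : b - a ≠ 0 := sub_ne_zero.mpr (Ne.symm hab)
      have hkey2 : s • (b - a) = ((1 - t) * p) • (b - a) := by
        rw [← hse, hya, hpe, smul_smul]
      have := smulCancel hba hkey2
      nlinarith

lemma le_imp_left {a b x y : Pt} (hab : a ≠ b) (hxa : x ≠ a) (hyx : y ≠ x)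
    (h1 : left a b x) (h2 : left a b y) (hle : pdet (a - x) (y - x) ≤ 0) : left a x y := by
  rcases lt_or_eq_of_le hle with hlt | heq
  · left
    have : pdet (x - a) (y - a) = -pdet (a - x) (y - x) := by
      simp only [pdet, Prod.fst_sub, Prod.snd_sub]; ring
    rw [this]; linarith
  · obtain ⟨t, ht0, ht1, ht⟩ := zero_aux hab hxa hyx h1 h2 heq
    right
    refine ⟨1 - t, by linarith, ?_⟩
    have e1 : y - a = (y - x) - (a - x) := by abel
    rw [e1, ht]
    module

lemma behind {x p y : Pt} (hxp : x ≠ p) (hyx : y ≠ x) (h0 : pdet (p - x) (y - x) = 0)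
    (hn : ¬ left x p y) :
    (p.1 - x.1) * (y.1 - x.1) + (p.2 - x.2) * (y.2 - x.2) < 0 := by
  have hpx : p - x ≠ 0 := sub_ne_zero.mpr (Ne.symm hxp)
  obtain ⟨t, ht⟩ := parallel hpx h0
  have htne : t ≠ 0 := by
    rintro rfl
    rw [zero_smul] at ht
    exact hyx (sub_eq_zero.mp ht)
  have htneg : t < 0 := by
    rcases lt_or_gt_of_ne htne with h | h
    · exact h
    · exact absurd (Or.inr ⟨t, h, ht⟩) hn
  have c1 : y.1 - x.1 = t * (p.1 - x.1) := by
    have := congrArg Prod.fst ht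
    simpa using this
  have c2 : y.2 - x.2 = t * (p.2 - x.2) := by
    have := congrArg Prod.snd ht
    simpa using this
  have hs : 0 < (p.1 - x.1) ^ 2 + (p.2 - x.2) ^ 2 := by
    have h1 : ¬((p - x).1 = 0 ∧ (p - x).2 = 0) := by
      intro hc
      exact hpx (Prod.ext_iff.mpr hc)
    simp only [Prod.fst_sub, Prod.snd_sub] at h1
    rcases not_and_or.mp h1 with h | h <;> positivity
  have hG : (p.1 - x.1) * (y.1 - x.1) + (p.2 - x.2) * (y.2 - x.2)
      = t * ((p.1 - x.1) ^ 2 + (p.2 - x.2) ^ 2) := by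
    rw [c1, c2]; ring
  rw [hG]
  exact mul_neg_of_neg_of_pos htneg hs

lemma contraI {u v w x y : Pt} (huv : u ≠ v)
    (hx1 : left u v x) (hx2 : left v w x) (hx3 : left w u x)
    (hy1 : left u v y) (hy2 : left v w y) (hy3 : left w u y)
    (hA : 0 < pdet (u - x) (y - x)) (hB : 0 < pdet (v - x) (y - x))
    (hC : 0 < pdet (w - x) (y - x)) : False := by
  have hα := left_nonneg hx1
  have hβ := left_nonneg hx2
  have hγ := left_nonneg hx3
  have hα' := left_nonneg hy1
  have hβ' := left_nonneg hy2
  have hγ' := left_nonneg hy3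
  have S1 : pdet (w - v) (x - v) * pdet (u - x) (y - x)
      + pdet (u - w) (x - w) * pdet (v - x) (y - x)
      + pdet (v - u) (x - u) * pdet (w - x) (y - x) = 0 := by
    simp only [pdet, Prod.fst_sub, Prod.snd_sub]; ring
  -- each term nonneg, sum zero ⇒ each weight zero
  have t1 : 0 ≤ pdet (w - v) (x - v) * pdet (u - x) (y - x) := mul_nonneg hβ hA.le
  have t2 : 0 ≤ pdet (u - w) (x - w) * pdet (v - x) (y - x) := mul_nonneg hγ hB.le
  have t3 : 0 ≤ pdet (v - u) (x - u) * pdet (w - x) (y - x) := mul_nonneg hα hC.le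
  have hb0 : pdet (w - v) (x - v) = 0 := by
    rcases mul_eq_zero.mp (by linarith : pdet (w - v) (x - v) * pdet (u - x) (y - x) = 0) with h | h
    · exact h
    · linarith
  have hg0 : pdet (u - w) (x - w) = 0 := by
    rcases mul_eq_zero.mp (by linarith : pdet (u - w) (x - w) * pdet (v - x) (y - x) = 0) with h | h
    · exact h
    · linarith
  have ha0 : pdet (v - u) (x - u) = 0 := by
    rcases mul_eq_zero.mp (by linarith : pdet (v - u) (x - u) * pdet (w - x) (y - x) = 0) with h | h
    · exact h
    · linarith
  -- degenerate: u,v,w,x collinear; so is y; then A = 0, contradiction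
  have hsum : pdet (v - u) (y - u) + pdet (w - v) (y - v) + pdet (u - w) (y - w)
      = pdet (v - u) (x - u) + pdet (w - v) (x - v) + pdet (u - w) (x - w) := by
    simp only [pdet, Prod.fst_sub, Prod.snd_sub]; ring
  have ha'0 : pdet (v - u) (y - u) = 0 := by linarith
  have hvu : v - u ≠ 0 := sub_ne_zero.mpr (Ne.symm huv)
  obtain ⟨s, hs⟩ := parallel hvu ha0
  obtain ⟨s', hs'⟩ := parallel hvu ha'0
  have cx1 : x.1 - u.1 = s * (v.1 - u.1) := by simpa using congrArg Prod.fst hs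
  have cx2 : x.2 - u.2 = s * (v.2 - u.2) := by simpa using congrArg Prod.snd hs
  have cy1 : y.1 - u.1 = s' * (v.1 - u.1) := by simpa using congrArg Prod.fst hs'
  have cy2 : y.2 - u.2 = s' * (v.2 - u.2) := by simpa using congrArg Prod.snd hs'
  have hA0 : pdet (u - x) (y - x) = 0 := by
    simp only [pdet, Prod.fst_sub, Prod.snd_sub]
    linear_combination (y.1 - u.1) * cx2 - (y.2 - u.2) * cx1 + s * (v.2 - u.2) * cy1 - s * (v.1 - u.1) * cy2
  linarith

lemma contraII {u v w x y : Pt} (huv : u ≠ v) (hvw : v ≠ w) (hwu : w ≠ u)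
    (hxu : x ≠ u) (hxv : x ≠ v) (hxw : x ≠ w) (hyx : y ≠ x)
    (hx1 : left u v x) (hx2 : left v w x) (hx3 : left w u x)
    (hy1 : left u v y) (hy2 : left v w y) (hy3 : left w u y)
    (hA : pdet (u - x) (y - x) ≤ 0) (hB : pdet (v - x) (y - x) ≤ 0)
    (hC : pdet (w - x) (y - x) ≤ 0)
    (nxu : ¬ left x u y) (nxv : ¬ left x v y) (nxw : ¬ left x w y) : False := by
  have hα := left_nonneg hx1
  have hβ := left_nonneg hx2
  have hγ := left_nonneg hx3
  have hα' := left_nonneg hy1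
  have hβ' := left_nonneg hy2
  have hγ' := left_nonneg hy3
  set A := pdet (u - x) (y - x) with hAd
  set B := pdet (v - x) (y - x) with hBd
  set C := pdet (w - x) (y - x) with hCd
  set α := pdet (v - u) (x - u) with had
  set β := pdet (w - v) (x - v) with hbd
  set γ := pdet (u - w) (x - w) with hgd
  set Gu := (u.1 - x.1) * (y.1 - x.1) + (u.2 - x.2) * (y.2 - x.2) with hGud
  set Gv := (v.1 - x.1) * (y.1 - x.1) + (v.2 - x.2) * (y.2 - x.2) with hGvd
  set Gw := (w.1 - x.1) * (y.1 - x.1) + (w.2 - x.2) * (y.2 - x.2) with hGwd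
  have S1 : β * A + γ * B + α * C = 0 := by
    simp only [hAd, hBd, hCd, had, hbd, hgd, pdet, Prod.fst_sub, Prod.snd_sub]; ring
  have S2 : β * Gu + γ * Gv + α * Gw = 0 := by
    simp only [hGud, hGvd, hGwd, had, hbd, hgd, pdet, Prod.fst_sub, Prod.snd_sub]; ring
  have t1 : β * A ≤ 0 := mul_nonpos_of_nonneg_of_nonpos hβ hA
  have t2 : γ * B ≤ 0 := mul_nonpos_of_nonneg_of_nonpos hγ hB
  have t3 : α * C ≤ 0 := mul_nonpos_of_nonneg_of_nonpos hα hC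
  have e1 : β * A = 0 := by linarith
  have e2 : γ * B = 0 := by linarith
  have e3 : α * C = 0 := by linarith
  by_cases hdeg : α = 0 ∧ β = 0 ∧ γ = 0
  · -- degenerate collinear case
    obtain ⟨ha0, hb0, hg0⟩ := hdeg
    have hsum : pdet (v - u) (y - u) + pdet (w - v) (y - v) + pdet (u - w) (y - w)
        = α + β + γ := by
      simp only [had, hbd, hgd, pdet, Prod.fst_sub, Prod.snd_sub]; ring
    have ha'0 : pdet (v - u) (y - u) = 0 := by linarith
    have hb'0 : pdet (w - v) (y - v) = 0 := by linarith
    have hg'0 : pdet (u - w) (y - w) = 0 := by linarith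
    -- all pdets among the five points vanish; in particular A = B = C = 0
    have hvu : v - u ≠ 0 := sub_ne_zero.mpr (Ne.symm huv)
    have hwv : w - v ≠ 0 := sub_ne_zero.mpr (Ne.symm hvw)
    have huw : u - w ≠ 0 := sub_ne_zero.mpr (Ne.symm hwu)
    obtain ⟨s, hs⟩ := parallel hvu ha0
    obtain ⟨s', hs'⟩ := parallel hvu ha'0
    obtain ⟨m, hm⟩ := parallel hwv hb0
    obtain ⟨m', hm'⟩ := parallel hwv hb'0
    obtain ⟨k, hk⟩ := parallel huw hg0
    obtain ⟨k', hk'⟩ := parallel huw hg'0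
    have cx1 : x.1 - u.1 = s * (v.1 - u.1) := by simpa using congrArg Prod.fst hs
    have cx2 : x.2 - u.2 = s * (v.2 - u.2) := by simpa using congrArg Prod.snd hs
    have cy1 : y.1 - u.1 = s' * (v.1 - u.1) := by simpa using congrArg Prod.fst hs'
    have cy2 : y.2 - u.2 = s' * (v.2 - u.2) := by simpa using congrArg Prod.snd hs'
    have dx1 : x.1 - v.1 = m * (w.1 - v.1) := by simpa using congrArg Prod.fst hm
    have dx2 : x.2 - v.2 = m * (w.2 - v.2) := by simpa using congrArg Prod.snd hm
    have dy1 : y.1 - v.1 = m' * (w.1 - v.1) := by simpa using congrArg Prod.fst hm'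
    have dy2 : y.2 - v.2 = m' * (w.2 - v.2) := by simpa using congrArg Prod.snd hm'
    have fx1 : x.1 - w.1 = k * (u.1 - w.1) := by simpa using congrArg Prod.fst hk
    have fx2 : x.2 - w.2 = k * (u.2 - w.2) := by simpa using congrArg Prod.snd hk
    have fy1 : y.1 - w.1 = k' * (u.1 - w.1) := by simpa using congrArg Prod.fst hk'
    have fy2 : y.2 - w.2 = k' * (u.2 - w.2) := by simpa using congrArg Prod.snd hk'
    have hA0 : A = 0 := by
      simp only [hAd, pdet, Prod.fst_sub, Prod.snd_sub]
      linear_combination (y.1 - u.1) * cx2 - (y.2 - u.2) * cx1 + s * (v.2 - u.2) * cy1 - s * (v.1 - u.1) * cy2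
    have hB0 : B = 0 := by
      simp only [hBd, pdet, Prod.fst_sub, Prod.snd_sub]
      linear_combination (y.1 - v.1) * dx2 - (y.2 - v.2) * dx1 + m * (w.2 - v.2) * dy1 - m * (w.1 - v.1) * dy2
    have hC0 : C = 0 := by
      simp only [hCd, pdet, Prod.fst_sub, Prod.snd_sub]
      linear_combination (y.1 - w.1) * fx2 - (y.2 - w.2) * fx1 + k * (u.2 - w.2) * fy1 - k * (u.1 - w.1) * fy2
    have hGu0 : Gu < 0 := behind hxu hyx hA0 nxu
    have hGv0 : Gv < 0 := behind hxv hyx hB0 nxv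
    have hGw0 : Gw < 0 := behind hxw hyx hC0 nxw
    -- rays from x's membership
    obtain ⟨p, hp, hpe⟩ := ray_of_zero hx1 ha0
    obtain ⟨q, hq, hqe⟩ := ray_of_zero hx2 hb0
    obtain ⟨r, hr, hre⟩ := ray_of_zero hx3 hg0
    have p1 : x.1 - u.1 = p * (v.1 - u.1) := by simpa using congrArg Prod.fst hpe
    have p2 : x.2 - u.2 = p * (v.2 - u.2) := by simpa using congrArg Prod.snd hpe
    have q1 : x.1 - v.1 = q * (w.1 - v.1) := by simpa using congrArg Prod.fst hqe
    have q2 : x.2 - v.2 = q * (w.2 - v.2) := by simpa using congrArg Prod.snd hqe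
    have r1 : x.1 - w.1 = r * (u.1 - w.1) := by simpa using congrArg Prod.fst hre
    have r2 : x.2 - w.2 = r * (u.2 - w.2) := by simpa using congrArg Prod.snd hre
    have key1 : -Gu = p * (Gv - Gu) := by
      simp only [hGud, hGvd]
      linear_combination (y.1 - x.1) * p1 + (y.2 - x.2) * p2
    have key2 : -Gv = q * (Gw - Gv) := by
      simp only [hGvd, hGwd]
      linear_combination (y.1 - x.1) * q1 + (y.2 - x.2) * q2
    have key3 : -Gw = r * (Gu - Gw) := by
      simp only [hGwd, hGud]
      linear_combination (y.1 - x.1) * r1 + (y.2 - x.2) * r2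
    have o1 : Gu < Gv := by
      by_contra hcon
      push_neg at hcon
      have : p * (Gv - Gu) ≤ 0 := mul_nonpos_of_nonneg_of_nonpos hp.le (by linarith)
      linarith
    have o2 : Gv < Gw := by
      by_contra hcon
      push_neg at hcon
      have : q * (Gw - Gv) ≤ 0 := mul_nonpos_of_nonneg_of_nonpos hq.le (by linarith)
      linarith
    have o3 : Gw < Gu := by
      by_contra hcon
      push_neg at hcon
      have : r * (Gu - Gw) ≤ 0 := mul_nonpos_of_nonneg_of_nonpos hr.le (by linarith)
      linarith
    linarith
  · -- non-degenerate: some weight positive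
    have hβGu : β * Gu ≤ 0 ∧ (β ≠ 0 → β * Gu < 0) := by
      rcases eq_or_lt_of_le hβ with h | h
      · rw [← h]; simp
      · have hA0 : A = 0 := by
          rcases mul_eq_zero.mp e1 with h' | h'
          · exact absurd h'.symm (ne_of_lt h)
          · exact h'
        have := behind hxu hyx hA0 nxu
        have : β * Gu < 0 := mul_neg_of_pos_of_neg h this
        exact ⟨this.le, fun _ => this⟩
    have hγGv : γ * Gv ≤ 0 ∧ (γ ≠ 0 → γ * Gv < 0) := by
      rcases eq_or_lt_of_le hγ with h | h
      · rw [← h]; simp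
      · have hB0 : B = 0 := by
          rcases mul_eq_zero.mp e2 with h' | h'
          · exact absurd h'.symm (ne_of_lt h)
          · exact h'
        have := behind hxv hyx hB0 nxv
        have : γ * Gv < 0 := mul_neg_of_pos_of_neg h this
        exact ⟨this.le, fun _ => this⟩
    have hαGw : α * Gw ≤ 0 ∧ (α ≠ 0 → α * Gw < 0) := by
      rcases eq_or_lt_of_le hα with h | h
      · rw [← h]; simp
      · have hC0 : C = 0 := by
          rcases mul_eq_zero.mp e3 with h' | h'
          · exact absurd h'.symm (ne_of_lt h)
          · exact h'
        have := behind hxw hyx hC0 nxw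
        have : α * Gw < 0 := mul_neg_of_pos_of_neg h this
        exact ⟨this.le, fun _ => this⟩
    rcases not_and_or.mp hdeg with h | h'
    · exact absurd S2 (by have := hαGw.2 h; linarith [hβGu.1, hγGv.1]; )
    · rcases not_and_or.mp h' with h | h
      · exact absurd S2 (by have := hβGu.2 h; linarith [hγGv.1, hαGw.1])
      · exact absurd S2 (by have := hγGv.2 h; linarith [hβGu.1, hαGw.1])

lemma core {u v w x y : Pt} (huv : u ≠ v) (hvw : v ≠ w) (hwu : w ≠ u)
    (hxu : x ≠ u) (hxv : x ≠ v) (hxw : x ≠ w) (hyx : y ≠ x)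
    (hx : inside u v w x) (hy : inside u v w y) :
    inside x u v y ∨ inside x v w y ∨ inside x w u y := by
  obtain ⟨hx1, hx2, hx3⟩ := hx
  obtain ⟨hy1, hy2, hy3⟩ := hy
  have lemA : pdet (v - x) (y - x) ≤ 0 → left v x y := fun h =>
    le_imp_left hvw hxv hyx hx2 hy2 h
  have lemB : pdet (w - x) (y - x) ≤ 0 → left w x y := fun h =>
    le_imp_left hwu hxw hyx hx3 hy3 h
  have lemC : pdet (u - x) (y - x) ≤ 0 → left u x y := fun h =>
    le_imp_left huv hxu hyx hx1 hy1 h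
  by_cases hA : 0 < pdet (u - x) (y - x)
  · by_cases hB : pdet (v - x) (y - x) ≤ 0
    · exact Or.inl ⟨Or.inl hA, hy1, lemA hB⟩
    · push_neg at hB
      by_cases hC : pdet (w - x) (y - x) ≤ 0
      · exact Or.inr (Or.inl ⟨Or.inl hB, hy2, lemB hC⟩)
      · push_neg at hC
        exact absurd (contraI huv hx1 hx2 hx3 hy1 hy2 hy3 hA hB hC) id
  · push_neg at hA
    by_cases hC : 0 < pdet (w - x) (y - x)
    · exact Or.inr (Or.inr ⟨Or.inl hC, hy3, lemC hA⟩)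
    · push_neg at hC
      by_cases hB : 0 < pdet (v - x) (y - x)
      · exact Or.inr (Or.inl ⟨Or.inl hB, hy2, lemB hC⟩)
      · push_neg at hB
        by_cases hLxu : left x u y
        · exact Or.inl ⟨hLxu, hy1, lemA hB⟩
        · by_cases hLxv : left x v y
          · exact Or.inr (Or.inl ⟨hLxv, hy2, lemB hC⟩)
          · by_cases hLxw : left x w y
            · exact Or.inr (Or.inr ⟨hLxw, hy3, lemC hA⟩)
            · exact absurd (contraII huv hvw hwu hxu hxv hxw hyx hx1 hx2 hx3 hy1 hy2 hy3
                hA hB hC hLxu hLxv hLxw) id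

theorem clique_inside_triangle
    (V : Pt → Prop) (E : Pt → Pt → Prop)
    (hE1 : ∀ u, ¬ E u u)
    (hE2 : ∀ u v, E u v → E v u)
    (hE3 : ∀ u v, E u v → V u ∧ V v)
    (hC1 : ∀ u v w x, inside u v w x ∧ E u v ∧ E v w ∧ E w u ∧ V x → E u x)
    (u v w x y : Pt)
    (huv : E u v) (hvw : E v w) (hwu : E w u)
    (hVx : V x) (hVy : V y) (hxy : x ≠ y)
    (hx : inside u v w x) (hy : inside u v w y) :
    E x y := by
  have huv' : u ≠ v := fun h => hE1 v (h ▸ huv)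
  have hvw' : v ≠ w := fun h => hE1 w (h ▸ hvw)
  have hwu' : w ≠ u := fun h => hE1 u (h ▸ hwu)
  have hxu : x ≠ u := fun h => not_left_self huv' (h ▸ hx.1)
  have hxv : x ≠ v := fun h => not_left_self hvw' (h ▸ hx.2.1)
  have hxw : x ≠ w := fun h => not_left_self hwu' (h ▸ hx.2.2)
  have hyx : y ≠ x := Ne.symm hxy
  have hux : E u x := hC1 u v w x ⟨hx, huv, hvw, hwu, hVx⟩
  have hvx : E v x := hC1 v w u x ⟨⟨hx.2.1, hx.2.2, hx.1⟩, hvw, hwu, huv, hVx⟩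
  have hwx : E w x := hC1 w u v x ⟨⟨hx.2.2, hx.1, hx.2.1⟩, hwu, huv, hvw, hVx⟩
  rcases core huv' hvw' hwu' hxu hxv hxw hyx hx hy with h | h | h
  · exact hC1 x u v y ⟨h, hE2 u x hux, huv, hvx, hVy⟩
  · exact hC1 x v w y ⟨h, hE2 v x hvx, hvw, hwx, hVy⟩
  · exact hC1 x w u y ⟨h, hE2 w x hwx, hwu, hux, hVy⟩
end

section
/- (Proof Step 1.) Let V, E satisfy E1–E3, R1 and C1, and let F satisfy F1–F6. For all points u1, v1, w1, x1, w2, x2: if deleting(u1,v1,w1,x1) and deleting(w1,x1,w2,x2), then deleting(u1,v1,w2,x1) ∨ intersection(u1,v1,w1,w2). -/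
namespace PS1Helpers

def dd (a b c : Pt) : ℝ := (b.1-a.1)*(c.2-a.2) - (b.2-a.2)*(c.1-a.1)

lemma left_iff (a b c : Pt) :
    left a b c ↔ 0 < dd a b c ∨
      ∃ t : ℝ, 0 < t ∧ c.1-a.1 = t*(b.1-a.1) ∧ c.2-a.2 = t*(b.2-a.2) := by
  unfold left pdet dd
  constructor
  · rintro (h | ⟨t, ht, hE⟩)
    · left; simpa [Prod.fst_sub, Prod.snd_sub] using h
    · right; exact ⟨t, ht, by
        have h1 := congrArg Prod.fst hE
        have h2 := congrArg Prod.snd hE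
        simp [Prod.fst_sub, Prod.snd_sub, Prod.smul_fst, Prod.smul_snd] at h1 h2
        exact ⟨h1, h2⟩⟩
  · rintro (h | ⟨t, ht, h1, h2⟩)
    · left; simpa [Prod.fst_sub, Prod.snd_sub] using h
    · right; exact ⟨t, ht, by
        apply Prod.ext <;>
        simp [Prod.fst_sub, Prod.snd_sub, Prod.smul_fst, Prod.smul_snd, h1, h2]⟩

lemma dd_cyc (a b c : Pt) : dd a b c = dd b c a := by unfold dd; ring
lemma dd_swap23 (a b c : Pt) : dd a b c = - dd a c b := by unfold dd; ring

/-- affine evaluation: if r = p + μ (q − p) componentwise then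
    dd a b r = (1−μ) dd a b p + μ dd a b q -/
lemma dd_affine (a b p q r : Pt) (μ : ℝ)
    (h1 : r.1 = p.1 + μ*(q.1-p.1)) (h2 : r.2 = p.2 + μ*(q.2-p.2)) :
    dd a b r = (1-μ) * dd a b p + μ * dd a b q := by
  unfold dd; rw [h1, h2]; ring

lemma left_of_pos {a b c : Pt} (h : 0 < dd a b c) : left a b c :=
  (left_iff a b c).2 (Or.inl h)

lemma left_dd_nonneg {a b c : Pt} (h : left a b c) : 0 ≤ dd a b c := by
  rcases (left_iff a b c).1 h with h | ⟨t, ht, h1, h2⟩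
  · linarith
  · unfold dd; rw [h1, h2]; ring_nf; nlinarith [ht]

lemma left_self {a b : Pt} (h : a ≠ b) : left a b b := by
  refine (left_iff a b b).2 (Or.inr ⟨1, one_pos, by ring, by ring⟩)

lemma left_ne13 {a b c : Pt} (hab : a ≠ b) (h : left a b c) : c ≠ a := by
  intro hca
  rw [hca] at h
  rcases (left_iff a b a).1 h with h | ⟨t, ht, h1, h2⟩
  · have : dd a b a = 0 := by unfold dd; ring
    linarith
  · simp only [sub_self, zero_eq_mul] at h1 h2
    apply hab
    have hb1 : b.1 - a.1 = 0 := by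
      rcases h1 with h1 | h1
      · linarith
      · exact h1
    have hb2 : b.2 - a.2 = 0 := by
      rcases h2 with h2 | h2
      · linarith
      · exact h2
    exact (Prod.ext (by linarith) (by linarith))

/-- decomposition of a collinear point -/
lemma collinear_decomp {a b c : Pt} (hab : a ≠ b) (h : dd a b c = 0) :
    ∃ r : ℝ, c.1 - a.1 = r*(b.1-a.1) ∧ c.2-a.2 = r*(b.2-a.2) := by
  have hD : (b.1-a.1)^2 + (b.2-a.2)^2 ≠ 0 := by
    intro hz
    apply hab
    have h1 : b.1 - a.1 = 0 := by nlinarith [sq_nonneg (b.1-a.1), sq_nonneg (b.2-a.2)]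
    have h2 : b.2 - a.2 = 0 := by nlinarith [sq_nonneg (b.1-a.1), sq_nonneg (b.2-a.2)]
    exact (Prod.ext (by linarith) (by linarith)).symm
  unfold dd at h
  refine ⟨((c.1-a.1)*(b.1-a.1) + (c.2-a.2)*(b.2-a.2)) / ((b.1-a.1)^2 + (b.2-a.2)^2), ?_, ?_⟩
  · rw [div_mul_eq_mul_div, eq_div_iff hD]
    linear_combination (-(b.2 - a.2)) * h
  · rw [div_mul_eq_mul_div, eq_div_iff hD]
    linear_combination (b.1 - a.1) * h

/-- trichotomy -/
lemma left_tri {a b c : Pt} (hab : a ≠ b) (hca : c ≠ a) : left a b c ∨ left b a c := by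
  rcases lt_trichotomy (dd a b c) 0 with h | h | h
  · right; apply left_of_pos; have := dd_swap23 b a c; unfold dd at *; nlinarith
  · rcases collinear_decomp hab h with ⟨r, h1, h2⟩
    rcases lt_trichotomy r 0 with hr | hr | hr
    · right
      refine (left_iff b a c).2 (Or.inr ⟨1 - r, by linarith, by linarith [h1], by linarith [h2]⟩)

    · exfalso; apply hca; subst hr; simp at h1 h2
      exact Prod.ext (by linarith) (by linarith)
    · left; exact (left_iff a b c).2 (Or.inr ⟨r, hr, h1, h2⟩)
  · left; exact left_of_pos h

lemma dd_swap12 (a b c : Pt) : dd a b c = - dd b a c := by unfold dd; ring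

lemma left_ray {a b c : Pt} {s : ℝ} (hs : 0 < s)
    (h1 : c.1 - a.1 = s*(b.1-a.1)) (h2 : c.2 - a.2 = s*(b.2-a.2)) : left a b c :=
  (left_iff a b c).2 (Or.inr ⟨s, hs, h1, h2⟩)

lemma param_unique {u v : Pt} (huv : u ≠ v) {s s' : ℝ}
    (h1 : s*(v.1-u.1) = s'*(v.1-u.1)) (h2 : s*(v.2-u.2) = s'*(v.2-u.2)) : s = s' := by
  by_cases hx : v.1 - u.1 = 0
  · have hy : v.2 - u.2 ≠ 0 := by
      intro hy; apply huv
      exact (Prod.ext (by linarith) (by linarith)).symm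
    exact mul_right_cancel₀ hy h2
  · exact mul_right_cancel₀ hx h1

lemma point_eq {a b : Pt} (h1 : a.1 = b.1) (h2 : a.2 = b.2) : a = b := Prod.ext h1 h2

/-- convex combination of two negatives cannot vanish -/
lemma convex_neg {A B l : ℝ} (hl0 : 0 ≤ l) (hl1 : l ≤ 1) (hA : A < 0) (hB : B < 0)
    (h : (1-l)*A + l*B = 0) : False := by
  rcases lt_or_ge l 1 with h1 | h1
  · have h2 : (1-l)*A < 0 := mul_neg_of_pos_of_neg (by linarith) hA
    have h3 : l*B ≤ 0 := mul_nonpos_of_nonneg_of_nonpos hl0 hB.le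
    linarith
  · have h2 : l = 1 := le_antisymm hl1 h1
    rw [h2] at h; linarith

lemma param_bounds {p q t l : ℝ} (h0 : 0 < t) (h1 : t < 1) (hl0 : 0 ≤ l) (hl1 : l ≤ 1)
    (hpq : p < q) (h : t = p + l*(q-p)) : 0 < q ∧ p < 1 :=
  ⟨by nlinarith [mul_le_of_le_one_left (sub_pos.2 hpq).le hl1],
   by nlinarith [mul_nonneg hl0 (sub_pos.2 hpq).le]⟩

lemma param_bounds2 {p q t l : ℝ} (hl0 : 0 ≤ l) (hl1 : l ≤ 1) (h0 : 0 < t) (h1 : t < 1)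
    (hpq : p < q) (h : l = p + t*(q-p)) : 0 < q ∧ p < 1 :=
  ⟨by nlinarith [mul_pos (show (0:ℝ) < 1-t by linarith) (sub_pos.2 hpq)],
   by nlinarith [mul_pos h0 (sub_pos.2 hpq)]⟩

/-- If the segments [u,v] and [a,b] share a point r which is strictly inside [u,v],
then they intersect. -/
lemma shared_inter {u v a b r : Pt} {t l : ℝ}
    (huv : u ≠ v) (hab : a ≠ b) (ne1 : ¬(u = a ∧ v = b)) (ne2 : ¬(u = b ∧ v = a))
    (ht0 : 0 < t) (ht1 : t < 1) (hl0 : 0 ≤ l) (hl1 : l ≤ 1)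
    (hr1 : r.1 = u.1 + t*(v.1-u.1)) (hr2 : r.2 = u.2 + t*(v.2-u.2))
    (hs1 : r.1 = a.1 + l*(b.1-a.1)) (hs2 : r.2 = a.2 + l*(b.2-a.2)) :
    inter u v a b := by
  have hddu : dd u v u = 0 := by unfold dd; ring
  have hddv : dd u v v = 0 := by unfold dd; ring
  have hr0 : dd u v r = 0 := by
    rw [dd_affine u v u v r t hr1 hr2]; rw [hddu, hddv]; ring
  have hcomb : dd u v r = (1-l) * dd u v a + l * dd u v b :=
    dd_affine u v a b r l hs1 hs2
  have hdda : dd a b a = 0 := by unfold dd; ring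
  have hddb : dd a b b = 0 := by unfold dd; ring
  have hr0' : dd a b r = 0 := by
    rw [dd_affine a b a b r l hs1 hs2]; rw [hdda, hddb]; ring
  have hcomb' : dd a b r = (1-t) * dd a b u + t * dd a b v :=
    dd_affine a b u v r t hr1 hr2
  refine ⟨ne1, ne2, ?_, ?_⟩
  · -- third conjunct
    rcases lt_trichotomy (dd u v a) 0 with hA | hA | hA
    · -- a strictly right of u→v ; need  left u v b ∧ left v u a
      have hLva : left v u a := left_of_pos (by have := dd_swap12 v u a; linarith)
      have hLuvb : left u v b := by
        rcases lt_trichotomy (dd u v b) 0 with hB | hB | hB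
        · exact absurd (convex_neg hl0 hl1 hA hB (by linarith)) not_false
        · -- dd u v b = 0 → l = 1 → r = b → b strictly inside [u,v]
          have hl : l = 1 := by
            rcases eq_or_lt_of_le hl1 with h | h
            · exact h
            · exfalso
              have h2 : (1-l)*dd u v a < 0 := mul_neg_of_pos_of_neg (by linarith) hA
              rw [hB] at hcomb; linarith
          subst hl
          have hb1 : b.1 = r.1 := by rw [hs1]; ring
          have hb2 : b.2 = r.2 := by rw [hs2]; ring
          exact left_ray ht0 (by rw [hb1, hr1]; ring) (by rw [hb2, hr2]; ring)
        · exact left_of_pos hB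
      exact Or.inr ⟨hLuvb, hLva⟩
    · -- a on line uv
      have hlb : l * dd u v b = 0 := by nlinarith
      by_cases hl : l = 0
      · -- r = a : a strictly inside [u,v]
        subst hl
        have ha1 : a.1 = r.1 := by rw [hs1]; ring
        have ha2 : a.2 = r.2 := by rw [hs2]; ring
        have hLuva : left u v a :=
          left_ray ht0 (by rw [ha1, hr1]; ring) (by rw [ha2, hr2]; ring)
        have hLvua : left v u a :=
          left_ray (by linarith : (0:ℝ) < 1 - t)
            (by rw [ha1, hr1]; ring) (by rw [ha2, hr2]; ring)
        by_cases hbu : b = u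
        · subst hbu
          exact Or.inl ⟨hLuva, left_self (Ne.symm huv)⟩
        · rcases left_tri huv hbu with h | h
          · exact Or.inr ⟨h, hLvua⟩
          · exact Or.inl ⟨hLuva, h⟩
      · have hB : dd u v b = 0 := by
          rcases mul_eq_zero.1 hlb with h | h
          · exact absurd h hl
          · exact h
        obtain ⟨p, hp1, hp2⟩ := collinear_decomp huv hA
        obtain ⟨q, hq1, hq2⟩ := collinear_decomp huv hB
        have hpq : p ≠ q := by
          intro h; subst h; apply hab
          exact point_eq (by linarith) (by linarith)
        have htpq : t = p + l*(q-p) := by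
          apply param_unique huv (s := t) (s' := p + l*(q-p))
          · linear_combination hs1 - hr1 + hp1 + l * (hq1 - hp1)
          · linear_combination hs2 - hr2 + hp2 + l * (hq2 - hp2)
        rcases lt_or_gt_of_ne hpq with h | h
        · -- p < q : p ≤ t ≤ q
          obtain ⟨hq0, hp1'⟩ := param_bounds ht0 ht1 hl0 hl1 h htpq
          refine Or.inr ⟨left_ray hq0 hq1 hq2, left_ray (by linarith : (0:ℝ) < 1 - p)
            (by linear_combination hp1) (by linear_combination hp2)⟩
        · obtain ⟨hp0, hq1'⟩ := param_bounds ht0 ht1 (by linarith : (0:ℝ) ≤ 1-l)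
            (by linarith : 1-l ≤ 1) h (by linarith [htpq] : t = q + (1-l)*(p-q))
          refine Or.inl ⟨left_ray hp0 hp1 hp2, left_ray (by linarith : (0:ℝ) < 1 - q)
            (by linear_combination hq1) (by linear_combination hq2)⟩
    · have hLuva : left u v a := left_of_pos hA
      have hLvub : left v u b := by
        rcases lt_trichotomy (dd u v b) 0 with hB | hB | hB
        · exact left_of_pos (by have := dd_swap12 v u b; linarith)
        · have hl : l = 1 := by
            rcases eq_or_lt_of_le hl1 with h | h
            · exact h
            · exfalso
              have h2 : 0 < (1-l)*dd u v a := mul_pos (by linarith) hA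
              rw [hB] at hcomb; linarith
          subst hl
          have hb1 : b.1 = r.1 := by rw [hs1]; ring
          have hb2 : b.2 = r.2 := by rw [hs2]; ring
          exact left_ray (by linarith : (0:ℝ) < 1 - t)
            (by rw [hb1, hr1]; ring) (by rw [hb2, hr2]; ring)
        · exfalso
          have h2 : 0 ≤ (1-l)*dd u v a := mul_nonneg (by linarith) hA.le
          have h3 : 0 < l*dd u v b := by
            rcases eq_or_lt_of_le hl0 with h | h
            · exfalso; rw [← h] at hcomb; simp at hcomb; nlinarith
            · exact mul_pos h hB
          linarith
      exact Or.inl ⟨hLuva, hLvub⟩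
  · -- fourth conjunct
    rcases lt_trichotomy (dd a b u) 0 with hU | hU | hU
    · have hV : 0 < dd a b v := by
        nlinarith [mul_neg_of_pos_of_neg (show (0:ℝ) < 1-t by linarith) hU,
          mul_pos ht0 ht0]
      exact Or.inr ⟨left_of_pos hV, left_of_pos (by have := dd_swap12 b a u; linarith)⟩
    · have hV : dd a b v = 0 := by
        have : t * dd a b v = 0 := by nlinarith
        rcases mul_eq_zero.1 this with h | h
        · exact absurd h (by linarith)
        · exact h
      obtain ⟨pu, hu1, hu2⟩ := collinear_decomp hab hU
      obtain ⟨pv, hv1, hv2⟩ := collinear_decomp hab hV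
      have hpq : pu ≠ pv := by
        intro h; subst h; apply huv
        exact point_eq (by linarith) (by linarith)
      have hlp : l = pu + t*(pv-pu) := by
        apply param_unique hab (s := l) (s' := pu + t*(pv-pu))
        · linear_combination hr1 - hs1 + hu1 + t * (hv1 - hu1)
        · linear_combination hr2 - hs2 + hu2 + t * (hv2 - hu2)
      rcases lt_or_gt_of_ne hpq with h | h
      · -- pu < l < pv
        obtain ⟨hv0, hu1'⟩ := param_bounds2 hl0 hl1 ht0 ht1 h hlp
        exact Or.inr ⟨left_ray hv0 hv1 hv2, left_ray (by linarith : (0:ℝ) < 1 - pu)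
          (by linear_combination hu1) (by linear_combination hu2)⟩
      · obtain ⟨hu0, hv1'⟩ := param_bounds2 hl0 hl1 (by linarith : (0:ℝ) < 1-t)
          (by linarith : 1-t < 1) h (by linarith [hlp] : l = pv + (1-t)*(pu-pv))
        exact Or.inl ⟨left_ray hu0 hu1 hu2, left_ray (by linarith : (0:ℝ) < 1 - pv)
          (by linear_combination hv1) (by linear_combination hv2)⟩
    · have hV : dd a b v < 0 := by
        nlinarith [mul_pos (show (0:ℝ) < 1-t by linarith) hU, mul_pos ht0 ht0]
      exact Or.inl ⟨left_of_pos hU, left_of_pos (by have := dd_swap12 b a v; linarith)⟩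

/-- extract the ray parameter of a `left` statement whose determinant vanishes -/
lemma ray_param {a b c : Pt} (hab : a ≠ b) (h : left a b c) (h0 : dd a b c = 0) :
    ∃ t : ℝ, 0 < t ∧ c.1-a.1 = t*(b.1-a.1) ∧ c.2-a.2 = t*(b.2-a.2) := by
  rcases (left_iff a b c).1 h with h' | h'
  · exfalso; rw [h0] at h'; exact lt_irrefl 0 h'
  · exact h'

/-- crossing point of the two segments -/
lemma cross1 {u v w x : Pt} (huv : u ≠ v) (hwx : w ≠ x) (huw : u ≠ w)
    (h3a : left u v w) (h3b : left v u x)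
    (h4 : (left w x u ∧ left x w v) ∨ (left w x v ∧ left x w u)) :
    ∃ (q : Pt) (t s : ℝ), 0 ≤ t ∧ t ≤ 1 ∧ 0 ≤ s ∧ s ≤ 1 ∧
      q.1 = u.1 + t*(v.1-u.1) ∧ q.2 = u.2 + t*(v.2-u.2) ∧
      q.1 = w.1 + s*(x.1-w.1) ∧ q.2 = w.2 + s*(x.2-w.2) := by
  have hA : 0 ≤ dd u v w := left_dd_nonneg h3a
  have hB : dd u v x ≤ 0 := by have := left_dd_nonneg h3b; have := dd_swap12 v u x; linarith
  -- the two cases of h4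
  rcases h4 with ⟨h4a, h4b⟩ | ⟨h4a, h4b⟩
  · -- incompatible : everything collinear
    have hCu : 0 ≤ dd w x u := left_dd_nonneg h4a
    have hCv : dd w x v ≤ 0 := by have := left_dd_nonneg h4b; have := dd_swap12 x w v; linarith
    have hiden : dd u v w - dd u v x = dd w x v - dd w x u := by unfold dd; ring
    have hA0 : dd u v w = 0 := by linarith
    have hB0 : dd u v x = 0 := by linarith
    have hCu0 : dd w x u = 0 := by linarith
    have hCv0 : dd w x v = 0 := by linarith
    obtain ⟨a, ha1, ha2⟩ := collinear_decomp huv hA0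
    obtain ⟨b, hb1, hb2⟩ := collinear_decomp huv hB0
    obtain ⟨t', ht', hw1, hw2⟩ := ray_param huv h3a hA0
    have hat : a = t' := param_unique huv (by rw [← ha1, hw1]) (by rw [← ha2, hw2])
    have ha0 : 0 < a := hat ▸ ht'
    obtain ⟨t'', ht'', hx1, hx2⟩ := ray_param (Ne.symm huv) h3b
      (by have := dd_swap12 v u x; linarith)
    have hbt : b = 1 - t'' := by
      apply param_unique huv (s := b) (s' := 1 - t'')
      · have e : x.1 - u.1 = (1-t'')*(v.1-u.1) := by linear_combination hx1
        rw [← hb1, e]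
      · have e : x.2 - u.2 = (1-t'')*(v.2-u.2) := by linear_combination hx2
        rw [← hb2, e]
    have hb1' : b < 1 := by rw [hbt]; linarith
    have hba : b ≠ a := by
      intro h; apply hwx; apply point_eq
      · have : x.1 - w.1 = (b-a)*(v.1-u.1) := by linear_combination hb1 - ha1
        rw [h] at this; simp at this; linarith
      · have : x.2 - w.2 = (b-a)*(v.2-u.2) := by linear_combination hb2 - ha2
        rw [h] at this; simp at this; linarith
    -- ray of h4a : u - w = τ (x - w)
    obtain ⟨τ, hτ, hu1, hu2⟩ := ray_param hwx h4a hCu0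
    have hτeq : -a = τ*(b-a) := by
      apply param_unique huv (s := -a) (s' := τ*(b-a))
      · have e1 : u.1 - w.1 = (-a)*(v.1-u.1) := by linear_combination -ha1
        have e2 : x.1 - w.1 = (b-a)*(v.1-u.1) := by linear_combination hb1 - ha1
        calc (-a)*(v.1-u.1) = u.1 - w.1 := e1.symm
        _ = τ*(x.1-w.1) := hu1
        _ = τ*((b-a)*(v.1-u.1)) := by rw [e2]
        _ = τ*(b-a)*(v.1-u.1) := by ring
      · have e1 : u.2 - w.2 = (-a)*(v.2-u.2) := by linear_combination -ha2
        have e2 : x.2 - w.2 = (b-a)*(v.2-u.2) := by linear_combination hb2 - ha2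
        calc (-a)*(v.2-u.2) = u.2 - w.2 := e1.symm
        _ = τ*(x.2-w.2) := hu2
        _ = τ*((b-a)*(v.2-u.2)) := by rw [e2]
        _ = τ*(b-a)*(v.2-u.2) := by ring
    have hblta : b < a := by
      rcases lt_or_gt_of_ne hba with h | h
      · exact h
      · exfalso; nlinarith [mul_pos hτ (sub_pos.2 h)]
    rcases le_or_gt b 0 with hb0 | hb0
    · -- q = u
      have hD' : a - b ≠ 0 := ne_of_gt (by linarith)
      refine ⟨u, 0, a/(a-b), le_refl 0, zero_le_one,
        div_nonneg ha0.le (by linarith), ?_, by ring, by ring, ?_, ?_⟩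
      · rw [div_le_one (by linarith)]; linarith
      · have e2 : x.1 - w.1 = (b-a)*(v.1-u.1) := by linear_combination hb1 - ha1
        rw [e2]
        have he : a/(a-b)*((b-a)*(v.1-u.1)) = -a*(v.1-u.1) := by
          field_simp; ring
        rw [he]; linarith [ha1]
      · have e2 : x.2 - w.2 = (b-a)*(v.2-u.2) := by linear_combination hb2 - ha2
        rw [e2]
        have he : a/(a-b)*((b-a)*(v.2-u.2)) = -a*(v.2-u.2) := by
          field_simp; ring
        rw [he]; linarith [ha2]
    · -- q = x
      refine ⟨x, b, 1, by linarith, by linarith, zero_le_one, le_refl 1,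
        by linarith [hb1], by linarith [hb2], by ring, by ring⟩
  · -- compatible case
    have hCv : 0 ≤ dd w x v := left_dd_nonneg h4a
    have hCu : dd w x u ≤ 0 := by have := left_dd_nonneg h4b; have := dd_swap12 x w u; linarith
    have hiden : dd u v w - dd u v x = dd w x v - dd w x u := by unfold dd; ring
    rcases eq_or_lt_of_le (show (0:ℝ) ≤ dd u v w - dd u v x by linarith) with hD | hD
    · -- D = 0 : collinear
      have hA0 : dd u v w = 0 := by linarith
      have hB0 : dd u v x = 0 := by linarith
      have hCu0 : dd w x u = 0 := by linarith
      have hCv0 : dd w x v = 0 := by linarith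
      obtain ⟨a, ha1, ha2⟩ := collinear_decomp huv hA0
      obtain ⟨b, hb1, hb2⟩ := collinear_decomp huv hB0
      obtain ⟨t', ht', hw1, hw2⟩ := ray_param huv h3a hA0
      have hat : a = t' := param_unique huv (by rw [← ha1, hw1]) (by rw [← ha2, hw2])
      have ha0 : 0 < a := hat ▸ ht'
      obtain ⟨t'', ht'', hx1, hx2⟩ := ray_param (Ne.symm huv) h3b
        (by have := dd_swap12 v u x; linarith)
      have hbt : b = 1 - t'' := by
        apply param_unique huv (s := b) (s' := 1 - t'')
        · have e : x.1 - u.1 = (1-t'')*(v.1-u.1) := by linear_combination hx1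
          rw [← hb1, e]
        · have e : x.2 - u.2 = (1-t'')*(v.2-u.2) := by linear_combination hx2
          rw [← hb2, e]
      have hb1' : b < 1 := by rw [hbt]; linarith
      have hba : b ≠ a := by
        intro h; apply hwx; apply point_eq
        · have : x.1 - w.1 = (b-a)*(v.1-u.1) := by linear_combination hb1 - ha1
          rw [h] at this; simp at this; linarith
        · have : x.2 - w.2 = (b-a)*(v.2-u.2) := by linear_combination hb2 - ha2
          rw [h] at this; simp at this; linarith
      -- ray of h4b : u - x = τ' (w - x)
      obtain ⟨τ', hτ', hu1, hu2⟩ := ray_param (Ne.symm hwx) h4b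
        (by have := dd_swap12 x w u; linarith)
      have hτeq : -b = τ'*(a-b) := by
        apply param_unique huv (s := -b) (s' := τ'*(a-b))
        · have e1 : u.1 - x.1 = (-b)*(v.1-u.1) := by linear_combination -hb1
          have e2 : w.1 - x.1 = (a-b)*(v.1-u.1) := by linear_combination ha1 - hb1
          calc (-b)*(v.1-u.1) = u.1 - x.1 := e1.symm
          _ = τ'*(w.1-x.1) := hu1
          _ = τ'*((a-b)*(v.1-u.1)) := by rw [e2]
          _ = τ'*(a-b)*(v.1-u.1) := by ring
        · have e1 : u.2 - x.2 = (-b)*(v.2-u.2) := by linear_combination -hb2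
          have e2 : w.2 - x.2 = (a-b)*(v.2-u.2) := by linear_combination ha2 - hb2
          calc (-b)*(v.2-u.2) = u.2 - x.2 := e1.symm
          _ = τ'*(w.2-x.2) := hu2
          _ = τ'*((a-b)*(v.2-u.2)) := by rw [e2]
          _ = τ'*(a-b)*(v.2-u.2) := by ring
      rcases lt_or_gt_of_ne hba with hab' | hab'
      · -- b < a : u strictly inside [w,x]
        have hb0 : b < 0 := by nlinarith [mul_pos hτ' (sub_pos.2 hab')]
        have hD' : a - b ≠ 0 := ne_of_gt (by linarith)
        refine ⟨u, 0, a/(a-b), le_refl 0, zero_le_one,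
          div_nonneg ha0.le (by linarith), ?_, by ring, by ring, ?_, ?_⟩
        · rw [div_le_one (by linarith)]; linarith
        · have e2 : x.1 - w.1 = (b-a)*(v.1-u.1) := by linear_combination hb1 - ha1
          rw [e2]
          have he : a/(a-b)*((b-a)*(v.1-u.1)) = -a*(v.1-u.1) := by field_simp; ring
          rw [he]; linarith [ha1]
        · have e2 : x.2 - w.2 = (b-a)*(v.2-u.2) := by linear_combination hb2 - ha2
          rw [e2]
          have he : a/(a-b)*((b-a)*(v.2-u.2)) = -a*(v.2-u.2) := by field_simp; ring
          rw [he]; linarith [ha2]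
      · -- a < b : w strictly inside [u,v]
        have ha1' : a < 1 := by
          -- from ray of h4a : v - w = τ (x - w) : 1-a = τ(b-a) > 0
          obtain ⟨τ, hτ, hv1, hv2⟩ := ray_param hwx h4a hCv0
          have hτeq2 : 1-a = τ*(b-a) := by
            apply param_unique huv (s := 1-a) (s' := τ*(b-a))
            · have e1 : v.1 - w.1 = (1-a)*(v.1-u.1) := by linear_combination -ha1
              have e2 : x.1 - w.1 = (b-a)*(v.1-u.1) := by linear_combination hb1 - ha1
              calc (1-a)*(v.1-u.1) = v.1 - w.1 := e1.symm
              _ = τ*(x.1-w.1) := hv1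
              _ = τ*((b-a)*(v.1-u.1)) := by rw [e2]
              _ = τ*(b-a)*(v.1-u.1) := by ring
            · have e1 : v.2 - w.2 = (1-a)*(v.2-u.2) := by linear_combination -ha2
              have e2 : x.2 - w.2 = (b-a)*(v.2-u.2) := by linear_combination hb2 - ha2
              calc (1-a)*(v.2-u.2) = v.2 - w.2 := e1.symm
              _ = τ*(x.2-w.2) := hv2
              _ = τ*((b-a)*(v.2-u.2)) := by rw [e2]
              _ = τ*(b-a)*(v.2-u.2) := by ring
          linarith only [hτeq2, mul_pos hτ (sub_pos.2 hab')]
        exact ⟨w, a, 0, by linarith only [ha0], by linarith only [ha1'], le_refl 0, zero_le_one,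
          by linarith [ha1], by linarith [ha2], by ring, by ring⟩
    · -- D > 0 : genuine crossing, Cramer
      set D := dd u v w - dd u v x with hDdef
      have hkey1 : D*(u.1-w.1) - dd w x u*(v.1-u.1) - dd u v w*(x.1-w.1) = 0 := by
        rw [hDdef]; unfold dd; ring
      have hkey2 : D*(u.2-w.2) - dd w x u*(v.2-u.2) - dd u v w*(x.2-w.2) = 0 := by
        rw [hDdef]; unfold dd; ring
      refine ⟨(u.1 + (-dd w x u/D)*(v.1-u.1), u.2 + (-dd w x u/D)*(v.2-u.2)),
        -dd w x u/D, dd u v w/D,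
        div_nonneg (by linarith only [hCu]) hD.le, ?_,
        div_nonneg hA hD.le, ?_, rfl, rfl, ?_, ?_⟩
      · rw [div_le_one hD]; linarith only [hiden, hCv]
      · rw [div_le_one hD]; linarith only [hB, hDdef]
      · show u.1 + (-dd w x u/D)*(v.1-u.1) = w.1 + (dd u v w/D)*(x.1-w.1)
        field_simp
        linear_combination hkey1
      · show u.2 + (-dd w x u/D)*(v.2-u.2) = w.2 + (dd u v w/D)*(x.2-w.2)
        field_simp
        linear_combination hkey2

lemma dd_affine1 (b c p q r : Pt) (μ : ℝ)
    (h1 : r.1 = p.1 + μ*(q.1-p.1)) (h2 : r.2 = p.2 + μ*(q.2-p.2)) :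
    dd r b c = (1-μ) * dd p b c + μ * dd q b c := by
  unfold dd; rw [h1, h2]; ring

lemma dd_abb (a b : Pt) : dd a b b = 0 := by unfold dd; ring
lemma dd_aba (a b : Pt) : dd a b a = 0 := by unfold dd; ring
lemma dd_aab (a b : Pt) : dd a a b = 0 := by unfold dd; ring

/-- a point strictly inside an edge of a nondegenerate triangle is `inside` it -/
lemma edge_inside {c1 c2 z p : Pt} {σ : ℝ} (h0 : 0 < σ) (h1 : σ < 1)
    (hp1 : p.1 = c1.1 + σ*(c2.1-c1.1)) (hp2 : p.2 = c1.2 + σ*(c2.2-c1.2))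
    (hz : 0 < dd c1 c2 z) : inside c1 c2 z p := by
  refine ⟨left_ray h0 (by linear_combination hp1) (by linear_combination hp2), ?_, ?_⟩
  · apply left_of_pos
    have e := dd_affine c2 z c1 c2 p σ hp1 hp2
    have e2 : dd c2 z c2 = 0 := dd_aba c2 z
    have e3 : dd c2 z c1 = dd c1 c2 z := by unfold dd; ring
    rw [e2, e3] at e
    nlinarith
  · apply left_of_pos
    have e := dd_affine z c1 c1 c2 p σ hp1 hp2
    have e2 : dd z c1 c1 = 0 := dd_abb z c1
    have e3 : dd z c1 c2 = dd c1 c2 z := by unfold dd; ring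
    rw [e2, e3] at e
    nlinarith

lemma inside_rot {a b c p : Pt} (h : inside a b c p) : inside b c a p :=
  ⟨h.2.1, h.2.2, h.1⟩

lemma inter_comm {u v w x : Pt} (h : inter u v w x) : inter w x u v := by
  obtain ⟨n1, n2, h3, h4⟩ := h
  exact ⟨fun ⟨ha, hb⟩ => n1 ⟨ha.symm, hb.symm⟩,
    fun ⟨ha, hb⟩ => n2 ⟨hb.symm, ha.symm⟩, h4, h3⟩

lemma inter_swap_uv {u v w x : Pt} (h : inter u v w x) : inter v u w x := by
  obtain ⟨n1, n2, h3, h4⟩ := h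
  refine ⟨fun ⟨ha, hb⟩ => n2 ⟨hb, ha⟩, fun ⟨ha, hb⟩ => n1 ⟨hb, ha⟩, ?_, ?_⟩
  · rcases h3 with ⟨ha, hb⟩ | ⟨ha, hb⟩
    · exact Or.inr ⟨hb, ha⟩
    · exact Or.inl ⟨hb, ha⟩
  · rcases h4 with ⟨ha, hb⟩ | ⟨ha, hb⟩
    · exact Or.inr ⟨ha, hb⟩
    · exact Or.inl ⟨ha, hb⟩

/-- no point is strictly left of the line through itself -/
lemma left_aba_false {a b : Pt} (hab : a ≠ b) (h : left a b a) : False := by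
  rcases (left_iff a b a).1 h with h' | ⟨t, ht, h1, h2⟩
  · rw [dd_aba] at h'; exact lt_irrefl 0 h'
  · simp only [sub_self, zero_eq_mul] at h1 h2
    apply hab; apply point_eq
    · rcases h1 with h1 | h1
      · exact absurd h1 (by linarith)
      · linarith
    · rcases h2 with h2 | h2
      · exact absurd h2 (by linarith)
      · linarith

/-- intermediate value construction on a segment, weak at start, strict at end -/
lemma ivt_seg1 {a b c d : Pt} (hc : dd a b c ≤ 0) (hd : 0 < dd a b d) :
    ∃ (r : Pt) (μ : ℝ), 0 ≤ μ ∧ μ < 1 ∧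
      r.1 = c.1 + μ*(d.1-c.1) ∧ r.2 = c.2 + μ*(d.2-c.2) ∧ dd a b r = 0 ∧
      (dd a b c < 0 → 0 < μ) := by
  have hden : 0 < dd a b d - dd a b c := by linarith
  refine ⟨(c.1 + (-dd a b c/(dd a b d - dd a b c))*(d.1-c.1),
           c.2 + (-dd a b c/(dd a b d - dd a b c))*(d.2-c.2)),
    -dd a b c/(dd a b d - dd a b c),
    div_nonneg (by linarith) hden.le, by rw [div_lt_one hden]; linarith, rfl, rfl, ?_, ?_⟩
  · rw [dd_affine a b c d _ _ rfl rfl]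
    field_simp
    ring
  · intro h; exact div_pos (by linarith) hden

/-- intermediate value construction on a segment, strict at start, weak at end -/
lemma ivt_seg2 {a b c d : Pt} (hc : dd a b c < 0) (hd : 0 ≤ dd a b d) :
    ∃ (r : Pt) (μ : ℝ), 0 < μ ∧ μ ≤ 1 ∧
      r.1 = c.1 + μ*(d.1-c.1) ∧ r.2 = c.2 + μ*(d.2-c.2) ∧ dd a b r = 0 ∧
      (μ = 1 → dd a b d = 0) := by
  have hden : 0 < dd a b d - dd a b c := by linarith
  refine ⟨(c.1 + (-dd a b c/(dd a b d - dd a b c))*(d.1-c.1),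
           c.2 + (-dd a b c/(dd a b d - dd a b c))*(d.2-c.2)),
    -dd a b c/(dd a b d - dd a b c),
    div_pos (by linarith) hden, by rw [div_le_one hden]; linarith, rfl, rfl, ?_, ?_⟩
  · rw [dd_affine a b c d _ _ rfl rfl]
    field_simp
    ring
  · intro h
    rw [div_eq_one_iff_eq hden.ne'] at h
    linarith

lemma geom_online {u v w x w' q : Pt} {t s κ : ℝ}
    (huv : u ≠ v) (hwx : w ≠ x) (huw : u ≠ w) (hvw : v ≠ w) (hux : u ≠ x) (hvx : v ≠ x)
    (hw'u : w' ≠ u) (hw'v : w' ≠ v) (hw'w : w' ≠ w) (hw'x : w' ≠ x)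
    (ht0 : 0 ≤ t) (ht1 : t ≤ 1) (hs0 : 0 ≤ s) (hs1 : s ≤ 1)
    (hq1 : q.1 = u.1 + t*(v.1-u.1)) (hq2 : q.2 = u.2 + t*(v.2-u.2))
    (hq3 : q.1 = w.1 + s*(x.1-w.1)) (hq4 : q.2 = w.2 + s*(x.2-w.2))
    (hk1 : w'.1 - w.1 = κ*(x.1-w.1)) (hk2 : w'.2 - w.2 = κ*(x.2-w.2)) :
    inter u v w' x ∨ inter u v w w' := by
  have hww' : w ≠ w' := Ne.symm hw'w
  have hκ0 : κ ≠ 0 := by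
    intro h; rw [h] at hk1 hk2; simp at hk1 hk2
    exact hw'w (point_eq (by linarith) (by linarith))
  have hκ1 : κ ≠ 1 := by
    intro h; rw [h] at hk1 hk2
    exact hw'x (point_eq (by linarith) (by linarith))
  have htev : (0 < t ∧ t < 1) ∨ t = 0 ∨ t = 1 := by
    rcases eq_or_lt_of_le ht0 with h | h
    · exact Or.inr (Or.inl h.symm)
    · rcases eq_or_lt_of_le ht1 with h1 | h1
      · exact Or.inr (Or.inr h1)
      · exact Or.inl ⟨h, h1⟩
  rcases le_or_gt s κ with hsκ | hsκ
  · -- q lies on [w,w']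
    have hκpos : 0 < κ := (le_trans hs0 hsκ).lt_of_ne (Ne.symm hκ0)
    have hσ0 : 0 ≤ s/κ := div_nonneg hs0 hκpos.le
    have hσ1 : s/κ ≤ 1 := (div_le_one hκpos).2 hsκ
    have hfield : s/κ*(κ*(x.1-w.1)) = s*(x.1-w.1) ∧ s/κ*(κ*(x.2-w.2)) = s*(x.2-w.2) := by
      constructor <;> · field_simp
    have hr3 : q.1 = w.1 + (s/κ)*(w'.1-w.1) := by rw [hk1, hfield.1]; exact hq3
    have hr4 : q.2 = w.2 + (s/κ)*(w'.2-w.2) := by rw [hk2, hfield.2]; exact hq4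
    rcases htev with ⟨h0, h1⟩ | ht | ht
    · exact Or.inr (shared_inter huv hww' (fun ⟨h, _⟩ => huw h) (fun ⟨h, _⟩ => hw'u h.symm)
        h0 h1 hσ0 hσ1 hq1 hq2 hr3 hr4)
    · -- q = u
      have hqu : q = u := point_eq (by rw [hq1, ht]; ring) (by rw [hq2, ht]; ring)
      have hs0' : s ≠ 0 := by
        intro h; rw [h] at hq3 hq4; apply huw; rw [← hqu]
        exact point_eq (by linarith) (by linarith)
      have hsκ' : s ≠ κ := by
        intro h; apply hw'u; rw [← hqu]; apply point_eq
        · rw [hq3, h, ← hk1]; ring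
        · rw [hq4, h, ← hk2]; ring
      have hσ0' : 0 < s/κ := div_pos (hs0.lt_of_ne (Ne.symm hs0')) hκpos
      have hσ1' : s/κ < 1 := hσ1.lt_of_ne (by
        intro h; apply hsκ'; field_simp at h; exact h)
      have e1 : q.1 = u.1 + 0*(v.1-u.1) := by rw [hqu]; ring
      have e2 : q.2 = u.2 + 0*(v.2-u.2) := by rw [hqu]; ring
      exact Or.inr (inter_comm (shared_inter hww' huv
        (fun ⟨h, _⟩ => huw h.symm) (fun ⟨h, _⟩ => hvw h.symm)
        hσ0' hσ1' (le_refl 0) zero_le_one hr3 hr4 e1 e2))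
    · -- q = v
      have hqv : q = v := point_eq (by rw [hq1, ht]; ring) (by rw [hq2, ht]; ring)
      have hs0' : s ≠ 0 := by
        intro h; rw [h] at hq3 hq4; apply hvw; rw [← hqv]
        exact point_eq (by linarith) (by linarith)
      have hsκ' : s ≠ κ := by
        intro h; apply hw'v; rw [← hqv]; apply point_eq
        · rw [hq3, h, ← hk1]; ring
        · rw [hq4, h, ← hk2]; ring
      have hσ0' : 0 < s/κ := div_pos (hs0.lt_of_ne (Ne.symm hs0')) hκpos
      have hσ1' : s/κ < 1 := hσ1.lt_of_ne (by
        intro h; apply hsκ'; field_simp at h; exact h)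
      have e1 : q.1 = u.1 + 1*(v.1-u.1) := by rw [hqv]; ring
      have e2 : q.2 = u.2 + 1*(v.2-u.2) := by rw [hqv]; ring
      exact Or.inr (inter_comm (shared_inter hww' huv
        (fun ⟨h, _⟩ => huw h.symm) (fun ⟨h, _⟩ => hvw h.symm)
        hσ0' hσ1' zero_le_one (le_refl 1) hr3 hr4 e1 e2))
  · -- q lies on [w',x]
    have hκlt1 : κ < 1 := lt_of_lt_of_le hsκ hs1
    have hden : (0:ℝ) < 1 - κ := by linarith
    have hσ0 : 0 < (s-κ)/(1-κ) := div_pos (by linarith) hden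
    have hσ1 : (s-κ)/(1-κ) ≤ 1 := (div_le_one hden).2 (by linarith)
    have hx1' : x.1 - w'.1 = (1-κ)*(x.1-w.1) := by linear_combination -hk1
    have hx2' : x.2 - w'.2 = (1-κ)*(x.2-w.2) := by linear_combination -hk2
    have hfield : (s-κ)/(1-κ)*((1-κ)*(x.1-w.1)) = (s-κ)*(x.1-w.1) ∧
        (s-κ)/(1-κ)*((1-κ)*(x.2-w.2)) = (s-κ)*(x.2-w.2) := by
      constructor <;> · field_simp
    have hr3 : q.1 = w'.1 + ((s-κ)/(1-κ))*(x.1-w'.1) := by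
      rw [hx1', hfield.1]; linear_combination hq3 - hk1
    have hr4 : q.2 = w'.2 + ((s-κ)/(1-κ))*(x.2-w'.2) := by
      rw [hx2', hfield.2]; linear_combination hq4 - hk2
    rcases htev with ⟨h0, h1⟩ | ht | ht
    · exact Or.inl (shared_inter huv hw'x (fun ⟨h, _⟩ => hw'u h.symm) (fun ⟨h, _⟩ => hux h)
        h0 h1 hσ0.le hσ1 hq1 hq2 hr3 hr4)
    · -- q = u
      have hqu : q = u := point_eq (by rw [hq1, ht]; ring) (by rw [hq2, ht]; ring)
      have hs1'' : s ≠ 1 := by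
        intro h; rw [h] at hq3 hq4; apply hux; rw [← hqu]
        exact point_eq (by linarith) (by linarith)
      have hσ1' : (s-κ)/(1-κ) < 1 := by
        rw [div_lt_one hden]
        rcases lt_or_eq_of_le hs1 with h | h
        · linarith
        · exact absurd h hs1''
      have e1 : q.1 = u.1 + 0*(v.1-u.1) := by rw [hqu]; ring
      have e2 : q.2 = u.2 + 0*(v.2-u.2) := by rw [hqu]; ring
      exact Or.inl (inter_comm (shared_inter hw'x huv
        (fun ⟨h, _⟩ => hw'u h) (fun ⟨h, _⟩ => hw'v h)
        hσ0 hσ1' (le_refl 0) zero_le_one hr3 hr4 e1 e2))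
    · -- q = v
      have hqv : q = v := point_eq (by rw [hq1, ht]; ring) (by rw [hq2, ht]; ring)
      have hs1'' : s ≠ 1 := by
        intro h; rw [h] at hq3 hq4; apply hvx; rw [← hqv]
        exact point_eq (by linarith) (by linarith)
      have hσ1' : (s-κ)/(1-κ) < 1 := by
        rw [div_lt_one hden]
        rcases lt_or_eq_of_le hs1 with h | h
        · linarith
        · exact absurd h hs1''
      have e1 : q.1 = u.1 + 1*(v.1-u.1) := by rw [hqv]; ring
      have e2 : q.2 = u.2 + 1*(v.2-u.2) := by rw [hqv]; ring
      exact Or.inl (inter_comm (shared_inter hw'x huv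
        (fun ⟨h, _⟩ => hw'u h) (fun ⟨h, _⟩ => hw'v h)
        hσ0 hσ1' zero_le_one (le_refl 1) hr3 hr4 e1 e2))

lemma geom_ux {u v w w' : Pt}
    (huv : u ≠ v) (huw : u ≠ w) (hvw : v ≠ w)
    (hw'u : w' ≠ u) (hw'v : w' ≠ v) (hw'w : w' ≠ w)
    (h3a : left u v w) (hL : left u w v)
    (ni3 : ¬ inside w u w' v) (ni4 : ¬ inside u w w' v) :
    inter u v w' u ∨ inter u v w w' := by
  have hA0 : dd u v w = 0 := by
    have h1 := left_dd_nonneg h3a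
    have h2 := left_dd_nonneg hL
    have h3 : dd u w v = - dd u v w := by unfold dd; ring
    linarith
  obtain ⟨a, ha1, ha2⟩ := collinear_decomp huv hA0
  obtain ⟨t', ht', hw1, hw2⟩ := ray_param huv h3a hA0
  have hat : a = t' := param_unique huv (by rw [← ha1, hw1]) (by rw [← ha2, hw2])
  have ha0 : 0 < a := hat ▸ ht'
  have ha1ne : a ≠ 1 := by
    intro h; rw [h] at ha1 ha2; apply hvw; symm
    exact point_eq (by linarith) (by linarith)
  rcases lt_or_gt_of_ne ha1ne with halt | hagt
  · -- a < 1 : w strictly inside [u,v]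
    exact Or.inr (shared_inter (r := w) huv (Ne.symm hw'w)
      (fun ⟨h, _⟩ => huw h) (fun ⟨h, _⟩ => hw'u h.symm)
      ha0 halt (le_refl 0) zero_le_one
      (by linear_combination ha1) (by linear_combination ha2)
      (by ring) (by ring))
  · by_cases hC : dd w u w' = 0
    · -- w' on the line
      obtain ⟨hh, hh1, hh2⟩ := collinear_decomp (Ne.symm huw) hC
      have hg1 : w'.1 - u.1 = (a*(1-hh))*(v.1-u.1) := by
        linear_combination hh1 + (1-hh) * ha1
      have hg2 : w'.2 - u.2 = (a*(1-hh))*(v.2-u.2) := by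
        linear_combination hh2 + (1-hh) * ha2
      set g := a*(1-hh) with hgdef
      have hg0 : g ≠ 0 := by
        intro h; rw [h] at hg1 hg2; apply hw'u
        exact point_eq (by linarith) (by linarith)
      rcases lt_or_gt_of_ne hg0 with hglt | hggt
      · -- g < 0 : u strictly inside [w,w']
        have hden : 0 < a - g := by linarith
        have hτ0 : 0 < a/(a-g) := div_pos ha0 hden
        have hτ1 : a/(a-g) < 1 := by rw [div_lt_one hden]; linarith
        have hww'1 : w'.1 - w.1 = (g-a)*(v.1-u.1) := by linear_combination hg1 - ha1
        have hww'2 : w'.2 - w.2 = (g-a)*(v.2-u.2) := by linear_combination hg2 - ha2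
        have hfe1 : a/(a-g)*((g-a)*(v.1-u.1)) = -a*(v.1-u.1) := by
          field_simp; ring
        have hfe2 : a/(a-g)*((g-a)*(v.2-u.2)) = -a*(v.2-u.2) := by
          field_simp; ring
        refine Or.inr (inter_comm (shared_inter (r := u) (Ne.symm hw'w) huv
          (fun ⟨h, _⟩ => huw h.symm) (fun ⟨h, _⟩ => hvw h.symm)
          hτ0 hτ1 (le_refl 0) zero_le_one ?_ ?_ (by ring) (by ring)))
        · rw [hww'1, hfe1]; linear_combination -ha1
        · rw [hww'2, hfe2]; linear_combination -ha2
      · -- g > 0 : direct touching intersection at u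
        have hfe1 : (1/g)*(w'.1-u.1) = v.1-u.1 := by rw [hg1]; field_simp
        have hfe2 : (1/g)*(w'.2-u.2) = v.2-u.2 := by rw [hg2]; field_simp
        refine Or.inl ⟨fun ⟨h, _⟩ => hw'u h.symm, fun ⟨_, h⟩ => hw'v h.symm, ?_, ?_⟩
        · exact Or.inl ⟨left_ray hggt hg1 hg2, left_self (Ne.symm huv)⟩
        · exact Or.inl ⟨left_self hw'u, left_ray (by positivity : (0:ℝ) < 1/g)
            hfe1.symm hfe2.symm⟩
    · -- w' off the line : v strictly inside segment (w,u)
      have hσ0 : 0 < (a-1)/a := div_pos (by linarith) ha0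
      have hσ1 : (a-1)/a < 1 := by rw [div_lt_one ha0]; linarith
      have hcomp1 : v.1 = w.1 + (a-1)/a*(u.1-w.1) := by
        have e : u.1 - w.1 = -a*(v.1-u.1) := by linear_combination -ha1
        rw [e]
        have e2 : (a-1)/a*(-a*(v.1-u.1)) = (1-a)*(v.1-u.1) := by field_simp; ring
        rw [e2]; linear_combination -ha1
      have hcomp2 : v.2 = w.2 + (a-1)/a*(u.2-w.2) := by
        have e : u.2 - w.2 = -a*(v.2-u.2) := by linear_combination -ha2
        rw [e]
        have e2 : (a-1)/a*(-a*(v.2-u.2)) = (1-a)*(v.2-u.2) := by field_simp; ring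
        rw [e2]; linear_combination -ha2
      rcases lt_or_gt_of_ne hC with hneg | hpos
      · -- dd w u w' < 0, use triangle (u,w,w')
        have hpos' : 0 < dd u w w' := by
          have e : dd u w w' = - dd w u w' := by unfold dd; ring
          linarith
        have hσ0' : 0 < 1/a := by positivity
        have hσ1' : 1/a < 1 := by rw [div_lt_one ha0]; linarith
        have hc1 : v.1 = u.1 + 1/a*(w.1-u.1) := by
          rw [show w.1-u.1 = a*(v.1-u.1) from by linear_combination ha1]
          field_simp
          ring
        have hc2 : v.2 = u.2 + 1/a*(w.2-u.2) := by
          rw [show w.2-u.2 = a*(v.2-u.2) from by linear_combination ha2]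
          field_simp
          ring
        exact absurd (edge_inside hσ0' hσ1' hc1 hc2 hpos') ni4
      · exact absurd (edge_inside hσ0 hσ1 hcomp1 hcomp2 hpos) ni3

lemma sign_fac {a W : ℝ} (hW : 0 < W) (h : 0 ≤ a * W) : 0 ≤ a := by nlinarith
lemma nonpos_fac {a W : ℝ} (hW : 0 < W) (h : a * W ≤ 0) : a ≤ 0 := by nlinarith
lemma pos_fac {a W : ℝ} (hW : 0 < W) (h : 0 < a * W) : 0 < a := by nlinarith
lemma neg_fac {a W : ℝ} (hW : 0 < W) (h : a * W < 0) : a < 0 := by nlinarith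

lemma geom_wpos {u v w x w' q : Pt} {t s : ℝ}
    (huv : u ≠ v) (hwx : w ≠ x) (huw : u ≠ w) (hvw : v ≠ w) (hux : u ≠ x) (hvx : v ≠ x)
    (hw'u : w' ≠ u) (hw'v : w' ≠ v) (hw'w : w' ≠ w) (hw'x : w' ≠ x)
    (ht0 : 0 ≤ t) (ht1 : t ≤ 1) (hs0 : 0 ≤ s) (hs1 : s ≤ 1)
    (hq1 : q.1 = u.1 + t*(v.1-u.1)) (hq2 : q.2 = u.2 + t*(v.2-u.2))
    (hq3 : q.1 = w.1 + s*(x.1-w.1)) (hq4 : q.2 = w.2 + s*(x.2-w.2))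
    (h4a : left w x v) (h4b : left x w u)
    (hW : 0 < dd w x w')
    (ni3 : ¬ inside w x w' v) :
    inter u v w' x ∨ inter u v w w' := by
  have hwwne : w ≠ w' := Ne.symm hw'w
  have hw'xne : w' ≠ x := hw'x
  have ef1 : dd w' x w = -dd w x w' := by unfold dd; ring
  have ef2 : dd w w' x = -dd w x w' := by unfold dd; ring
  have hf0v : 0 ≤ dd w x v := left_dd_nonneg h4a
  have hf0u : dd w x u ≤ 0 := by
    have e : dd x w u = -dd w x u := by unfold dd; ring
    have h := left_dd_nonneg h4b
    linarith only [e, h]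
  have hf0q : dd w x q = 0 := by
    rw [dd_affine w x w x q s hq3 hq4, dd_aba w x, dd_abb w x]; ring
  have hf1q : dd w' x q = -(1-s) * dd w x w' := by
    rw [dd_affine w' x w x q s hq3 hq4, dd_abb w' x, ef1]; ring
  have hf2q : dd w w' q = -s * dd w x w' := by
    rw [dd_affine w w' w x q s hq3 hq4, dd_aba w w', ef2]; ring
  have hf1q0 : dd w' x q ≤ 0 := by
    have h := mul_nonneg (show (0:ℝ) ≤ 1-s by linarith only [hs1]) hW.le
    linarith only [h, hf1q]
  have hf2q0 : dd w w' q ≤ 0 := by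
    have h := mul_nonneg hs0 hW.le
    linarith only [h, hf2q]
  -- r₂ construction : crossing of [q,v] with line (w,w'), used whenever dd w w' v > 0.
  have hr2con : 0 < dd w w' v →
      (∀ (r2 : Pt) (μ2 : ℝ), 0 ≤ μ2 → μ2 < 1 →
        r2.1 = q.1 + μ2*(v.1-q.1) → r2.2 = q.2 + μ2*(v.2-q.2) →
        dd w w' r2 = 0 → dd w' x r2 ≤ 0) →
      inter u v w w' := by
    intro hRv hcond
    obtain ⟨r2, μ2, hμ0, hμ1, hrr1, hrr2, hr20, himp⟩ := ivt_seg1 hf2q0 hRv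
    have ht1' : t < 1 := by
      rcases eq_or_lt_of_le ht1 with h | h
      · exfalso
        have hqv : q = v := point_eq (by rw [hq1, h]; ring) (by rw [hq2, h]; ring)
        rw [hqv] at hf2q0; linarith only [hf2q0, hRv]
      · exact h
    have hτ1 : t + μ2*(1-t) < 1 := by
      linarith only [mul_pos (show (0:ℝ) < 1-μ2 by linarith only [hμ1])
        (show (0:ℝ) < 1-t by linarith only [ht1'])]
    have hτ0 : 0 < t + μ2*(1-t) := by
      rcases eq_or_lt_of_le ht0 with h | h
      · have hqu : q = u := point_eq (by rw [hq1, ← h]; ring) (by rw [hq2, ← h]; ring)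
        have hs0' : 0 < s := by
          rcases eq_or_lt_of_le hs0 with h' | h'
          · exfalso
            have hqw : q = w := point_eq (by rw [hq3, ← h']; ring) (by rw [hq4, ← h']; ring)
            exact huw (by rw [← hqu, hqw])
          · exact h'
        have hlt : dd w w' q < 0 := by
          have hp := mul_pos hs0' hW
          linarith only [hp, hf2q]
        have heq : t + μ2*(1-t) = μ2 := by rw [← h]; ring
        rw [heq]; exact himp hlt
      · linarith only [h, mul_nonneg hμ0 (show (0:ℝ) ≤ 1-t by linarith only [ht1])]
    have hre1 : r2.1 = u.1 + (t+μ2*(1-t))*(v.1-u.1) := by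
      linear_combination hrr1 + (1-μ2) * hq1
    have hre2 : r2.2 = u.2 + (t+μ2*(1-t))*(v.2-u.2) := by
      linear_combination hrr2 + (1-μ2) * hq2
    obtain ⟨lam, hl1, hl2⟩ := collinear_decomp hwwne hr20
    have hle1 : r2.1 = w.1 + lam*(w'.1-w.1) := by linear_combination hl1
    have hle2 : r2.2 = w.2 + lam*(w'.2-w.2) := by linear_combination hl2
    have hdwxr2 : dd w x r2 = lam * dd w x w' := by
      rw [dd_affine w x w w' r2 lam hle1 hle2, dd_aba w x]; ring
    have hdwxr2' : dd w x r2 = (1-μ2) * dd w x q + μ2 * dd w x v :=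
      dd_affine w x q v r2 μ2 hrr1 hrr2
    have hlam0 : 0 ≤ lam := by
      refine sign_fac hW ?_
      have h1 := mul_nonneg hμ0 hf0v
      rw [hf0q] at hdwxr2'
      linarith only [hdwxr2, hdwxr2', h1]
    have hdw'xr2 : dd w' x r2 = -(1-lam) * dd w x w' := by
      rw [dd_affine w' x w w' r2 lam hle1 hle2, dd_aba w' x, ef1]; ring
    have hcnd := hcond r2 μ2 hμ0 hμ1 hrr1 hrr2 hr20
    have hlam1 : lam ≤ 1 := by
      have h1 : 0 ≤ (1-lam) * dd w x w' := by linarith only [hcnd, hdw'xr2]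
      have := sign_fac hW h1
      linarith only [this]
    exact shared_inter huv hwwne (fun ⟨h, _⟩ => huw h) (fun ⟨h, _⟩ => hw'u h.symm)
      hτ0 hτ1 hlam0 hlam1 hre1 hre2 hle1 hle2
  rcases lt_trichotomy (dd w' x v) 0 with hPv | hPv | hPv
  · -- dd w' x v < 0
    rcases lt_trichotomy (dd w w' v) 0 with hRv | hRv | hRv
    · -- v strictly inside the triangle
      exfalso
      apply ni3
      refine ⟨h4a, left_of_pos ?_, left_of_pos ?_⟩
      · have e : dd x w' v = -dd w' x v := by unfold dd; ring
        linarith only [e, hPv]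
      · have e : dd w' w v = -dd w w' v := by unfold dd; ring
        linarith only [e, hRv]
    · -- v strictly inside [w,w']
      obtain ⟨lam, hl1, hl2⟩ := collinear_decomp hwwne hRv
      have hle1 : v.1 = w.1 + lam*(w'.1-w.1) := by linear_combination hl1
      have hle2 : v.2 = w.2 + lam*(w'.2-w.2) := by linear_combination hl2
      have e1 : dd w x v = lam * dd w x w' := by
        rw [dd_affine w x w w' v lam hle1 hle2, dd_aba w x]; ring
      have e2 : dd w' x v = -(1-lam) * dd w x w' := by
        rw [dd_affine w' x w w' v lam hle1 hle2, dd_aba w' x, ef1]; ring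
      have hlam0 : 0 < lam := by
        rcases eq_or_lt_of_le (sign_fac hW (by linarith only [e1, hf0v] :
            0 ≤ lam * dd w x w')) with h | h
        · exfalso; apply hvw
          rw [← h] at hl1 hl2; simp at hl1 hl2
          exact point_eq (by linarith only [hl1]) (by linarith only [hl2])
        · exact h
      have hlam1 : lam < 1 := by
        have h1 : 0 < (1-lam) * dd w x w' := by linarith only [e2, hPv]
        have := pos_fac hW h1
        linarith only [this]
      exact Or.inr (inter_comm (shared_inter (r := v) hwwne huv
        (fun ⟨h, _⟩ => huw h.symm) (fun ⟨h, _⟩ => hvw h.symm)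
        hlam0 hlam1 zero_le_one (le_refl 1) hle1 hle2 (by ring) (by ring)))
    · -- r₂ applies; dd w' x r2 ≤ 0 automatically since dd w' x v < 0
      refine Or.inr (hr2con hRv ?_)
      intro r2 μ2 hμ0 hμ1 hrr1 hrr2 _
      have e : dd w' x r2 = (1-μ2) * dd w' x q + μ2 * dd w' x v :=
        dd_affine w' x q v r2 μ2 hrr1 hrr2
      have t1 : (1-μ2) * dd w' x q ≤ 0 :=
        mul_nonpos_of_nonneg_of_nonpos (by linarith only [hμ1]) hf1q0
      have t2 : μ2 * dd w' x v ≤ 0 := mul_nonpos_of_nonneg_of_nonpos hμ0 hPv.le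
      linarith only [e, t1, t2]
  · -- dd w' x v = 0
    rcases lt_trichotomy (dd w w' v) 0 with hRv | hRv | hRv
    · -- v strictly inside [w',x]
      obtain ⟨nu, hn1, hn2⟩ := collinear_decomp hw'xne hPv
      have hne1 : v.1 = w'.1 + nu*(x.1-w'.1) := by linear_combination hn1
      have hne2 : v.2 = w'.2 + nu*(x.2-w'.2) := by linear_combination hn2
      have e1 : dd w w' v = -nu * dd w x w' := by
        rw [dd_affine w w' w' x v nu hne1 hne2, dd_abb w w', ef2]; ring
      have e2 : dd w x v = (1-nu) * dd w x w' := by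
        rw [dd_affine w x w' x v nu hne1 hne2, dd_abb w x]; ring
      have hnu0 : 0 < nu := pos_fac hW (by linarith only [e1, hRv])
      have hnu1 : nu < 1 := by
        rcases eq_or_lt_of_le (show nu ≤ 1 by
            have := sign_fac hW (by linarith only [e2, hf0v] : 0 ≤ (1-nu) * dd w x w')
            linarith only [this]) with h | h
        · exfalso; apply hvx
          rw [h] at hn1 hn2
          exact point_eq (by linarith only [hn1]) (by linarith only [hn2])
        · exact h
      exact Or.inl (inter_comm (shared_inter (r := v) hw'xne huv
        (fun ⟨h, _⟩ => hw'u h) (fun ⟨h, _⟩ => hw'v h)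
        hnu0 hnu1 zero_le_one (le_refl 1) hne1 hne2 (by ring) (by ring)))
    · -- dd w' x v = dd w w' v = 0 → v = w'
      exfalso
      obtain ⟨nu, hn1, hn2⟩ := collinear_decomp hw'xne hPv
      have hne1 : v.1 = w'.1 + nu*(x.1-w'.1) := by linear_combination hn1
      have hne2 : v.2 = w'.2 + nu*(x.2-w'.2) := by linear_combination hn2
      have e1 : dd w w' v = -nu * dd w x w' := by
        rw [dd_affine w w' w' x v nu hne1 hne2, dd_abb w w', ef2]; ring
      have hnu : nu = 0 := by
        have h0 : nu * dd w x w' = 0 := by linarith only [e1, hRv]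
        rcases mul_eq_zero.1 h0 with h | h
        · exact h
        · exact absurd h (ne_of_gt hW)
      apply hw'v
      rw [hnu] at hn1 hn2; simp at hn1 hn2
      exact (point_eq (by linarith only [hn1]) (by linarith only [hn2])).symm
    · -- r₂ applies with dd w' x v = 0
      refine Or.inr (hr2con hRv ?_)
      intro r2 μ2 hμ0 hμ1 hrr1 hrr2 _
      have e : dd w' x r2 = (1-μ2) * dd w' x q + μ2 * dd w' x v :=
        dd_affine w' x q v r2 μ2 hrr1 hrr2
      have t1 : (1-μ2) * dd w' x q ≤ 0 :=
        mul_nonpos_of_nonneg_of_nonpos (by linarith only [hμ1]) hf1q0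
      rw [hPv] at e
      linarith only [e, t1]
  · -- dd w' x v > 0 : construct r on [q,v] crossing line (w',x)
    obtain ⟨r, μ, hμ0, hμ1, hrr1, hrr2, hr0, himp⟩ := ivt_seg1 hf1q0 hPv
    have ht1' : t < 1 := by
      rcases eq_or_lt_of_le ht1 with h | h
      · exfalso
        have hqv : q = v := point_eq (by rw [hq1, h]; ring) (by rw [hq2, h]; ring)
        rw [hqv] at hf1q0; linarith only [hf1q0, hPv]
      · exact h
    have hτ1 : t + μ*(1-t) < 1 := by
      linarith only [mul_pos (show (0:ℝ) < 1-μ by linarith only [hμ1])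
        (show (0:ℝ) < 1-t by linarith only [ht1'])]
    have hτ0 : 0 < t + μ*(1-t) := by
      rcases eq_or_lt_of_le ht0 with h | h
      · have hqu : q = u := point_eq (by rw [hq1, ← h]; ring) (by rw [hq2, ← h]; ring)
        have hs1' : s < 1 := by
          rcases eq_or_lt_of_le hs1 with h' | h'
          · exfalso
            have hqx : q = x := point_eq (by rw [hq3, h']; ring) (by rw [hq4, h']; ring)
            exact hux (by rw [← hqu, hqx])
          · exact h'
        have hlt : dd w' x q < 0 := by
          have hp := mul_pos (show (0:ℝ) < 1-s by linarith only [hs1']) hW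
          linarith only [hp, hf1q]
        have heq : t + μ*(1-t) = μ := by rw [← h]; ring
        rw [heq]; exact himp hlt
      · linarith only [h, mul_nonneg hμ0 (show (0:ℝ) ≤ 1-t by linarith only [ht1])]
    have hre1 : r.1 = u.1 + (t+μ*(1-t))*(v.1-u.1) := by
      linear_combination hrr1 + (1-μ) * hq1
    have hre2 : r.2 = u.2 + (t+μ*(1-t))*(v.2-u.2) := by
      linear_combination hrr2 + (1-μ) * hq2
    obtain ⟨nu, hn1, hn2⟩ := collinear_decomp hw'xne hr0
    have hne1 : r.1 = w'.1 + nu*(x.1-w'.1) := by linear_combination hn1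
    have hne2 : r.2 = w'.2 + nu*(x.2-w'.2) := by linear_combination hn2
    have e1 : dd w x r = (1-nu) * dd w x w' := by
      rw [dd_affine w x w' x r nu hne1 hne2, dd_abb w x]; ring
    have e1' : dd w x r = (1-μ) * dd w x q + μ * dd w x v :=
      dd_affine w x q v r μ hrr1 hrr2
    have hnu1 : nu ≤ 1 := by
      have h1 := mul_nonneg hμ0 hf0v
      rw [hf0q] at e1'
      have h2 : 0 ≤ (1-nu) * dd w x w' := by linarith only [e1, e1', h1]
      have := sign_fac hW h2
      linarith only [this]
    have e2 : dd w w' r = -nu * dd w x w' := by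
      rw [dd_affine w w' w' x r nu hne1 hne2, dd_abb w w', ef2]; ring
    have e2' : dd w w' r = (1-μ) * dd w w' q + μ * dd w w' v :=
      dd_affine w w' q v r μ hrr1 hrr2
    rcases le_or_gt (dd w w' v) 0 with hRv | hRv
    · -- dd w w' r ≤ 0 directly
      have hnu0 : 0 ≤ nu := by
        have t1 : (1-μ) * dd w w' q ≤ 0 :=
          mul_nonpos_of_nonneg_of_nonpos (by linarith only [hμ1]) hf2q0
        have t2 : μ * dd w w' v ≤ 0 := mul_nonpos_of_nonneg_of_nonpos hμ0 hRv
        refine sign_fac hW ?_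
        linarith only [e2, e2', t1, t2]
      exact Or.inl (shared_inter huv hw'xne
        (fun ⟨h, _⟩ => hw'u h.symm) (fun ⟨h, _⟩ => hux h)
        hτ0 hτ1 hnu0 hnu1 hre1 hre2 hne1 hne2)
    · -- dichotomy between r and r₂
      have hμrel : μ * (dd w' x v - dd w' x q) = -dd w' x q := by
        have e : dd w' x r = (1-μ) * dd w' x q + μ * dd w' x v :=
          dd_affine w' x q v r μ hrr1 hrr2
        rw [hr0] at e
        linarith only [e]
      have hkey : dd w w' r * (dd w' x v - dd w' x q) =
          dd w w' q * dd w' x v - dd w' x q * dd w w' v := by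
        linear_combination (dd w' x v - dd w' x q) * e2' +
          (dd w w' v - dd w w' q) * hμrel
      have hden1 : 0 < dd w' x v - dd w' x q := by linarith only [hPv, hf1q0]
      rcases le_or_gt (dd w w' q * dd w' x v - dd w' x q * dd w w' v) 0 with hX | hX
      · -- dd w w' r ≤ 0, LEFT via r
        have hr2le : dd w w' r ≤ 0 := by
          refine nonpos_fac hden1 ?_
          linarith only [hkey, hX]
        have hnu0 : 0 ≤ nu := sign_fac hW (by linarith only [e2, hr2le])
        exact Or.inl (shared_inter huv hw'xne
          (fun ⟨h, _⟩ => hw'u h.symm) (fun ⟨h, _⟩ => hux h)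
          hτ0 hτ1 hnu0 hnu1 hre1 hre2 hne1 hne2)
      · -- RIGHT via r₂
        refine Or.inr (hr2con hRv ?_)
        intro r2 μ2 hμ20 hμ21 hss1 hss2 hzero
        have e : dd w' x r2 = (1-μ2) * dd w' x q + μ2 * dd w' x v :=
          dd_affine w' x q v r2 μ2 hss1 hss2
        have e' : dd w w' r2 = (1-μ2) * dd w w' q + μ2 * dd w w' v :=
          dd_affine w w' q v r2 μ2 hss1 hss2
        have hμ2rel : μ2 * (dd w w' v - dd w w' q) = -dd w w' q := by
          rw [hzero] at e'
          linarith only [e']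
        have hkey2 : dd w' x r2 * (dd w w' v - dd w w' q) =
            dd w' x q * dd w w' v - dd w w' q * dd w' x v := by
          linear_combination (dd w w' v - dd w w' q) * e +
            (dd w' x v - dd w' x q) * hμ2rel
        have hden2 : 0 < dd w w' v - dd w w' q := by linarith only [hRv, hf2q0]
        have := neg_fac hden2 (show dd w' x r2 * (dd w w' v - dd w w' q) < 0 by
          linarith only [hkey2, hX])
        linarith only [this]

lemma geom_wneg {u v w x w' q : Pt} {t s : ℝ}
    (huv : u ≠ v) (hwx : w ≠ x) (huw : u ≠ w) (hvw : v ≠ w) (hux : u ≠ x) (hvx : v ≠ x)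
    (hw'u : w' ≠ u) (hw'v : w' ≠ v) (hw'w : w' ≠ w) (hw'x : w' ≠ x)
    (ht0 : 0 ≤ t) (ht1 : t ≤ 1) (hs0 : 0 ≤ s) (hs1 : s ≤ 1)
    (hq1 : q.1 = u.1 + t*(v.1-u.1)) (hq2 : q.2 = u.2 + t*(v.2-u.2))
    (hq3 : q.1 = w.1 + s*(x.1-w.1)) (hq4 : q.2 = w.2 + s*(x.2-w.2))
    (h4a : left w x v) (h4b : left x w u)
    (hW : dd w x w' < 0)
    (ni2 : ¬ inside x w w' u) :
    inter u v w' x ∨ inter u v w w' := by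
  have hnW : 0 < -dd w x w' := by linarith only [hW]
  have hwwne : w ≠ w' := Ne.symm hw'w
  have hw'xne : w' ≠ x := hw'x
  have ef1 : dd w' x w = -dd w x w' := by unfold dd; ring
  have ef2 : dd w w' x = -dd w x w' := by unfold dd; ring
  have hf0v : 0 ≤ dd w x v := left_dd_nonneg h4a
  have hf0u : dd w x u ≤ 0 := by
    have e : dd x w u = -dd w x u := by unfold dd; ring
    have h := left_dd_nonneg h4b
    linarith only [e, h]
  have hf0q : dd w x q = 0 := by
    rw [dd_affine w x w x q s hq3 hq4, dd_aba w x, dd_abb w x]; ring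
  have hf1q : dd w' x q = -(1-s) * dd w x w' := by
    rw [dd_affine w' x w x q s hq3 hq4, dd_abb w' x, ef1]; ring
  have hf2q : dd w w' q = -s * dd w x w' := by
    rw [dd_affine w w' w x q s hq3 hq4, dd_aba w w', ef2]; ring
  have hf1q0 : 0 ≤ dd w' x q := by
    have h := mul_nonneg (show (0:ℝ) ≤ 1-s by linarith only [hs1]) hnW.le
    linarith only [h, hf1q]
  have hf2q0 : 0 ≤ dd w w' q := by
    have h := mul_nonneg hs0 hnW.le
    linarith only [h, hf2q]
  -- r₂ construction : crossing of [u,q] with line (w,w'), used whenever dd w w' u < 0.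
  have hr2con : dd w w' u < 0 →
      (∀ (r2 : Pt) (μ2 : ℝ), 0 < μ2 → μ2 ≤ 1 →
        r2.1 = u.1 + μ2*(q.1-u.1) → r2.2 = u.2 + μ2*(q.2-u.2) →
        dd w w' r2 = 0 → 0 ≤ dd w' x r2) →
      inter u v w w' := by
    intro hRu hcond
    obtain ⟨r2, μ2, hμ0, hμ1, hrr1, hrr2, hr20, himp⟩ := ivt_seg2 hRu hf2q0
    have ht0' : 0 < t := by
      rcases eq_or_lt_of_le ht0 with h | h
      · exfalso
        have hqu : q = u := point_eq (by rw [hq1, ← h]; ring) (by rw [hq2, ← h]; ring)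
        rw [hqu] at hf2q0; linarith only [hf2q0, hRu]
      · exact h
    have hτ0 : 0 < μ2*t := mul_pos hμ0 ht0'
    have hτ1 : μ2*t < 1 := by
      rcases eq_or_lt_of_le hμ1 with h | h
      · -- μ2 = 1 → dd w w' q = 0 → s = 0 → q = w ; then t = 1 → q = v → v = w
        have h0 := himp h
        have hs0' : s = 0 := by
          have h1 : s * (-dd w x w') = 0 := by linarith only [h0, hf2q]
          rcases mul_eq_zero.1 h1 with h' | h'
          · exact h'
          · exact absurd h' (ne_of_gt hnW)
        have hqw : q = w := point_eq (by rw [hq3, hs0']; ring) (by rw [hq4, hs0']; ring)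
        have ht1' : t < 1 := by
          rcases eq_or_lt_of_le ht1 with h' | h'
          · exfalso
            have hqv : q = v := point_eq (by rw [hq1, h']; ring) (by rw [hq2, h']; ring)
            exact hvw (by rw [← hqv, hqw])
          · exact h'
        rw [h]; linarith only [ht1']
      · have := mul_le_of_le_one_right hμ0.le ht1
        linarith only [this, h]
    have hre1 : r2.1 = u.1 + (μ2*t)*(v.1-u.1) := by
      linear_combination hrr1 + μ2 * hq1
    have hre2 : r2.2 = u.2 + (μ2*t)*(v.2-u.2) := by
      linear_combination hrr2 + μ2 * hq2
    obtain ⟨lam, hl1, hl2⟩ := collinear_decomp hwwne hr20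
    have hle1 : r2.1 = w.1 + lam*(w'.1-w.1) := by linear_combination hl1
    have hle2 : r2.2 = w.2 + lam*(w'.2-w.2) := by linear_combination hl2
    have e3 : dd w x r2 = lam * dd w x w' := by
      rw [dd_affine w x w w' r2 lam hle1 hle2, dd_aba w x]; ring
    have e3' : dd w x r2 = (1-μ2) * dd w x u + μ2 * dd w x q :=
      dd_affine w x u q r2 μ2 hrr1 hrr2
    have hlam0 : 0 ≤ lam := by
      refine sign_fac hnW ?_
      have h1 : (1-μ2) * dd w x u ≤ 0 :=
        mul_nonpos_of_nonneg_of_nonpos (by linarith only [hμ1]) hf0u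
      rw [hf0q] at e3'
      have h2 : dd w x r2 ≤ 0 := by linarith only [e3', h1]
      have h3 : lam * dd w x w' ≤ 0 := by linarith only [e3, h2]
      linarith only [h3]
    have e4 : dd w' x r2 = -(1-lam) * dd w x w' := by
      rw [dd_affine w' x w w' r2 lam hle1 hle2, dd_aba w' x, ef1]; ring
    have hcnd := hcond r2 μ2 hμ0 hμ1 hrr1 hrr2 hr20
    have hlam1 : lam ≤ 1 := by
      have h1 : 0 ≤ (1-lam) * (-dd w x w') := by linarith only [hcnd, e4]
      have := sign_fac hnW h1
      linarith only [this]
    exact shared_inter huv hwwne (fun ⟨h, _⟩ => huw h) (fun ⟨h, _⟩ => hw'u h.symm)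
      hτ0 hτ1 hlam0 hlam1 hre1 hre2 hle1 hle2
  rcases lt_trichotomy (dd w' x u) 0 with hPu | hPu | hPu
  · -- dd w' x u < 0 : construct r on [u,q] crossing line (w',x)
    obtain ⟨r, μ, hμ0, hμ1, hrr1, hrr2, hr0, himp⟩ := ivt_seg2 hPu hf1q0
    have ht0' : 0 < t := by
      rcases eq_or_lt_of_le ht0 with h | h
      · exfalso
        have hqu : q = u := point_eq (by rw [hq1, ← h]; ring) (by rw [hq2, ← h]; ring)
        rw [hqu] at hf1q0; linarith only [hf1q0, hPu]
      · exact h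
    have hτ0 : 0 < μ*t := mul_pos hμ0 ht0'
    have hτ1 : μ*t < 1 := by
      rcases eq_or_lt_of_le hμ1 with h | h
      · have h0 := himp h
        have hs1' : s = 1 := by
          have h1 : (1-s) * (-dd w x w') = 0 := by linarith only [h0, hf1q]
          rcases mul_eq_zero.1 h1 with h' | h'
          · linarith only [h']
          · exact absurd h' (ne_of_gt hnW)
        have hqx : q = x := point_eq (by rw [hq3, hs1']; ring) (by rw [hq4, hs1']; ring)
        have ht1' : t < 1 := by
          rcases eq_or_lt_of_le ht1 with h' | h'
          · exfalso
            have hqv : q = v := point_eq (by rw [hq1, h']; ring) (by rw [hq2, h']; ring)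
            exact hvx (by rw [← hqv, hqx])
          · exact h'
        rw [h]; linarith only [ht1']
      · have := mul_le_of_le_one_right hμ0.le ht1
        linarith only [this, h]
    have hre1 : r.1 = u.1 + (μ*t)*(v.1-u.1) := by linear_combination hrr1 + μ * hq1
    have hre2 : r.2 = u.2 + (μ*t)*(v.2-u.2) := by linear_combination hrr2 + μ * hq2
    obtain ⟨nu, hn1, hn2⟩ := collinear_decomp hw'xne hr0
    have hne1 : r.1 = w'.1 + nu*(x.1-w'.1) := by linear_combination hn1
    have hne2 : r.2 = w'.2 + nu*(x.2-w'.2) := by linear_combination hn2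
    have e1 : dd w x r = (1-nu) * dd w x w' := by
      rw [dd_affine w x w' x r nu hne1 hne2, dd_abb w x]; ring
    have e1' : dd w x r = (1-μ) * dd w x u + μ * dd w x q :=
      dd_affine w x u q r μ hrr1 hrr2
    have hnu1 : nu ≤ 1 := by
      have h1 : (1-μ) * dd w x u ≤ 0 :=
        mul_nonpos_of_nonneg_of_nonpos (by linarith only [hμ1]) hf0u
      rw [hf0q] at e1'
      have h2 : (1-nu) * dd w x w' ≤ 0 := by linarith only [e1, e1', h1]
      have h3 : 0 ≤ (1-nu) * (-dd w x w') := by linarith only [h2]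
      have := sign_fac hnW h3
      linarith only [this]
    have e2 : dd w w' r = -nu * dd w x w' := by
      rw [dd_affine w w' w' x r nu hne1 hne2, dd_abb w w', ef2]; ring
    have e2' : dd w w' r = (1-μ) * dd w w' u + μ * dd w w' q :=
      dd_affine w w' u q r μ hrr1 hrr2
    rcases le_or_gt 0 (dd w w' u) with hRu | hRu
    · -- dd w w' r ≥ 0 directly, LEFT via r
      have hnu0 : 0 ≤ nu := by
        have t1 : 0 ≤ (1-μ) * dd w w' u :=
          mul_nonneg (by linarith only [hμ1]) hRu
        have t2 : 0 ≤ μ * dd w w' q := mul_nonneg hμ0.le hf2q0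
        refine sign_fac hnW ?_
        have h2 : 0 ≤ dd w w' r := by linarith only [e2', t1, t2]
        linarith only [e2, h2]
      exact Or.inl (shared_inter huv hw'xne
        (fun ⟨h, _⟩ => hw'u h.symm) (fun ⟨h, _⟩ => hux h)
        hτ0 hτ1 hnu0 hnu1 hre1 hre2 hne1 hne2)
    · -- dichotomy between r and r₂
      have hμrel : μ * (dd w' x q - dd w' x u) = -dd w' x u := by
        have e : dd w' x r = (1-μ) * dd w' x u + μ * dd w' x q :=
          dd_affine w' x u q r μ hrr1 hrr2
        rw [hr0] at e
        linarith only [e]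
      have hkey : dd w w' r * (dd w' x q - dd w' x u) =
          dd w w' u * dd w' x q - dd w' x u * dd w w' q := by
        linear_combination (dd w' x q - dd w' x u) * e2' +
          (dd w w' q - dd w w' u) * hμrel
      have hden1 : 0 < dd w' x q - dd w' x u := by linarith only [hPu, hf1q0]
      rcases le_or_gt 0 (dd w w' u * dd w' x q - dd w' x u * dd w w' q) with hX | hX
      · -- dd w w' r ≥ 0, LEFT via r
        have hrge : 0 ≤ dd w w' r := sign_fac hden1 (by linarith only [hkey, hX])
        have hnu0 : 0 ≤ nu := by
          refine sign_fac hnW ?_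
          linarith only [e2, hrge]
        exact Or.inl (shared_inter huv hw'xne
          (fun ⟨h, _⟩ => hw'u h.symm) (fun ⟨h, _⟩ => hux h)
          hτ0 hτ1 hnu0 hnu1 hre1 hre2 hne1 hne2)
      · -- RIGHT via r₂
        refine Or.inr (hr2con hRu ?_)
        intro r2 μ2 hμ20 hμ21 hss1 hss2 hzero
        have e : dd w' x r2 = (1-μ2) * dd w' x u + μ2 * dd w' x q :=
          dd_affine w' x u q r2 μ2 hss1 hss2
        have e' : dd w w' r2 = (1-μ2) * dd w w' u + μ2 * dd w w' q :=
          dd_affine w w' u q r2 μ2 hss1 hss2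
        have hμ2rel : μ2 * (dd w w' q - dd w w' u) = -dd w w' u := by
          rw [hzero] at e'
          linarith only [e']
        have hkey2 : dd w' x r2 * (dd w w' q - dd w w' u) =
            dd w' x u * dd w w' q - dd w w' u * dd w' x q := by
          linear_combination (dd w w' q - dd w w' u) * e +
            (dd w' x q - dd w' x u) * hμ2rel
        have hden2 : 0 < dd w w' q - dd w w' u := by linarith only [hRu, hf2q0]
        have := pos_fac hden2 (show 0 < dd w' x r2 * (dd w w' q - dd w w' u) by
          linarith only [hkey2, hX])
        linarith only [this]
  · -- dd w' x u = 0
    rcases lt_trichotomy (dd w w' u) 0 with hRu | hRu | hRu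
    · -- r₂ direct, RIGHT
      refine Or.inr (hr2con hRu ?_)
      intro r2 μ2 hμ20 hμ21 hss1 hss2 _
      have e : dd w' x r2 = (1-μ2) * dd w' x u + μ2 * dd w' x q :=
        dd_affine w' x u q r2 μ2 hss1 hss2
      rw [hPu] at e
      have t2 : 0 ≤ μ2 * dd w' x q := mul_nonneg hμ20.le hf1q0
      linarith only [e, t2]
    · -- u = w' : contradiction
      exfalso
      obtain ⟨nu, hn1, hn2⟩ := collinear_decomp hw'xne hPu
      have hne1 : u.1 = w'.1 + nu*(x.1-w'.1) := by linear_combination hn1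
      have hne2 : u.2 = w'.2 + nu*(x.2-w'.2) := by linear_combination hn2
      have e1 : dd w w' u = -nu * dd w x w' := by
        rw [dd_affine w w' w' x u nu hne1 hne2, dd_abb w w', ef2]; ring
      have hnu : nu = 0 := by
        have h0 : nu * dd w x w' = 0 := by linarith only [e1, hRu]
        rcases mul_eq_zero.1 h0 with h | h
        · exact h
        · exact absurd h (ne_of_lt hW)
      apply hw'u
      rw [hnu] at hn1 hn2; simp at hn1 hn2
      exact (point_eq (by linarith only [hn1]) (by linarith only [hn2])).symm
    · -- u strictly inside [w',x], LEFT
      obtain ⟨nu, hn1, hn2⟩ := collinear_decomp hw'xne hPu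
      have hne1 : u.1 = w'.1 + nu*(x.1-w'.1) := by linear_combination hn1
      have hne2 : u.2 = w'.2 + nu*(x.2-w'.2) := by linear_combination hn2
      have e1 : dd w w' u = -nu * dd w x w' := by
        rw [dd_affine w w' w' x u nu hne1 hne2, dd_abb w w', ef2]; ring
      have e2 : dd w x u = (1-nu) * dd w x w' := by
        rw [dd_affine w x w' x u nu hne1 hne2, dd_abb w x]; ring
      have hnu0 : 0 < nu := by
        refine pos_fac hnW ?_
        linarith only [e1, hRu]
      have hnu1 : nu < 1 := by
        have h1 : 0 ≤ (1-nu) * (-dd w x w') := by linarith only [e2, hf0u]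
        have h2 := sign_fac hnW h1
        rcases eq_or_lt_of_le (show nu ≤ 1 by linarith only [h2]) with h | h
        · exfalso; apply hux
          rw [h] at hn1 hn2
          exact point_eq (by linarith only [hn1]) (by linarith only [hn2])
        · exact h
      exact Or.inl (inter_comm (shared_inter (r := u) hw'xne huv
        (fun ⟨h, _⟩ => hw'u h) (fun ⟨h, _⟩ => hw'v h)
        hnu0 hnu1 (le_refl 0) zero_le_one hne1 hne2 (by ring) (by ring)))
  · -- dd w' x u > 0
    rcases lt_trichotomy (dd w w' u) 0 with hRu | hRu | hRu
    · -- r₂ direct, RIGHT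
      refine Or.inr (hr2con hRu ?_)
      intro r2 μ2 hμ20 hμ21 hss1 hss2 _
      have e : dd w' x r2 = (1-μ2) * dd w' x u + μ2 * dd w' x q :=
        dd_affine w' x u q r2 μ2 hss1 hss2
      have t1 : 0 ≤ (1-μ2) * dd w' x u :=
        mul_nonneg (by linarith only [hμ21]) hPu.le
      have t2 : 0 ≤ μ2 * dd w' x q := mul_nonneg hμ20.le hf1q0
      linarith only [e, t1, t2]
    · -- u strictly inside [w,w'], RIGHT
      obtain ⟨lam, hl1, hl2⟩ := collinear_decomp hwwne hRu
      have hle1 : u.1 = w.1 + lam*(w'.1-w.1) := by linear_combination hl1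
      have hle2 : u.2 = w.2 + lam*(w'.2-w.2) := by linear_combination hl2
      have e1 : dd w x u = lam * dd w x w' := by
        rw [dd_affine w x w w' u lam hle1 hle2, dd_aba w x]; ring
      have e2 : dd w' x u = -(1-lam) * dd w x w' := by
        rw [dd_affine w' x w w' u lam hle1 hle2, dd_aba w' x, ef1]; ring
      have hlam0 : 0 < lam := by
        rcases eq_or_lt_of_le (sign_fac hnW (show 0 ≤ lam * -dd w x w' by
            linarith only [e1, hf0u])) with h | h
        · exfalso; apply huw
          rw [← h] at hl1 hl2; simp at hl1 hl2
          exact point_eq (by linarith only [hl1]) (by linarith only [hl2])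
        · exact h
      have hlam1 : lam < 1 := by
        have h1 : 0 < (1-lam) * (-dd w x w') := by linarith only [e2, hPu]
        have := pos_fac hnW h1
        linarith only [this]
      exact Or.inr (inter_comm (shared_inter (r := u) hwwne huv
        (fun ⟨h, _⟩ => huw h.symm) (fun ⟨h, _⟩ => hvw h.symm)
        hlam0 hlam1 (le_refl 0) zero_le_one hle1 hle2 (by ring) (by ring)))
    · -- u strictly inside the triangle : contradiction
      exfalso
      apply ni2
      exact ⟨h4b, left_of_pos hRu, left_of_pos hPu⟩

lemma geom_coll {u v w x w' : Pt}
    (huv : u ≠ v) (hwx : w ≠ x) (huw : u ≠ w) (hvw : v ≠ w) (hux : u ≠ x) (hvx : v ≠ x)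
    (hw'u : w' ≠ u) (hw'v : w' ≠ v) (hw'w : w' ≠ w) (hw'x : w' ≠ x)
    (h3a : left u v w) (h3b : left v u x)
    (h4a : left w x u) (h4b : left x w v)
    (hW : dd w x w' ≠ 0)
    (ni1 : ¬ inside w x w' u) (ni2 : ¬ inside x w w' u) :
    inter u v w' x ∨ inter u v w w' := by
  have hA : 0 ≤ dd u v w := left_dd_nonneg h3a
  have hB : dd u v x ≤ 0 := by
    have := left_dd_nonneg h3b; have := dd_swap12 v u x; linarith
  have hCu : 0 ≤ dd w x u := left_dd_nonneg h4a
  have hCv : dd w x v ≤ 0 := by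
    have := left_dd_nonneg h4b; have := dd_swap12 x w v; linarith
  have hiden : dd u v w - dd u v x = dd w x v - dd w x u := by unfold dd; ring
  have hA0 : dd u v w = 0 := by linarith
  have hB0 : dd u v x = 0 := by linarith
  have hCu0 : dd w x u = 0 := by linarith
  obtain ⟨a, ha1, ha2⟩ := collinear_decomp huv hA0
  obtain ⟨b, hb1, hb2⟩ := collinear_decomp huv hB0
  obtain ⟨t', ht', hw1, hw2⟩ := ray_param huv h3a hA0
  have hat : a = t' := param_unique huv (by rw [← ha1, hw1]) (by rw [← ha2, hw2])
  have ha0 : 0 < a := hat ▸ ht'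
  obtain ⟨t'', ht'', hx1, hx2⟩ := ray_param (Ne.symm huv) h3b
    (by have := dd_swap12 v u x; linarith)
  have hbt : b = 1 - t'' := by
    apply param_unique huv (s := b) (s' := 1 - t'')
    · have e : x.1 - u.1 = (1-t'')*(v.1-u.1) := by linear_combination hx1
      rw [← hb1, e]
    · have e : x.2 - u.2 = (1-t'')*(v.2-u.2) := by linear_combination hx2
      rw [← hb2, e]
  have hb1' : b < 1 := by rw [hbt]; linarith
  have hba : b ≠ a := by
    intro h; apply hwx; apply point_eq
    · have e : x.1 - w.1 = (b-a)*(v.1-u.1) := by linear_combination hb1 - ha1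
      rw [h] at e; simp at e; linarith
    · have e : x.2 - w.2 = (b-a)*(v.2-u.2) := by linear_combination hb2 - ha2
      rw [h] at e; simp at e; linarith
  obtain ⟨τ, hτ, hu1, hu2⟩ := ray_param hwx h4a hCu0
  have hτeq : -a = τ*(b-a) := by
    apply param_unique huv (s := -a) (s' := τ*(b-a))
    · have e1 : u.1 - w.1 = (-a)*(v.1-u.1) := by linear_combination -ha1
      have e2 : x.1 - w.1 = (b-a)*(v.1-u.1) := by linear_combination hb1 - ha1
      calc (-a)*(v.1-u.1) = u.1 - w.1 := e1.symm
      _ = τ*(x.1-w.1) := hu1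
      _ = τ*((b-a)*(v.1-u.1)) := by rw [e2]
      _ = τ*(b-a)*(v.1-u.1) := by ring
    · have e1 : u.2 - w.2 = (-a)*(v.2-u.2) := by linear_combination -ha2
      have e2 : x.2 - w.2 = (b-a)*(v.2-u.2) := by linear_combination hb2 - ha2
      calc (-a)*(v.2-u.2) = u.2 - w.2 := e1.symm
      _ = τ*(x.2-w.2) := hu2
      _ = τ*((b-a)*(v.2-u.2)) := by rw [e2]
      _ = τ*(b-a)*(v.2-u.2) := by ring
  have hblta : b < a := by
    rcases lt_or_gt_of_ne hba with h | h
    · exact h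
    · exfalso; nlinarith [mul_pos hτ (sub_pos.2 h)]
  rcases lt_trichotomy b 0 with hb0 | hb0 | hb0
  · -- b < 0 : u strictly inside (w,x), contradiction via inside
    exfalso
    have hden : (0:ℝ) < a - b := by linarith
    have hdne : a - b ≠ 0 := ne_of_gt hden
    rcases lt_or_gt_of_ne hW with hWneg | hWpos
    · -- use triangle (x,w,w')
      apply ni2
      have hz : 0 < dd x w w' := by
        have e : dd x w w' = -dd w x w' := by unfold dd; ring
        linarith
      have hσ0 : 0 < -b/(a-b) := div_pos (by linarith) hden
      have hσ1 : -b/(a-b) < 1 := by rw [div_lt_one hden]; linarith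
      refine edge_inside hσ0 hσ1 ?_ ?_ hz
      · have e2 : w.1 - x.1 = (a-b)*(v.1-u.1) := by linear_combination ha1 - hb1
        rw [e2]
        have e3 : -b/(a-b)*((a-b)*(v.1-u.1)) = -b*(v.1-u.1) := by field_simp
        rw [e3]; linear_combination -hb1
      · have e2 : w.2 - x.2 = (a-b)*(v.2-u.2) := by linear_combination ha2 - hb2
        rw [e2]
        have e3 : -b/(a-b)*((a-b)*(v.2-u.2)) = -b*(v.2-u.2) := by field_simp
        rw [e3]; linear_combination -hb2
    · -- use triangle (w,x,w')
      apply ni1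
      have hσ0 : 0 < a/(a-b) := div_pos ha0 hden
      have hσ1 : a/(a-b) < 1 := by rw [div_lt_one hden]; linarith
      refine edge_inside hσ0 hσ1 ?_ ?_ hWpos
      · have e2 : x.1 - w.1 = (b-a)*(v.1-u.1) := by linear_combination hb1 - ha1
        rw [e2]
        have e3 : a/(a-b)*((b-a)*(v.1-u.1)) = -a*(v.1-u.1) := by field_simp; ring
        rw [e3]; linear_combination -ha1
      · have e2 : x.2 - w.2 = (b-a)*(v.2-u.2) := by linear_combination hb2 - ha2
        rw [e2]
        have e3 : a/(a-b)*((b-a)*(v.2-u.2)) = -a*(v.2-u.2) := by field_simp; ring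
        rw [e3]; linear_combination -ha2
  · -- b = 0 : x = u, excluded
    exfalso; apply hux; symm
    rw [hb0] at hb1 hb2; simp at hb1 hb2
    exact point_eq (by linarith) (by linarith)
  · -- 0 < b < 1 : x strictly inside [u,v]
    exact Or.inl (shared_inter (r := x) huv hw'x
      (fun ⟨h, _⟩ => hw'u h.symm) (fun ⟨h, _⟩ => hux h)
      hb0 hb1' zero_le_one (le_refl 1)
      (by linear_combination hb1) (by linear_combination hb2) (by ring) (by ring))


lemma geom {u v w x w' : Pt}
    (huv : u ≠ v) (hwx : w ≠ x) (huw : u ≠ w) (hvw : v ≠ w)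
    (hw'u : w' ≠ u) (hw'v : w' ≠ v) (hw'w : w' ≠ w) (hw'x : w' ≠ x)
    (h3a : left u v w) (h3b : left v u x)
    (h4 : (left w x u ∧ left x w v) ∨ (left w x v ∧ left x w u))
    (ni1 : ¬ inside w x w' u) (ni2 : ¬ inside x w w' u)
    (ni3 : ¬ inside w x w' v) (ni4 : ¬ inside x w w' v) :
    inter u v w' x ∨ inter u v w w' := by
  have hvx : v ≠ x := fun h => left_ne13 (Ne.symm huv) h3b h.symm
  by_cases hux : u = x
  · subst hux
    rcases h4 with ⟨_, hL⟩ | ⟨_, hbad⟩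
    · exact geom_ux huv huw hvw hw'u hw'v hw'w h3a hL ni3 ni4
    · exact absurd hbad (fun hb => left_aba_false huw hb)
  · obtain ⟨q, t, s, ht0, ht1, hs0, hs1, hq1, hq2, hq3, hq4⟩ :=
      cross1 huv hwx huw h3a h3b h4
    by_cases hW : dd w x w' = 0
    · obtain ⟨κ, hk1, hk2⟩ := collinear_decomp hwx hW
      exact geom_online huv hwx huw hvw hux hvx hw'u hw'v hw'w hw'x
        ht0 ht1 hs0 hs1 hq1 hq2 hq3 hq4 hk1 hk2
    · rcases h4 with ⟨h4a, h4b⟩ | ⟨h4a, h4b⟩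
      · exact geom_coll huv hwx huw hvw hux hvx hw'u hw'v hw'w hw'x
          h3a h3b h4a h4b hW ni1 ni2
      · rcases lt_or_gt_of_ne hW with hWneg | hWpos
        · exact geom_wneg huv hwx huw hvw hux hvx hw'u hw'v hw'w hw'x
            ht0 ht1 hs0 hs1 hq1 hq2 hq3 hq4 h4a h4b hWneg ni2
        · exact geom_wpos huv hwx huw hvw hux hvx hw'u hw'v hw'w hw'x
            ht0 ht1 hs0 hs1 hq1 hq2 hq3 hq4 h4a h4b hWpos ni3

end PS1Helpers

theorem proof_step1
    (V : Pt → Prop) (E F : Pt → Pt → Prop)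
    (hE1 : ∀ u, ¬ E u u)
    (hE2 : ∀ u v, E u v → E v u)
    (hE3 : ∀ u v, E u v → V u ∧ V v)
    (hR1 : ∀ u v w x, E u v ∧ E w x ∧ inter u v w x → E u w ∨ E v x)
    (hC1 : ∀ u v w x, inside u v w x ∧ E u v ∧ E v w ∧ E w u ∧ V x → E u x)
    (hF1 : ∀ u v, F u v → F v u)
    (hF2 : ∀ u v, F u v → E u v)
    (hF3 : ∀ u v w x, F u v ∧ F w x → ¬ inter u v w x)
    (hF4 : ∀ u v w, left u v w ∧ left v u w ∧ V w → ¬ F u v)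
    (hF5 : ∀ u v w x, F u v ∧ E w x ∧ inter u v w x → E u w ∨ E v w)
    (hF6 : ∀ u v w x, F u v ∧ E w x ∧ inter u v w x → E u x ∨ E v x)
    (u1 v1 w1 x1 w2 x2 : Pt)
    (h1 : deleting E F u1 v1 w1 x1)
    (h2 : deleting E F w1 x1 w2 x2) :
    deleting E F u1 v1 w2 x1 ∨ inter u1 v1 w1 w2 := by
  obtain ⟨hEuv, hEwx, hIuv, hEuw, hEvw, hOr1⟩ := h1
  obtain ⟨_, hEw2x2, hIwx, hEw1w2, hEx1w2, hOr2⟩ := h2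
  have hne : ¬ E u1 x1 ∧ ¬ E v1 x1 := by
    rcases hOr1 with h | hF
    · exact h
    · exfalso
      rcases hOr2 with ⟨hn1, hn2⟩ | hF2
      · rcases hF6 w1 x1 w2 x2 ⟨hF, hEw2x2, hIwx⟩ with h | h
        · exact hn1 h
        · exact hn2 h
      · exact (hF3 w1 x1 w2 x2 ⟨hF, hF2⟩) hIwx
  have neE : ∀ {a b : Pt}, E a b → a ≠ b := by
    intro a b h hab
    rw [hab] at h
    exact hE1 b h
  have huv : u1 ≠ v1 := neE hEuv
  have hwx : w1 ≠ x1 := neE hEwx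
  have huw : u1 ≠ w1 := neE hEuw
  have hvw : v1 ≠ w1 := neE hEvw
  have hw2w1 : w2 ≠ w1 := Ne.symm (neE hEw1w2)
  have hw2x1 : w2 ≠ x1 := Ne.symm (neE hEx1w2)
  have hw2u : w2 ≠ u1 := by
    intro h
    exact hne.1 (hE2 _ _ (h ▸ hEx1w2))
  have hw2v : w2 ≠ v1 := by
    intro h
    exact hne.2 (hE2 _ _ (h ▸ hEx1w2))
  have hVu : V u1 := (hE3 _ _ hEuv).1
  have hVv : V v1 := (hE3 _ _ hEuv).2
  have nia : ∀ p, V p → ¬ E p x1 → ¬ inside w1 x1 w2 p := by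
    intro p hVp hnep hin
    exact hnep (hE2 _ _ (hC1 x1 w2 w1 p
      ⟨PS1Helpers.inside_rot hin, hEx1w2, hE2 _ _ hEw1w2, hEwx, hVp⟩))
  have nib : ∀ p, V p → ¬ E p x1 → ¬ inside x1 w1 w2 p := by
    intro p hVp hnep hin
    exact hnep (hE2 _ _ (hC1 x1 w1 w2 p
      ⟨hin, hE2 _ _ hEwx, hEw1w2, hE2 _ _ hEx1w2, hVp⟩))
  have ni1 := nia u1 hVu hne.1
  have ni2 := nib u1 hVu hne.1
  have ni3 := nia v1 hVv hne.2
  have ni4 := nib v1 hVv hne.2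
  have hres : inter u1 v1 w2 x1 ∨ inter u1 v1 w1 w2 := by
    rcases hIuv.2.2.1 with hc | hc
    · exact PS1Helpers.geom huv hwx huw hvw hw2u hw2v hw2w1 hw2x1 hc.1 hc.2
        hIuv.2.2.2 ni1 ni2 ni3 ni4
    · have hres' := PS1Helpers.geom (Ne.symm huv) hwx hvw huw hw2v hw2u hw2w1 hw2x1
        hc.2 hc.1 (Or.symm hIuv.2.2.2) ni3 ni4 ni1 ni2
      rcases hres' with h | h
      · exact Or.inl (PS1Helpers.inter_swap_uv h)
      · exact Or.inr (PS1Helpers.inter_swap_uv h)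
  rcases hres with hI | hI
  · have hEw2x1 : E w2 x1 := hE2 _ _ hEx1w2
    have hEu1w2 : E u1 w2 := by
      rcases hR1 u1 v1 w2 x1 ⟨hEuv, hEw2x1, hI⟩ with h | h
      · exact h
      · exact absurd h hne.2
    have hEv1w2 : E v1 w2 := by
      rcases hR1 v1 u1 w2 x1 ⟨hE2 _ _ hEuv, hEw2x1, PS1Helpers.inter_swap_uv hI⟩ with h | h
      · exact h
      · exact absurd h hne.1
    exact Or.inl ⟨hEuv, hEw2x1, hI, hEu1w2, hEv1w2, Or.inl hne⟩
  · exact Or.inr hI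
end

section
/- (Proof Step 8b: no cycle of length 2.) Let V, E satisfy E1–E3, R1 and C1, and let F satisfy F1–F6. For all points u1, v1, w1, x1, x2: it is impossible that deleting(u1,v1,w1,x1), F(w1,x1), deleting(v1,w1,u1,x2) and F(u1,x2) all hold simultaneously. -/
noncomputable section
namespace Step8b

def ov (a b c : Pt) : ℝ := pdet (b - a) (c - a)

lemma left_iff (a b c : Pt) : left a b c ↔ 0 < ov a b c ∨ ∃ t : ℝ, 0 < t ∧ c - a = t • (b - a) :=
  Iff.rfl

lemma ov_cyc (a b c : Pt) : ov a b c = ov b c a := by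
  simp only [ov, pdet, Prod.fst_sub, Prod.snd_sub]; ring

lemma ov_swap (a b c : Pt) : ov a b c = - ov b a c := by
  simp only [ov, pdet, Prod.fst_sub, Prod.snd_sub]; ring

lemma ov_gp (a b c d e : Pt) :
    ov a b c * ov a d e - ov a b d * ov a c e + ov a b e * ov a c d = 0 := by
  simp only [ov, pdet, Prod.fst_sub, Prod.snd_sub]; ring

lemma ov_four (a b c d : Pt) : ov a b c - ov a b d + ov c d a - ov c d b = 0 := by
  simp only [ov, pdet, Prod.fst_sub, Prod.snd_sub]; ring

lemma ov_of_ray {a b c : Pt} {t : ℝ} (h : c - a = t • (b - a)) : ov a b c = 0 := by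
  have h1 := congrArg Prod.fst h
  have h2 := congrArg Prod.snd h
  simp only [Prod.fst_sub, Prod.snd_sub, Prod.smul_fst, Prod.smul_snd, smul_eq_mul] at h1 h2
  simp only [ov, pdet, Prod.fst_sub, Prod.snd_sub]
  linear_combination (b.1 - a.1) * h2 - (b.2 - a.2) * h1

lemma ov_self (a b : Pt) : ov a b b = 0 := by
  simp only [ov, pdet, Prod.fst_sub, Prod.snd_sub]; ring

lemma ov_self' (a b : Pt) : ov a b a = 0 := by
  simp only [ov, pdet, Prod.fst_sub, Prod.snd_sub]; ring

lemma left_nonneg {a b c : Pt} (h : left a b c) : 0 ≤ ov a b c := by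
  rcases h with h | ⟨t, _, h⟩
  · exact le_of_lt h
  · exact le_of_eq (ov_of_ray h).symm

lemma smul_cancel {e : Pt} {r s : ℝ} (he : e ≠ 0) (h : r • e = s • e) : r = s := by
  by_contra hrs
  apply he
  have : (r - s) • e = 0 := by rw [sub_smul, h, sub_self]
  exact (smul_eq_zero.1 this).resolve_left (sub_ne_zero.2 hrs)

lemma collinear_rep {a b c : Pt} (h : ov a b c = 0) (hab : b - a ≠ 0) :
    ∃ t : ℝ, c - a = t • (b - a) := by
  have hdet : (b.1 - a.1) * (c.2 - a.2) - (b.2 - a.2) * (c.1 - a.1) = 0 := h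
  have hext : ∀ (t : ℝ), c.1 - a.1 = t * (b.1 - a.1) → c.2 - a.2 = t * (b.2 - a.2) →
      c - a = t • (b - a) := by
    intro t ht1 ht2
    apply Prod.ext_iff.2
    refine ⟨?_, ?_⟩ <;>
      simp only [Prod.smul_fst, Prod.smul_snd, Prod.fst_sub, Prod.snd_sub, smul_eq_mul] <;>
      [exact ht1; exact ht2]
  by_cases h1 : b.1 - a.1 = 0
  · have h2 : b.2 - a.2 ≠ 0 := by
      intro h2
      apply hab
      apply Prod.ext_iff.2
      constructor <;> simp only [Prod.fst_sub, Prod.snd_sub, Prod.fst_zero, Prod.snd_zero] <;>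
        linarith
    refine ⟨(c.2 - a.2) / (b.2 - a.2), hext _ ?_ ?_⟩
    · have hq1 : c.1 - a.1 = 0 := by
        rw [h1] at hdet
        rcases mul_eq_zero.1 (by linarith : (b.2 - a.2) * (c.1 - a.1) = 0) with hh | hh
        · exact absurd hh h2
        · exact hh
      rw [hq1, h1, mul_zero]
    · rw [div_mul_cancel₀ _ h2]
  · refine ⟨(c.1 - a.1) / (b.1 - a.1), hext _ ?_ ?_⟩
    · rw [div_mul_cancel₀ _ h1]
    · field_simp
      linear_combination hdet


lemma pdet_smul_right (p q : Pt) (r : ℝ) : pdet p (r • q) = r * pdet p q := by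
  simp only [pdet, Prod.smul_fst, Prod.smul_snd, smul_eq_mul]; ring

lemma pdet_add_right (p q r : Pt) : pdet p (q + r) = pdet p q + pdet p r := by
  simp only [pdet, Prod.fst_add, Prod.snd_add]; ring

lemma pdet_self (p : Pt) : pdet p p = 0 := by simp only [pdet]; ring

lemma pdet_neg_right (p q : Pt) : pdet p (-q) = - pdet p q := by
  simp only [pdet, Prod.fst_neg, Prod.snd_neg]; ring

lemma ov_swap23 (a b c : Pt) : ov a b c = - ov a c b := by
  simp only [ov, pdet, Prod.fst_sub, Prod.snd_sub]; ring

/-- `left a b a` is impossible when `a ≠ b`. -/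
lemma not_left_ends {a b : Pt} (hab : a ≠ b) : ¬ left a b a := by
  rintro (h | ⟨t, ht, hray⟩)
  · rw [show pdet (b - a) (a - a) = ov a b a from rfl, ov_self'] at h
    linarith
  · rw [sub_self] at hray
    have hba : b - a ≠ 0 := fun h => hab (by rw [sub_eq_zero] at h; exact h.symm)
    have : (0:ℝ) • (b - a) = t • (b - a) := by rw [zero_smul, hray]
    have := smul_cancel hba this
    linarith

lemma sep (a b c d : Pt) (hab : a ≠ b) (hac : a ≠ c) (hcd : c ≠ d)
    (hA : 0 < ov a b c)
    (hI : inter a b c d)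
    (hu : ¬ (left c d a ∧ left d c a))
    (hv : ¬ (left c d b ∧ left d c b)) :
    ov a b d ≤ 0 ∧ ov c d a < 0 ∧ 0 < ov c d b := by
  obtain ⟨-, -, h3, h4⟩ := hI
  have hbac : ¬ left b a c := by
    rintro (h | ⟨t, ht, hray⟩)
    · rw [show pdet (a - b) (c - b) = ov b a c from rfl] at h
      rw [ov_swap a b c] at hA; linarith
    · have h0 : ov b a c = 0 := ov_of_ray hray
      rw [ov_swap a b c, h0, neg_zero] at hA; linarith
  have hbad : left b a d := by
    rcases h3 with ⟨-, h⟩ | ⟨-, h⟩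
    · exact h
    · exact absurd h hbac
  have habd : ov a b d ≤ 0 := by
    rcases hbad with h | ⟨t, ht, hray⟩
    · rw [show pdet (a - b) (d - b) = ov b a d from rfl] at h
      rw [ov_swap a b d]; linarith
    · have h0 : ov b a d = 0 := ov_of_ray hray
      rw [ov_swap a b d, h0, neg_zero]
  have beyond : ∀ μ ν : ℝ, 0 < μ → 0 < ν → ν • (d - a) = μ • (c - a) → False := by
    intro μ ν hμ hν hrep
    have e1 : ν * ov a b d = μ * ov a b c := by
      rw [show ν * ov a b d = pdet (b - a) (ν • (d - a)) from (pdet_smul_right _ _ _).symm,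
        hrep, pdet_smul_right]
      rfl
    have e2 : ν * ov a b d ≤ 0 := mul_nonpos_of_nonneg_of_nonpos (le_of_lt hν) habd
    have e3 : 0 < μ * ov a b c := mul_pos hμ hA
    linarith
  -- resolve left c d a to strict
  have hRcda : left c d a → 0 < ov c d a := by
    rintro (h | ⟨t, ht, hray⟩)
    · exact h
    · rcases lt_trichotomy t 1 with h1 | h1 | h1
      · exfalso; apply hu
        refine ⟨Or.inr ⟨t, ht, hray⟩, Or.inr ⟨1 - t, by linarith, ?_⟩⟩
        rw [show a - d = (a - c) - (d - c) by abel, hray]; module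
      · exfalso
        have had : a = d := by
          have h' : a - c = d - c := by rw [hray, h1, one_smul]
          exact sub_left_injective h'
        subst had
        rcases h4 with ⟨-, hdb⟩ | ⟨-, hda⟩
        · -- left a c b : contradicts ov a b c > 0
          have hn : 0 ≤ ov a c b := left_nonneg hdb
          rw [ov_swap23 a b c] at hA; linarith
        · exact not_left_ends (fun h => hac h) hda
      · exfalso
        apply beyond (t - 1) t (by linarith) (by linarith)
        have hca : c - a = (-t) • (d - c) := by
          rw [show c - a = -(a - c) by abel, hray]; module
        have hda' : d - a = (1 - t) • (d - c) := by
          rw [show d - a = (d - c) - (a - c) by abel, hray]; module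
        rw [hda', hca]; module
  -- resolve left d c a to strict
  have hRdca : left d c a → ov c d a < 0 := by
    rintro (h | ⟨t, ht, hray⟩)
    · rw [show pdet (c - d) (a - d) = ov d c a from rfl] at h
      rw [ov_swap c d a]; linarith
    · rcases lt_trichotomy t 1 with h1 | h1 | h1
      · exfalso; apply hu
        refine ⟨Or.inr ⟨1 - t, by linarith, ?_⟩, Or.inr ⟨t, ht, hray⟩⟩
        rw [show a - c = (a - d) - (c - d) by abel, hray]; module
      · exfalso
        have : a = c := by
          have h' : a - d = c - d := by rw [hray, h1, one_smul]
          exact sub_left_injective h'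
        exact hac this
      · exfalso
        apply beyond t (t - 1) (by linarith) (by linarith)
        have hca : c - a = (1 - t) • (c - d) := by
          rw [show c - a = (c - d) - (a - d) by abel, hray]; module
        have hda' : d - a = (-t) • (c - d) := by
          rw [show d - a = -(a - d) by abel, hray]; module
        rw [hda', hca]; module
  -- resolve left d c b to strict
  have hRdcb : left d c b → ov c d b < 0 := by
    rintro (h | ⟨t, ht, hray⟩)
    · rw [show pdet (c - d) (b - d) = ov d c b from rfl] at h
      rw [ov_swap c d b]; linarith
    · rcases lt_trichotomy t 1 with h1 | h1 | h1
      · exfalso; apply hv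
        refine ⟨Or.inr ⟨1 - t, by linarith, ?_⟩, Or.inr ⟨t, ht, hray⟩⟩
        rw [show b - c = (b - d) - (c - d) by abel, hray]; module
      · exfalso
        have hbc : b = c := by
          have h' : b - d = c - d := by rw [hray, h1, one_smul]
          exact sub_left_injective h'
        rw [← hbc, ov_self] at hA; linarith
      · exfalso
        have ht' : t ≠ 0 := by linarith
        have hcd' : c - d = t⁻¹ • (b - d) := by
          rw [hray, smul_smul, inv_mul_cancel₀ ht', one_smul]
        have key : ov a b c = (1 - t⁻¹) * ov a b d := by
          have e1 : ov a b c = pdet (b - a) ((c - d) + (d - a)) := by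
            rw [show ov a b c = pdet (b - a) (c - a) from rfl,
              show c - a = (c - d) + (d - a) by abel]
          rw [e1, pdet_add_right, hcd', pdet_smul_right,
            show b - d = (b - a) + -(d - a) by abel, pdet_add_right, pdet_self,
            pdet_neg_right, show pdet (b - a) (d - a) = ov a b d from rfl]
          ring
        have h1' : (0:ℝ) < 1 - t⁻¹ := by
          have hti : t⁻¹ * t = 1 := inv_mul_cancel₀ ht'
          nlinarith
        nlinarith [key, habd, hA, h1']
  -- resolve left c d b to strict
  have hRcdb : left c d b → 0 < ov c d b := by
    rintro (h | ⟨t, ht, hray⟩)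
    · exact h
    · rcases lt_trichotomy t 1 with h1 | h1 | h1
      · exfalso; apply hv
        refine ⟨Or.inr ⟨t, ht, hray⟩, Or.inr ⟨1 - t, by linarith, ?_⟩⟩
        rw [show b - d = (b - c) - (d - c) by abel, hray]; module
      · exfalso
        have hbd : b = d := by
          have h' : b - c = d - c := by rw [hray, h1, one_smul]
          exact sub_left_injective h'
        rw [← hbd] at hbad
        exact not_left_ends (fun h => hab h.symm) hbad
      · exfalso
        have ht' : t ≠ 0 := by linarith
        have hdc' : d - c = t⁻¹ • (b - c) := by
          rw [hray, smul_smul, inv_mul_cancel₀ ht', one_smul]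
        have key : ov a b d = (1 - t⁻¹) * ov a b c := by
          have e1 : ov a b d = pdet (b - a) ((d - c) + (c - a)) := by
            rw [show ov a b d = pdet (b - a) (d - a) from rfl,
              show d - a = (d - c) + (c - a) by abel]
          rw [e1, pdet_add_right, hdc', pdet_smul_right,
            show b - c = (b - a) + -(c - a) by abel, pdet_add_right, pdet_self,
            pdet_neg_right, show pdet (b - a) (c - a) = ov a b c from rfl]
          ring
        have h1' : (0:ℝ) < 1 - t⁻¹ := by
          have hti : t⁻¹ * t = 1 := inv_mul_cancel₀ ht'
          nlinarith
        nlinarith [key, habd, hA, h1']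
  rcases h4 with ⟨hcda, hdcb⟩ | ⟨hcdb, hdca⟩
  · exfalso
    have p1 := hRcda hcda
    have p2 := hRdcb hdcb
    have := ov_four a b c d
    linarith
  · exact ⟨habd, hRdca hdca, hRcdb hcdb⟩


lemma inter_swap {a b c d : Pt} (h : inter a b c d) : inter b a c d := by
  obtain ⟨h1, h2, h3, h4⟩ := h
  refine ⟨fun ⟨p, q⟩ => h2 ⟨q, p⟩, fun ⟨p, q⟩ => h1 ⟨q, p⟩, by tauto, by tauto⟩

lemma core (u v w x y : Pt)
    (huv : u ≠ v) (huw : u ≠ w) (hvw : v ≠ w) (hwx : w ≠ x) (huy : u ≠ y)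
    (hA : 0 < ov u v w)
    (hI1 : inter u v w x) (hI2 : inter v w u y)
    (hWXu : ¬ (left w x u ∧ left x w u))
    (hWXv : ¬ (left w x v ∧ left x w v))
    (hUYv : ¬ (left u y v ∧ left y u v))
    (hUYw : ¬ (left u y w ∧ left y u w)) :
    inter w x u y := by
  obtain ⟨s1a, s1b, s1c⟩ := sep u v w x huv huw hwx hA hI1 hWXu hWXv
  have hA' : 0 < ov v w u := by rw [← ov_cyc u v w]; exact hA
  obtain ⟨s2a, s2b, s2c⟩ := sep v w u y hvw (Ne.symm huv) huy hA' hI2 hUYv hUYw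
  -- s1a : ov u v x ≤ 0, s1b : ov w x u < 0, s1c : 0 < ov w x v
  -- s2a : ov v w y ≤ 0, s2b : ov u y v < 0, s2c : 0 < ov u y w
  have hgp1 := ov_gp w x y u v
  have e1 : ov w u v = ov u v w := by rw [ov_cyc u v w, ov_cyc v w u]
  have e2 : ov w y v = ov v w y := by rw [ov_cyc v w y]
  have e3 : ov w y u = - ov u y w := by rw [ov_cyc w y u, ov_cyc y u w, ov_swap23 u w y]
  rw [e1, e2, e3] at hgp1
  have hwxy : 0 < ov w x y := by
    nlinarith [hgp1, mul_pos s1c s2c,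
      mul_nonneg (le_of_lt (neg_pos.mpr s1b)) (neg_nonneg.mpr s2a), hA]
  have hgp2 := ov_gp u x y v w
  have f1 : ov u x v = - ov u v x := ov_swap23 u x v
  have f2 : ov u x w = - ov w x u := by rw [ov_swap23 u x w, ov_cyc u w x]
  rw [f1, f2] at hgp2
  have huxy : 0 < ov u x y := by
    nlinarith [hgp2, mul_nonneg (neg_nonneg.mpr s1a) (le_of_lt s2c),
      mul_pos (neg_pos.mpr s1b) (neg_pos.mpr s2b), hA]
  refine ⟨?_, ?_, ?_, ?_⟩
  · rintro ⟨h, -⟩; exact huw h.symm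
  · rintro ⟨-, h⟩
    rw [h, ov_self] at s1b
    linarith
  · refine Or.inr ⟨Or.inl hwxy, Or.inl ?_⟩
    show 0 < ov x w u
    rw [ov_swap x w u]; linarith
  · refine Or.inl ⟨Or.inl s2c, Or.inl ?_⟩
    show 0 < ov y u x
    rw [ov_cyc y u x]; exact huxy


lemma pdet_smul_left (p q : Pt) (r : ℝ) : pdet (r • p) q = r * pdet p q := by
  simp only [pdet, Prod.smul_fst, Prod.smul_snd, smul_eq_mul]; ring

lemma pdet_anti (p q : Pt) : pdet p q = - pdet q p := by
  simp only [pdet]; ring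

lemma left_coord {u e a b c : Pt} {α β γ : ℝ} (he : e ≠ 0) (hab : α ≠ β)
    (ha : a - u = α • e) (hb : b - u = β • e) (hc : c - u = γ • e) :
    left a b c ↔ 0 < (γ - α) * (β - α) := by
  have hba : b - a = (β - α) • e := by
    rw [show b - a = (b - u) - (a - u) by abel, ha, hb]; module
  have hca : c - a = (γ - α) • e := by
    rw [show c - a = (c - u) - (a - u) by abel, ha, hc]; module
  have hβα : β - α ≠ 0 := sub_ne_zero.2 (Ne.symm hab)
  constructor
  · rintro (h | ⟨t, ht, hray⟩)
    · exfalso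
      rw [hba, hca, pdet_smul_left, pdet_smul_right, pdet_self] at h
      simp at h
    · rw [hca, hba, smul_smul] at hray
      have h' := smul_cancel he hray
      rw [h']
      nlinarith [mul_pos ht (mul_self_pos.2 hβα)]
  · intro h
    refine Or.inr ⟨(γ - α) / (β - α), ?_, ?_⟩
    · rcases mul_pos_iff.1 h with ⟨h1, h2⟩ | ⟨h1, h2⟩
      · exact div_pos h1 h2
      · exact div_pos_iff.2 (Or.inr ⟨h1, h2⟩)
    · rw [hca, hba, smul_smul, div_mul_cancel₀ _ hβα]

lemma collin (u v w x y : Pt)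
    (huv : u ≠ v) (huw : u ≠ w) (hvw : v ≠ w) (hwx : w ≠ x) (huy : u ≠ y)
    (hO : ov u v w = 0)
    (hI1 : inter u v w x) (hI2 : inter v w u y)
    (hWXu : ¬ (left w x u ∧ left x w u))
    (hWXv : ¬ (left w x v ∧ left x w v))
    (hUYw : ¬ (left u y w ∧ left y u w)) : False := by
  set e := v - u with hedef
  have he : e ≠ 0 := sub_ne_zero.2 (Ne.symm huv)
  obtain ⟨t, hw⟩ := collinear_rep hO he
  have ht0 : t ≠ 0 := by
    intro h
    apply huw
    have hz : w - u = 0 := by rw [hw, h, zero_smul]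
    exact (sub_eq_zero.1 hz).symm
  have ht1 : t ≠ 1 := by
    intro h
    apply hvw
    have hz : w - u = v - u := by rw [hw, h, one_smul]
    exact (sub_left_injective hz).symm
  have hu0 : u - u = (0:ℝ) • e := by rw [zero_smul, sub_self]
  have hv1 : v - u = (1:ℝ) • e := (one_smul ℝ e).symm
  obtain ⟨-, -, -, h4⟩ := hI1
  obtain ⟨-, -, -, g4⟩ := hI2
  -- the endgame: once we know 0 < t < 1, hI2 + F4 give the contradiction
  have endgame : 0 < t → t < 1 → False := by
    intro htp htl
    by_cases hy : ov u v y = 0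
    · -- y on the line
      obtain ⟨η, hyr⟩ := collinear_rep hy he
      have hη0 : η ≠ 0 := by
        intro h
        apply huy
        have hz : y - u = 0 := by rw [hyr, h, zero_smul]
        exact (sub_eq_zero.1 hz).symm
      have Luyv : left u y v ↔ 0 < ((1:ℝ) - 0) * (η - 0) := left_coord he hη0.symm hu0 hyr hv1
      have Lyuw : left y u w ↔ 0 < (t - η) * ((0:ℝ) - η) := left_coord he hη0 hyr hu0 hw
      have Luyw : left u y w ↔ 0 < (t - (0:ℝ)) * (η - 0) := left_coord he hη0.symm hu0 hyr hw
      have Lyuv : left y u v ↔ 0 < ((1:ℝ) - η) * (0 - η) := left_coord he hη0 hyr hu0 hv1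
      rcases g4 with ⟨l1, l2⟩ | ⟨l1, l2⟩
      · -- left u y v ∧ left y u w
        have a1 := Luyv.1 l1
        have a2 := Lyuw.1 l2
        exact hUYw ⟨Luyw.2 (by nlinarith), l2⟩
      · -- left u y w ∧ left y u v
        have a1 := Luyw.1 l1
        have a2 := Lyuv.1 l2
        have hηp : 0 < η := by nlinarith
        exact hUYw ⟨l1, Lyuw.2 (by nlinarith)⟩
    · -- y off the line
      have q1 : ov u y v = - ov u v y := by
        rw [show ov u y v = pdet (y - u) (v - u) from rfl, pdet_anti]
        rfl
      have q2 : ov u y w = t * (- ov u v y) := by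
        rw [show ov u y w = pdet (y - u) (w - u) from rfl, hw, pdet_smul_right, pdet_anti]
        rfl
      have r1 : left u y v → 0 < - ov u v y := by
        rintro (h | ⟨s, hs, hr⟩)
        · rw [show pdet (y - u) (v - u) = ov u y v from rfl, q1] at h; exact h
        · exfalso; apply hy
          have h0 : ov u y v = 0 := ov_of_ray hr
          rw [q1] at h0; linarith
      have r2 : left y u w → 0 < t * ov u v y := by
        rintro (h | ⟨s, hs, hr⟩)
        · rw [show pdet (u - y) (w - y) = ov y u w from rfl, ov_swap y u w, q2] at h
          linarith
        · exfalso
          have h0 : ov y u w = 0 := ov_of_ray hr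
          rw [ov_swap y u w, q2] at h0
          have : t * ov u v y = 0 := by linarith
          rcases mul_eq_zero.1 this with h' | h'
          · exact ht0 h'
          · exact hy h'
      have r3 : left u y w → 0 < t * (- ov u v y) := by
        rintro (h | ⟨s, hs, hr⟩)
        · rw [show pdet (y - u) (w - u) = ov u y w from rfl, q2] at h; exact h
        · exfalso
          have h0 : ov u y w = 0 := ov_of_ray hr
          rw [q2] at h0
          rcases mul_eq_zero.1 h0 with h' | h'
          · exact ht0 h'
          · apply hy; linarith
      have r4 : left y u v → 0 < ov u v y := by
        rintro (h | ⟨s, hs, hr⟩)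
        · rw [show pdet (u - y) (v - y) = ov y u v from rfl, ov_swap y u v, q1] at h
          linarith
        · exfalso
          have h0 : ov y u v = 0 := ov_of_ray hr
          rw [ov_swap y u v, q1] at h0
          apply hy; linarith
      rcases g4 with ⟨l1, l2⟩ | ⟨l1, l2⟩
      · have a1 := r1 l1
        have a2 := r2 l2
        nlinarith
      · have a1 := r3 l1
        have a2 := r4 l2
        nlinarith
  -- now derive 0 < t < 1 from hI1's fourth condition
  by_cases hx : ov u v x = 0
  · -- x on the line
    obtain ⟨ξ, hxr⟩ := collinear_rep hx he
    have hξt : ξ ≠ t := by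
      intro h
      apply hwx
      have hz : x - u = w - u := by rw [hxr, h, hw]
      exact (sub_left_injective hz).symm
    have Lwxu : left w x u ↔ 0 < ((0:ℝ) - t) * (ξ - t) := left_coord he hξt.symm hw hxr hu0
    have Lxwu : left x w u ↔ 0 < ((0:ℝ) - ξ) * (t - ξ) := left_coord he hξt hxr hw hu0
    have Lwxv : left w x v ↔ 0 < ((1:ℝ) - t) * (ξ - t) := left_coord he hξt.symm hw hxr hv1
    have Lxwv : left x w v ↔ 0 < ((1:ℝ) - ξ) * (t - ξ) := left_coord he hξt hxr hw hv1
    rcases h4 with ⟨l1, l2⟩ | ⟨l1, l2⟩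
    · have a1 := Lwxu.1 l1
      have a2 := Lxwv.1 l2
      have a3 : ((0:ℝ) - ξ) * (t - ξ) ≤ 0 := by
        by_contra hh
        exact hWXu ⟨l1, Lxwu.2 (lt_of_not_ge hh)⟩
      have a4 : ((1:ℝ) - t) * (ξ - t) ≤ 0 := by
        by_contra hh
        exact hWXv ⟨Lwxv.2 (lt_of_not_ge hh), l2⟩
      rcases lt_or_gt_of_ne hξt with hc | hc
      · -- ξ < t
        refine endgame (by nlinarith) ?_
        have : t ≤ 1 := by nlinarith
        exact lt_of_le_of_ne this ht1
      · -- t < ξ : impossible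
        have h1 : 1 < ξ := by nlinarith
        have h2 : ξ ≤ 0 := by nlinarith
        linarith
    · have a1 := Lwxv.1 l1
      have a2 := Lxwu.1 l2
      have a3 : ((0:ℝ) - t) * (ξ - t) ≤ 0 := by
        by_contra hh
        exact hWXu ⟨Lwxu.2 (lt_of_not_ge hh), l2⟩
      have a4 : ((1:ℝ) - ξ) * (t - ξ) ≤ 0 := by
        by_contra hh
        exact hWXv ⟨l1, Lxwv.2 (lt_of_not_ge hh)⟩
      rcases lt_or_gt_of_ne hξt with hc | hc
      · -- ξ < t : impossible
        have h1 : 1 < t := by nlinarith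
        have h2 : ξ < 0 := by nlinarith
        nlinarith
      · -- t < ξ
        refine endgame ?_ (by nlinarith)
        have : 0 ≤ t := by nlinarith
        exact lt_of_le_of_ne this (Ne.symm ht0)
  · -- x off the line
    have h1 := congrArg Prod.fst hw
    have h2 := congrArg Prod.snd hw
    simp only [hedef, Prod.fst_sub, Prod.snd_sub, Prod.smul_fst, Prod.smul_snd,
      smul_eq_mul] at h1 h2
    have q1 : ov w x u = t * ov u v x := by
      simp only [ov, pdet, Prod.fst_sub, Prod.snd_sub]
      linear_combination (x.2 - u.2) * h1 - (x.1 - u.1) * h2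
    have q2 : ov w x v = (t - 1) * ov u v x := by
      simp only [ov, pdet, Prod.fst_sub, Prod.snd_sub]
      linear_combination (x.2 - v.2) * h1 - (x.1 - v.1) * h2
    have hsq : 0 < ov u v x * ov u v x := mul_self_pos.2 hx
    have r1 : left w x u → 0 < t * ov u v x := by
      rintro (h | ⟨s', hs', hr⟩)
      · rw [show pdet (x - w) (u - w) = ov w x u from rfl, q1] at h; exact h
      · exfalso
        have h0 : ov w x u = 0 := ov_of_ray hr
        rw [q1] at h0
        rcases mul_eq_zero.1 h0 with h' | h'
        · exact ht0 h'
        · exact hx h'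
    have r2 : left x w u → 0 < -(t * ov u v x) := by
      rintro (h | ⟨s', hs', hr⟩)
      · rw [show pdet (w - x) (u - x) = ov x w u from rfl, ov_swap x w u, q1] at h
        exact h
      · exfalso
        have h0 : ov x w u = 0 := ov_of_ray hr
        rw [ov_swap x w u, q1] at h0
        have h0' : t * ov u v x = 0 := by linarith
        rcases mul_eq_zero.1 h0' with h' | h'
        · exact ht0 h'
        · exact hx h'
    have r3 : left w x v → 0 < (t - 1) * ov u v x := by
      rintro (h | ⟨s', hs', hr⟩)
      · rw [show pdet (x - w) (v - w) = ov w x v from rfl, q2] at h; exact h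
      · exfalso
        have h0 : ov w x v = 0 := ov_of_ray hr
        rw [q2] at h0
        rcases mul_eq_zero.1 h0 with h' | h'
        · exact ht1 (by linarith)
        · exact hx h'
    have r4 : left x w v → 0 < -((t - 1) * ov u v x) := by
      rintro (h | ⟨s', hs', hr⟩)
      · rw [show pdet (w - x) (v - x) = ov x w v from rfl, ov_swap x w v, q2] at h
        exact h
      · exfalso
        have h0 : ov x w v = 0 := ov_of_ray hr
        rw [ov_swap x w v, q2] at h0
        have h0' : (t - 1) * ov u v x = 0 := by linarith
        rcases mul_eq_zero.1 h0' with h' | h'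
        · exact ht1 (by linarith)
        · exact hx h'
    rcases h4 with ⟨l1, l2⟩ | ⟨l1, l2⟩
    · have a1 := r1 l1
      have a2 := r4 l2
      have hp : 0 < (t * (1 - t)) * (ov u v x * ov u v x) := by nlinarith [mul_pos a1 a2]
      have hq : 0 < t * (1 - t) := by nlinarith [hp, hsq]
      exact endgame (by nlinarith [hq]) (by nlinarith [hq])
    · have a1 := r3 l1
      have a2 := r2 l2
      have hp : 0 < (t * (1 - t)) * (ov u v x * ov u v x) := by nlinarith [mul_pos a1 a2]
      have hq : 0 < t * (1 - t) := by nlinarith [hp, hsq]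
      exact endgame (by nlinarith [hq]) (by nlinarith [hq])

end Step8b


theorem proof_step8b
    (V : Pt → Prop) (E F : Pt → Pt → Prop)
    (hE1 : ∀ u, ¬ E u u)
    (hE2 : ∀ u v, E u v → E v u)
    (hE3 : ∀ u v, E u v → V u ∧ V v)
    (hR1 : ∀ u v w x, E u v ∧ E w x ∧ inter u v w x → E u w ∨ E v x)
    (hC1 : ∀ u v w x, inside u v w x ∧ E u v ∧ E v w ∧ E w u ∧ V x → E u x)
    (hF1 : ∀ u v, F u v → F v u)
    (hF2 : ∀ u v, F u v → E u v)
    (hF3 : ∀ u v w x, F u v ∧ F w x → ¬ inter u v w x)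
    (hF4 : ∀ u v w, left u v w ∧ left v u w ∧ V w → ¬ F u v)
    (hF5 : ∀ u v w x, F u v ∧ E w x ∧ inter u v w x → E u w ∨ E v w)
    (hF6 : ∀ u v w x, F u v ∧ E w x ∧ inter u v w x → E u x ∨ E v x)
    (u1 v1 w1 x1 x2 : Pt)
    (h1 : deleting E F u1 v1 w1 x1)
    (h2 : F w1 x1)
    (h3 : deleting E F v1 w1 u1 x2)
    (h4 : F u1 x2) :
    False := by
  obtain ⟨hEuv, hEwx, hI1, hEuw, hEvw, -⟩ := h1
  obtain ⟨hEvw', hEuy, hI2, hEvu, hEwu, -⟩ := h3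
  have hne : ∀ {p q : Pt}, E p q → p ≠ q := fun {p q} h hpq => hE1 q (hpq ▸ h)
  have huv : u1 ≠ v1 := hne hEuv
  have huw : u1 ≠ w1 := hne hEuw
  have hvw : v1 ≠ w1 := hne hEvw
  have hwx : w1 ≠ x1 := hne hEwx
  have huy : u1 ≠ x2 := hne hEuy
  have hVu : V u1 := (hE3 _ _ hEuv).1
  have hVv : V v1 := (hE3 _ _ hEuv).2
  have hVw : V w1 := (hE3 _ _ hEvw).2
  have nWXu : ¬ (left w1 x1 u1 ∧ left x1 w1 u1) :=
    fun ⟨p, q⟩ => hF4 w1 x1 u1 ⟨p, q, hVu⟩ h2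
  have nWXv : ¬ (left w1 x1 v1 ∧ left x1 w1 v1) :=
    fun ⟨p, q⟩ => hF4 w1 x1 v1 ⟨p, q, hVv⟩ h2
  have nUYv : ¬ (left u1 x2 v1 ∧ left x2 u1 v1) :=
    fun ⟨p, q⟩ => hF4 u1 x2 v1 ⟨p, q, hVv⟩ h4
  have nUYw : ¬ (left u1 x2 w1 ∧ left x2 u1 w1) :=
    fun ⟨p, q⟩ => hF4 u1 x2 w1 ⟨p, q, hVw⟩ h4
  rcases lt_trichotomy (Step8b.ov u1 v1 w1) 0 with hO | hO | hO
  · -- negative orientation : use the symmetric configuration (w1, v1, u1, x2, x1)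
    have hA : 0 < Step8b.ov w1 v1 u1 := by
      have hh : Step8b.ov w1 v1 u1 = - Step8b.ov u1 v1 w1 := by
        rw [Step8b.ov_cyc w1 v1 u1, Step8b.ov_swap v1 u1 w1]
      rw [hh]; linarith
    have hint := Step8b.core w1 v1 u1 x2 x1 (Ne.symm hvw) (Ne.symm huw) (Ne.symm huv)
      huy hwx hA (Step8b.inter_swap hI2) (Step8b.inter_swap hI1) nUYw nUYv nWXv nWXu
    exact hF3 u1 x2 w1 x1 ⟨h4, h2⟩ hint
  · -- collinear case
    exact Step8b.collin u1 v1 w1 x1 x2 huv huw hvw hwx huy hO hI1 hI2 nWXu nWXv nUYw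
  · -- positive orientation
    have hint := Step8b.core u1 v1 w1 x1 x2 huv huw hvw hwx huy hO hI1 hI2
      nWXu nWXv nUYv nUYw
    exact hF3 w1 x1 u1 x2 ⟨h2, h4⟩ hint
end
end
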